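/- arXiv:0801.3893 — 14 statements merged into one kernel-verified Lean document; each statement's English description precedes it below -/
import Mathlib

section
/- Let n and m be distinct positive integers such that the ratio m/n is not of the form p^e for any prime p and any nonzero integer e. Then the cyclotomic polynomials Φ_n(q) and Φ_m(q) generate the unit ideal of ℤ[q]; equivalently, Φ_n and Φ_m are coprime (IsCoprime) in the polynomial ring ℤ[q]. -/
open Polynomial

/-- Distinct cyclotomic polynomials over `ZMod p` are coprime when `p` divides neither index. -/
lemma field_coprime (p : ℕ) [Fact p.Prime] {n m : ℕ} (hn : 0 < n) (hm : 0 < m) (hnm : n ≠ m)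
    (hpn : ¬ p ∣ n) (hpm : ¬ p ∣ m) :
    IsCoprime (cyclotomic n (ZMod p)) (cyclotomic m (ZMod p)) := by
  have hN : 0 < n * m := Nat.mul_pos hn hm
  have hdvd : cyclotomic n (ZMod p) * cyclotomic m (ZMod p) ∣ (X : (ZMod p)[X]) ^ (n * m) - 1 := by
    rw [← prod_cyclotomic_eq_X_pow_sub_one hN]
    have : ({n, m} : Finset ℕ) ⊆ (n * m).divisors := by
      intro x hx
      simp only [Finset.mem_insert, Finset.mem_singleton] at hx
      rcases hx with rfl | rfl
      · exact Nat.mem_divisors.2 ⟨Dvd.intro _ rfl, hN.ne'⟩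
      · exact Nat.mem_divisors.2 ⟨Dvd.intro_left _ rfl, hN.ne'⟩
    have := Finset.prod_dvd_prod_of_subset _ _ (fun d => cyclotomic d (ZMod p)) this
    rwa [Finset.prod_pair hnm] at this
  have hsep : ((X : (ZMod p)[X]) ^ (n * m) - 1).Separable := by
    rw [X_pow_sub_one_separable_iff]
    have : ¬ p ∣ n * m := by
      intro hd
      rcases (Nat.Prime.dvd_mul (Fact.out)).1 hd with h' | h'
      · exact hpn h'
      · exact hpm h'
    rwa [Ne, ZMod.natCast_eq_zero_iff]
  exact (hsep.of_dvd hdvd).isCoprime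

lemma pow_rep (p : ℕ) [hp : Fact p.Prime] {n : ℕ} (hn : 0 < n) :
    ∃ e : ℕ, 0 < e ∧ cyclotomic n (ZMod p) = cyclotomic (ordCompl[p] n) (ZMod p) ^ e := by
  rcases Nat.eq_zero_or_pos (n.factorization p) with h0 | hpos
  · exact ⟨1, one_pos, by rw [pow_one, h0, pow_zero, Nat.div_one]⟩
  · refine ⟨p ^ n.factorization p - p ^ (n.factorization p - 1), ?_, ?_⟩
    · have : p ^ (n.factorization p - 1) < p ^ n.factorization p :=
        pow_lt_pow_right₀ hp.out.one_lt (Nat.pred_lt hpos.ne')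
      omega
    · have hnd : ¬ p ∣ ordCompl[p] n := Nat.not_dvd_ordCompl hp.out hn.ne'
      have := cyclotomic_mul_prime_pow_eq (ZMod p) hnd hpos
      rw [← this, Nat.ordProj_mul_ordCompl_eq_self]

/-- coprimality mod p -/
lemma zmod_coprime (p : ℕ) [hp : Fact p.Prime] {n m : ℕ} (hn : 0 < n) (hm : 0 < m)
    (hne : ordCompl[p] n ≠ ordCompl[p] m) :
    IsCoprime (cyclotomic n (ZMod p)) (cyclotomic m (ZMod p)) := by
  obtain ⟨e₁, he₁, hE₁⟩ := pow_rep p hn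
  obtain ⟨e₂, he₂, hE₂⟩ := pow_rep p hm
  rw [hE₁, hE₂]
  refine IsCoprime.pow ?_
  exact field_coprime p (Nat.ordCompl_pos p hn.ne') (Nat.ordCompl_pos p hm.ne') hne
    (Nat.not_dvd_ordCompl hp.out hn.ne') (Nat.not_dvd_ordCompl hp.out hm.ne')

/-- If `n ≠ m` are positive integers and `m / n` is not of the form `p ^ e` for any prime `p`
and nonzero integer `e`, then the cyclotomic polynomials `Φ_n` and `Φ_m` are coprime in `ℤ[q]`. -/
theorem stmt0 (n m : ℕ) (hn : 0 < n) (hm : 0 < m) (hnm : n ≠ m)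
    (h : ∀ p : ℕ, p.Prime → ∀ e : ℤ, e ≠ 0 → (m : ℚ) / (n : ℚ) ≠ (p : ℚ) ^ e) :
    IsCoprime (Polynomial.cyclotomic n ℤ) (Polynomial.cyclotomic m ℤ) := by
  -- ord_compl parts differ at every prime
  have hkey : ∀ p : ℕ, p.Prime → ordCompl[p] n ≠ ordCompl[p] m := by
    intro p hp hc
    have hpn := Nat.ordProj_mul_ordCompl_eq_self n p
    have hpm := Nat.ordProj_mul_ordCompl_eq_self m p
    set a := n.factorization p with ha
    set b := m.factorization p with hb
    have hab : a ≠ b := fun hab => hnm (by rw [← hpn, ← hpm, ← hc, ← hab])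
    refine h p hp ((b : ℤ) - a) (sub_ne_zero_of_ne (by exact_mod_cast hab.symm)) ?_
    have hcm0 : ((ordCompl[p] m : ℕ) : ℚ) ≠ 0 := by
      exact_mod_cast (Nat.ordCompl_pos p hm.ne').ne'
    have hp0 : (p : ℚ) ≠ 0 := by exact_mod_cast hp.ne_zero
    have hn' : (n : ℚ) = (p : ℚ) ^ a * ((ordCompl[p] m : ℕ) : ℚ) := by
      rw [← hc]; exact_mod_cast hpn.symm
    have hm' : (m : ℚ) = (p : ℚ) ^ b * ((ordCompl[p] m : ℕ) : ℚ) := by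
      exact_mod_cast hpm.symm
    rw [hn', hm', mul_div_mul_right _ _ hcm0, ← zpow_natCast, ← zpow_natCast, ← zpow_sub₀ hp0]
  -- coprime over ℚ gives a constant in the span
  obtain ⟨a, b, hab⟩ := Polynomial.cyclotomic.isCoprime_rat hnm
  obtain ⟨c₁, hA⟩ := IsLocalization.integerNormalization_map_to_map (nonZeroDivisors ℤ) a
  obtain ⟨c₂, hB⟩ := IsLocalization.integerNormalization_map_to_map (nonZeroDivisors ℤ) b
  set A := IsLocalization.integerNormalization (nonZeroDivisors ℤ) a with hAdef
  set B := IsLocalization.integerNormalization (nonZeroDivisors ℤ) b with hBdef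
  have hc₁ : (c₁ : ℤ) ≠ 0 := nonZeroDivisors.coe_ne_zero c₁
  have hc₂ : (c₂ : ℤ) ≠ 0 := nonZeroDivisors.coe_ne_zero c₂
  have hinj : Function.Injective (Polynomial.map (Int.castRingHom ℚ)) :=
    Polynomial.map_injective _ (Int.cast_injective)
  have hrep : (C (c₂ : ℤ) * A) * cyclotomic n ℤ + (C (c₁ : ℤ) * B) * cyclotomic m ℤ
      = C ((c₁ : ℤ) * (c₂ : ℤ)) := by
    apply hinj
    simp only [algebraMap_int_eq] at hA hB
    simp only [Polynomial.map_add, Polynomial.map_mul, map_C, map_cyclotomic, hA, hB,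
      zsmul_eq_mul, eq_intCast, Polynomial.map_intCast]
    push_cast
    linear_combination (((c₁ : ℤ) : ℚ[X]) * ((c₂ : ℤ) : ℚ[X])) * hab
  -- the key induction: if C d is a combination, so is 1
  have main : ∀ k : ℕ, ∀ d : ℤ, d.natAbs = k → d ≠ 0 →
      (∃ u v : ℤ[X], u * cyclotomic n ℤ + v * cyclotomic m ℤ = C d) →
      IsCoprime (cyclotomic n ℤ) (cyclotomic m ℤ) := by
    intro k
    induction k using Nat.strong_induction_on with
    | _ k ih =>
      intro d hk hd0 ⟨u, v, huv⟩
      by_cases hu : IsUnit d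
      · obtain ⟨w, hw⟩ := isUnit_iff_exists_inv.1 hu
        exact ⟨C w * u, C w * v, by rw [mul_assoc, mul_assoc, ← mul_add, huv, ← C_mul,
          mul_comm w d, hw, C_1]⟩
      · have h1 : d.natAbs ≠ 1 := fun hc => hu (Int.isUnit_iff_natAbs_eq.2 hc)
        obtain ⟨p, hp, hpd⟩ := Nat.exists_prime_and_dvd h1
        have hpdZ : (p : ℤ) ∣ d := dvd_trans (Int.natCast_dvd_natCast.2 hpd) (Int.natAbs_dvd.mpr dvd_rfl)
        obtain ⟨d', hd'⟩ := hpdZ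
        haveI : Fact p.Prime := ⟨hp⟩
        -- coprime mod p
        obtain ⟨up, vp, hup⟩ := zmod_coprime p hn hm (hkey p hp)
        -- lift
        have hsurj : Function.Surjective (Polynomial.map (Int.castRingHom (ZMod p))) :=
          Polynomial.map_surjective _ (ZMod.intCast_surjective)
        obtain ⟨U, hU⟩ := hsurj up
        obtain ⟨V, hV⟩ := hsurj vp
        have hmapzero : (U * cyclotomic n ℤ + V * cyclotomic m ℤ - 1).map
            (Int.castRingHom (ZMod p)) = 0 := by
          rw [Polynomial.map_sub, Polynomial.map_add, Polynomial.map_mul, Polynomial.map_mul,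
            map_cyclotomic, map_cyclotomic, hU, hV, Polynomial.map_one, hup, sub_self]
        have hdvd : C (p : ℤ) ∣ (U * cyclotomic n ℤ + V * cyclotomic m ℤ - 1) := by
          rw [C_dvd_iff_dvd_coeff]
          intro i
          have := congrArg (fun q => Polynomial.coeff q i) hmapzero
          simp only [Polynomial.coeff_map, Polynomial.coeff_zero, eq_intCast] at this
          exact_mod_cast (ZMod.intCast_zmod_eq_zero_iff_dvd _ p).1 this
        obtain ⟨w, hw⟩ := hdvd
        have hdC : C d = C ((p : ℕ) : ℤ) * C d' := by rw [hd', C_mul]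
        have hrep' : (C d' * U - w * u) * cyclotomic n ℤ + (C d' * V - w * v) * cyclotomic m ℤ
            = C d' := by
          have h1 : U * cyclotomic n ℤ + V * cyclotomic m ℤ = 1 + C ((p : ℕ) : ℤ) * w := by
            rw [← hw]; ring
          linear_combination C d' * h1 - w * huv - w * hdC
        have hd'0 : d' ≠ 0 := fun hc => hd0 (by rw [hd', hc, mul_zero])
        have hlt : d'.natAbs < k := by
          rw [← hk, hd', Int.natAbs_mul, Int.natAbs_natCast]
          have : 2 ≤ p := hp.two_le
          have h0 : 0 < d'.natAbs := Int.natAbs_pos.2 hd'0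
          calc d'.natAbs < 2 * d'.natAbs := by omega
            _ ≤ p * d'.natAbs := Nat.mul_le_mul_right _ this
        exact ih _ hlt d' rfl hd'0 ⟨_, _, hrep'⟩
  exact main _ _ rfl (mul_ne_zero hc₁ hc₂) ⟨_, _, hrep⟩
end

section
/- Let p be a prime, let n be a positive integer and let e be a nonzero integer such that m := n·p^e is a positive integer. Then the cyclotomic polynomials Φ_n(q) and Φ_m(q) generate the unit ideal of ℤ[1/p][q]; equivalently, Φ_n and Φ_m are coprime (IsCoprime) in the polynomial ring ℤ[1/p][q]. -/
open Polynomial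

/-- In a field where `p ≠ 0`, the cyclotomic polynomials `Φ_n` and `Φ_{n p^a}` (with `a > 0`)
have no common root. -/
lemma no_common_root {K : Type*} [CommRing K] [IsDomain K] {p : ℕ} (hp : p.Prime) (hpK : (p : K) ≠ 0)
    {n a : ℕ} (hn : 0 < n) (ha : 0 < a) {x : K}
    (h1 : (cyclotomic n K).eval x = 0) (h2 : (cyclotomic (n * p ^ a) K).eval x = 0) : False := by
  have hpa : p ^ a ≠ 1 := (Nat.one_lt_pow ha.ne' hp.one_lt).ne'
  haveI : CharP K (ringChar K) := ringChar.charP K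
  rcases CharP.char_is_prime_or_zero K (ringChar K) with hℓ | hℓ
  · -- positive characteristic ℓ
    set ℓ := ringChar K with hℓdef
    haveI : Fact ℓ.Prime := ⟨hℓ⟩
    have hℓp : ℓ ≠ p := by
      intro h
      exact hpK (by rw [← h]; exact CharP.cast_eq_zero K ℓ)
    set k := n.factorization ℓ with hk
    set n' := n / ℓ ^ k with hn'
    have hsplit : ℓ ^ k * n' = n := Nat.ordProj_mul_ordCompl_eq_self n ℓ
    have hndvd : ¬ ℓ ∣ n' := Nat.not_dvd_ordCompl hℓ hn.ne'
    have hndvd2 : ¬ ℓ ∣ n' * p ^ a := by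
      intro h
      rcases (Nat.Prime.dvd_mul hℓ).mp h with h' | h'
      · exact hndvd h'
      · exact hℓp ((Nat.prime_dvd_prime_iff_eq hℓ hp).mp (hℓ.dvd_of_dvd_pow h'))
    haveI : NeZero (n' : K) := ⟨fun h => hndvd ((CharP.cast_eq_zero_iff K ℓ n').mp h)⟩
    haveI : NeZero ((n' * p ^ a : ℕ) : K) :=
      ⟨fun h => hndvd2 ((CharP.cast_eq_zero_iff K ℓ _).mp h)⟩
    have e1 : (cyclotomic (ℓ ^ k * n') K).IsRoot x := by rw [hsplit]; exact h1
    have e2 : (cyclotomic (ℓ ^ k * (n' * p ^ a)) K).IsRoot x := by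
      rw [← mul_assoc, hsplit]; exact h2
    rw [isRoot_cyclotomic_prime_pow_mul_iff_of_charP] at e1 e2
    have heq : n' = n' * p ^ a := e1.unique e2
    have hn'pos : 0 < n' := Nat.pos_of_ne_zero (fun h => hndvd (h ▸ dvd_zero ℓ))
    exact hpa (by nlinarith [hp.one_lt, Nat.one_lt_pow ha.ne' hp.one_lt])
  · -- characteristic zero
    haveI : CharP K 0 := hℓ ▸ ringChar.charP K
    haveI : CharZero K := CharP.charP_to_charZero K
    haveI : NeZero (n : K) := ⟨Nat.cast_ne_zero.mpr hn.ne'⟩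
    haveI : NeZero ((n * p ^ a : ℕ) : K) :=
      ⟨Nat.cast_ne_zero.mpr (Nat.mul_ne_zero hn.ne' (pow_ne_zero a hp.pos.ne'))⟩
    rw [show ((cyclotomic n K).eval x = 0) = (cyclotomic n K).IsRoot x from rfl,
      isRoot_cyclotomic_iff] at h1
    rw [show ((cyclotomic (n * p ^ a) K).eval x = 0) = (cyclotomic (n * p ^ a) K).IsRoot x
      from rfl, isRoot_cyclotomic_iff] at h2
    have heq : n = n * p ^ a := h1.unique h2
    exact hpa (by nlinarith [Nat.one_lt_pow ha.ne' hp.one_lt])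

/-- `Φ_n` and `Φ_{n p^a}` are coprime over any commutative ring in which `p` is a unit. -/
lemma aux_coprime {R : Type*} [CommRing R] (p : ℕ) (hp : p.Prime) (hu : IsUnit (p : R))
    (n a : ℕ) (hn : 0 < n) (ha : 0 < a) :
    IsCoprime (cyclotomic n R) (cyclotomic (n * p ^ a) R) := by
  by_contra hco
  have hspan : Ideal.span {cyclotomic n R, cyclotomic (n * p ^ a) R} ≠ ⊤ := by
    intro h
    have h1 : (1 : R[X]) ∈ Ideal.span {cyclotomic n R, cyclotomic (n * p ^ a) R} := by
      rw [h]; trivial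
    obtain ⟨u, v, huv⟩ := Ideal.mem_span_pair.mp h1
    exact hco ⟨u, v, huv⟩
  obtain ⟨M, hM, hle⟩ := Ideal.exists_le_maximal _ hspan
  haveI := hM
  set K := R[X] ⧸ M with hK
  set φ : R[X] →+* K := Ideal.Quotient.mk M with hφ
  set ψ : R →+* K := φ.comp C with hψ
  set x : K := φ X with hx
  have hhom : ∀ f : R[X], φ f = eval₂ ψ x f := by
    intro f
    conv_lhs => rw [← eval₂_C_X (p := f)]
    exact hom_eval₂ f C φ X
  have hev : ∀ N : ℕ, cyclotomic N R ∈ M → (cyclotomic N K).eval x = 0 := by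
    intro N hmem
    have : φ (cyclotomic N R) = 0 := Ideal.Quotient.eq_zero_iff_mem.mpr hmem
    rw [hhom, eval₂_eq_eval_map, map_cyclotomic] at this
    exact this
  have h1 := hev n (hle (Ideal.subset_span (by simp)))
  have h2 := hev (n * p ^ a) (hle (Ideal.subset_span (by simp)))
  have hpK : (p : K) ≠ 0 := by
    have hu2 : IsUnit (p : K) := by
      have := hu.map ψ
      rwa [map_natCast] at this
    exact hu2.ne_zero
  exact no_common_root hp hpK hn ha h1 h2

/-- If `p` is a prime, `n` a positive integer and `e` a nonzero integer such that
`m = n * p ^ e` is a positive integer, then the cyclotomic polynomials `Φ_n` and `Φ_m`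
are coprime in `ℤ[1/p][q]`. -/
theorem stmt1 (p : ℕ) (hp : p.Prime) (n : ℕ) (hn : 0 < n) (e : ℤ) (he : e ≠ 0)
    (m : ℕ) (hm : 0 < m) (hme : (m : ℚ) = (n : ℚ) * (p : ℚ) ^ e) :
    IsCoprime (Polynomial.cyclotomic n (Localization.Away (p : ℤ)))
      (Polynomial.cyclotomic m (Localization.Away (p : ℤ))) := by
  have hppos : (0 : ℚ) < (p : ℚ) := by exact_mod_cast hp.pos
  set a := e.natAbs with ha
  have hapos : 0 < a := Int.natAbs_pos.mpr he
  rcases lt_or_gt_of_ne he with hneg | hpos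
  · -- e < 0 : n = m * p ^ a
    have hcast : (n : ℚ) = (m : ℚ) * (p : ℚ) ^ a := by
      have he' : e = -(a : ℤ) := by omega
      rw [hme, he', zpow_neg, zpow_natCast]
      field_simp
    have hnm : n = m * p ^ a := by exact_mod_cast hcast
    subst hnm
    exact (aux_coprime p hp (by
      have := IsLocalization.Away.algebraMap_isUnit (S := Localization.Away (p : ℤ)) (p : ℤ)
      rwa [show (algebraMap ℤ (Localization.Away (p : ℤ))) (p : ℤ) = (p : Localization.Away (p : ℤ)) by push_cast; rfl] at this) m a hm hapos).symm
  · -- e > 0 : m = n * p ^ a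
    have hcast : (m : ℚ) = (n : ℚ) * (p : ℚ) ^ a := by
      have he' : e = (a : ℤ) := by omega
      rw [hme, he', zpow_natCast]
    have hmn : m = n * p ^ a := by exact_mod_cast hcast
    subst hmn
    exact aux_coprime p hp (by
      have := IsLocalization.Away.algebraMap_isUnit (S := Localization.Away (p : ℤ)) (p : ℤ)
      rwa [show (algebraMap ℤ (Localization.Away (p : ℤ))) (p : ℤ) = (p : Localization.Away (p : ℤ)) by push_cast; rfl] at this) n a hn hapos
end

section
/- Let p be a prime, let n_1, …, n_m be positive integers whose p-adic valuations are pairwise distinct, and let k_1, …, k_m be positive integers. Then the natural ring homomorphism ℤ[1/p][q]/(∏_{i=1}^m Φ_{n_i}(q)^{k_i}) → ∏_{i=1}^m ℤ[1/p][q]/(Φ_{n_i}(q)^{k_i}) induced by the quotient maps is a ring isomorphism. -/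
open Polynomial

instance (a : ℤ) (I : Ideal (Localization.Away a)[X]) : I.IsTwoSided :=
  ⟨fun b ha => mul_comm b _ ▸ I.mul_mem_left b ha⟩

private lemma gcd_dvd_div_p {p a b : ℕ} (hp : p.Prime) (ha : 0 < a) (hb : 0 < b)
    (hab : padicValNat p a < padicValNat p b) : Nat.gcd a b ∣ b / p := by
  have hpb : p ∣ b := dvd_of_one_le_padicValNat (by omega)
  have hbp0 : b / p ≠ 0 := (Nat.div_pos (Nat.le_of_dvd hb hpb) hp.pos).ne'
  have hg0 : Nat.gcd a b ≠ 0 := Nat.gcd_ne_zero_left ha.ne'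
  have hfa : (Nat.gcd a b).factorization ≤ a.factorization :=
    (Nat.factorization_le_iff_dvd hg0 ha.ne').mpr (Nat.gcd_dvd_left a b)
  have hfb : (Nat.gcd a b).factorization ≤ b.factorization :=
    (Nat.factorization_le_iff_dvd hg0 hb.ne').mpr (Nat.gcd_dvd_right a b)
  rw [← Nat.factorization_le_iff_dvd hg0 hbp0, Nat.factorization_div hpb, Finsupp.le_def]
  intro q
  rw [Finsupp.tsub_apply, hp.factorization]
  by_cases hq : q = p
  · subst hq
    have h1 : (Nat.gcd a b).factorization q ≤ a.factorization q := hfa q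
    have h2 : a.factorization q < b.factorization q := by
      rwa [Nat.factorization_def _ hp, Nat.factorization_def _ hp]
    rw [Finsupp.single_eq_same]
    omega
  · rw [Finsupp.single_eq_of_ne' (Ne.symm hq)]
    have := hfb q
    omega

private lemma cyclo_coprime {R : Type*} [CommRing R] [IsDomain R] {p : ℕ} (hp : p.Prime)
    (hpu : IsUnit ((p : ℕ) : R)) {a b : ℕ} (ha : 0 < a) (hb : 0 < b)
    (hab : padicValNat p a < padicValNat p b) :
    IsCoprime (cyclotomic a R) (cyclotomic b R) := by
  suffices H : IsCoprime ((X : R[X]) ^ a - 1) (cyclotomic b R) from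
    H.of_isCoprime_of_dvd_left (cyclotomic.dvd_X_pow_sub_one a R)
  set f := (X : R[X]) ^ a - 1 with hf
  set g := cyclotomic b R with hg
  set I := Ideal.span ({f, g} : Set R[X]) with hI
  have hfI : f ∈ I := Ideal.subset_span (by simp)
  have hgI : g ∈ I := Ideal.subset_span (by simp)
  set x := Ideal.Quotient.mk I (X : R[X]) with hx
  have hxa : x ^ a = 1 := by
    have h1 := Ideal.Quotient.eq_zero_iff_mem.mpr hfI
    rw [hf, map_sub, map_pow, map_one, sub_eq_zero] at h1
    exact h1
  have hpb : p ∣ b := dvd_of_one_le_padicValNat (by omega)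
  have hxb : x ^ b = 1 := by
    obtain ⟨c, hc⟩ := cyclotomic.dvd_X_pow_sub_one b R
    have hmem : (X : R[X]) ^ b - 1 ∈ I := hc ▸ I.mul_mem_right c hgI
    have h1 := Ideal.Quotient.eq_zero_iff_mem.mpr hmem
    rw [map_sub, map_pow, map_one, sub_eq_zero] at h1
    exact h1
  have hxd : x ^ (b / p) = 1 := by
    have h1 : orderOf x ∣ Nat.gcd a b :=
      Nat.dvd_gcd (orderOf_dvd_of_pow_eq_one hxa) (orderOf_dvd_of_pow_eq_one hxb)
    exact orderOf_dvd_iff_pow_eq_one.mp (h1.trans (gcd_dvd_div_p hp ha hb hab))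
  have hΨ : g ∣ ∑ j ∈ Finset.range p, ((X : R[X]) ^ (b / p)) ^ j := by
    have hprop : b / p ∈ b.properDivisors :=
      Nat.mem_properDivisors.mpr ⟨Nat.div_dvd_of_dvd hpb, Nat.div_lt_self hb hp.one_lt⟩
    obtain ⟨c, hc⟩ := X_pow_sub_one_mul_cyclotomic_dvd_X_pow_sub_one_of_dvd R hprop
    have hgeom : (∑ j ∈ Finset.range p, ((X : R[X]) ^ (b / p)) ^ j) *
        ((X : R[X]) ^ (b / p) - 1) = (X : R[X]) ^ b - 1 := by
      rw [geom_sum_mul, ← pow_mul, Nat.div_mul_cancel hpb]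
    have hne : ((X : R[X]) ^ (b / p) - 1) ≠ 0 := by
      have hdp : 0 < b / p := Nat.div_pos (Nat.le_of_dvd hb hpb) hp.pos
      intro h0
      have h2 := congrArg natDegree (sub_eq_zero.mp h0)
      rw [natDegree_X_pow, natDegree_one] at h2
      omega
    refine ⟨c, mul_right_cancel₀ hne ?_⟩
    rw [hgeom, hc]; ring
  have hp0 : Ideal.Quotient.mk I ((p : ℕ) : R[X]) = 0 := by
    obtain ⟨c, hc⟩ := hΨ
    have hmem : (∑ j ∈ Finset.range p, ((X : R[X]) ^ (b / p)) ^ j) ∈ I :=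
      hc ▸ I.mul_mem_right c hgI
    have h2 := Ideal.Quotient.eq_zero_iff_mem.mpr hmem
    rw [map_sum] at h2
    simp only [map_pow] at h2
    rw [Finset.sum_congr rfl fun j _ => by rw [← hx, hxd, one_pow]] at h2
    simpa using h2
  have hpu2 : IsUnit (Ideal.Quotient.mk I ((p : ℕ) : R[X])) := by
    have h2 : IsUnit ((p : ℕ) : R[X]) := by
      have h3 := hpu.map (C : R →+* R[X])
      rwa [map_natCast] at h3
    exact h2.map (Ideal.Quotient.mk I)
  rw [hp0] at hpu2
  have hIt : I = ⊤ := by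
    rw [Ideal.eq_top_iff_one, ← Ideal.Quotient.eq_zero_iff_mem, map_one]
    exact (isUnit_zero_iff.mp hpu2).symm
  obtain ⟨u, v, huv⟩ := Ideal.mem_span_pair.mp (hIt ▸ Submodule.mem_top : (1 : R[X]) ∈ I)
  exact ⟨u, v, huv⟩

private lemma stmt2_general {R : Type*} [CommRing R] [IsDomain R] {p : ℕ} (hp : p.Prime)
    (hpu : IsUnit ((p : ℕ) : R)) (m : ℕ) (n : Fin m → ℕ) (k : Fin m → ℕ)
    (hn : ∀ i, 0 < n i) (hk : ∀ i, 0 < k i)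
    (hval : ∀ i j, i ≠ j → padicValNat p (n i) ≠ padicValNat p (n j))
    (H : ∀ i, Ideal.span {∏ j : Fin m, cyclotomic (n j) R ^ k j} ≤
        Ideal.span {cyclotomic (n i) R ^ k i}) :
    Function.Bijective
      (Pi.ringHom fun i : Fin m =>
        Ideal.Quotient.factor (H i)) := by
  classical
  set I := fun i : Fin m => Ideal.span {cyclotomic (n i) R ^ k i} with hIdef
  have hcop : ∀ i j, i ≠ j →
      IsCoprime (cyclotomic (n i) R ^ k i) (cyclotomic (n j) R ^ k j) := by
    intro i j hij
    rcases lt_or_gt_of_ne (hval i j hij) with h | h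
    · exact (cyclo_coprime hp hpu (hn i) (hn j) h).pow
    · exact ((cyclo_coprime hp hpu (hn j) (hn i) h).symm).pow
  have hpair : Pairwise (Function.onFun IsCoprime I) := fun i j hij =>
    (Ideal.isCoprime_span_singleton_iff _ _).mpr (hcop i j hij)
  have heq : Ideal.span {∏ j : Fin m, cyclotomic (n j) R ^ k j} = ⨅ i, I i :=
    (Ideal.iInf_span_singleton fun i j hij => hcop i j hij).symm
  have hmain : Function.Bijective (Ideal.quotientInfToPiQuotient I) :=
    ⟨Ideal.quotientInfToPiQuotient_inj I, Ideal.quotientInfToPiQuotient_surj hpair⟩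
  have hbij2 := hmain.comp (Ideal.quotEquivOfEq heq).bijective
  have hfun : ⇑(Pi.ringHom fun i : Fin m =>
      Ideal.Quotient.factor (H i)) =
      (Ideal.quotientInfToPiQuotient I) ∘ (Ideal.quotEquivOfEq heq) := by
    funext y
    obtain ⟨z, rfl⟩ := Ideal.Quotient.mk_surjective y
    funext i
    simp only [Pi.ringHom_apply, Function.comp_apply, Ideal.quotEquivOfEq_mk,
      Ideal.quotientInfToPiQuotient_mk', Ideal.Quotient.factor_mk]
    rfl
  rw [hfun]
  exact hbij2

/-- Let `p` be a prime and `n 0, …, n (m-1)` positive integers with pairwise distinct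
`p`-adic valuations, and `k i` positive integers.  Then the natural ring homomorphism
`ℤ[1/p][q]/(∏ Φ_{n i}^{k i}) → ∏ ℤ[1/p][q]/(Φ_{n i}^{k i})` is bijective. -/
theorem stmt2 (p : ℕ) (hp : p.Prime) (m : ℕ) (n : Fin m → ℕ) (k : Fin m → ℕ)
    (hn : ∀ i, 0 < n i) (hk : ∀ i, 0 < k i)
    (hval : ∀ i j, i ≠ j → padicValNat p (n i) ≠ padicValNat p (n j)) :
    Function.Bijective
      (Pi.ringHom fun i : Fin m =>
        Ideal.Quotient.factor (R := (Localization.Away (p : ℤ))[X])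
          (S := Ideal.span {∏ j : Fin m, cyclotomic (n j) (Localization.Away (p : ℤ)) ^ k j})
          (T := Ideal.span {cyclotomic (n i) (Localization.Away (p : ℤ)) ^ k i})
          ((Ideal.span_singleton_le_span_singleton (α := (Localization.Away (p : ℤ))[X])).mpr
            (Finset.dvd_prod_of_mem
              (fun j => cyclotomic (n j) (Localization.Away (p : ℤ)) ^ k j)
              (Finset.mem_univ i)))) := by
  haveI : IsDomain (Localization.Away (p : ℤ)) := IsLocalization.isDomain_localization
    (powers_le_nonZeroDivisors_of_noZeroDivisors (by exact_mod_cast hp.ne_zero))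
  have hpu : IsUnit ((p : ℕ) : Localization.Away (p : ℤ)) := by
    simpa using IsLocalization.Away.algebraMap_isUnit
      (S := Localization.Away (p : ℤ)) ((p : ℤ))
  exact stmt2_general hp hpu m n k hn hk hval _
end

section
/- Let n and k be positive integers. The ℤ-algebra homomorphism h: ℤ[q] → ℤ[ζ_n][x]/(x^k) defined by h(q) = ζ_n + x descends to a well-defined ring homomorphism h: ℤ[q]/(Φ_n(q)^k) → ℤ[ζ_n][x]/(x^k), and this induced homomorphism is injective. -/
open Polynomial
set_option maxHeartbeats 1000000
set_option synthInstance.maxHeartbeats 400000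

private lemma stmt4_aux (n k : ℕ) (hn : 0 < n) {ζ : ℂ} (hprim : IsPrimitiveRoot ζ n)
    (f : ℤ[X]) (hdvd2 : (X - C ζ) ^ k ∣ f.map (algebraMap ℤ ℂ)) :
    cyclotomic n ℤ ^ k ∣ f := by
  have hsq : Squarefree (cyclotomic n ℂ) := by
    have h1 : (cyclotomic n ℚ).Separable := (cyclotomic.irreducible_rat hn).separable
    have hsep : ((cyclotomic n ℚ).map (algebraMap ℚ ℂ)).Separable := h1.map
    rw [map_cyclotomic] at hsep
    exact hsep.squarefree
  have hroot : (cyclotomic n ℂ).IsRoot ζ := hprim.isRoot_cyclotomic hn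
  set q : ℂ[X] := cyclotomic n ℂ /ₘ (X - C ζ) with hq
  have hfac : cyclotomic n ℂ = (X - C ζ) * q :=
    ((mul_divByMonic_eq_iff_isRoot).mpr hroot).symm
  have hqnd : ¬ (X - C ζ) ∣ q := by
    rintro ⟨d, hd⟩
    apply Polynomial.not_isUnit_X_sub_C ζ
    exact hsq (X - C ζ) ⟨d, by rw [hfac, hd]; ring⟩
  have hQ : ∀ j, j ≤ k → cyclotomic n ℚ ^ j ∣ f.map (algebraMap ℤ ℚ) := by
    intro j
    induction j with
    | zero => simp
    | succ j ih =>
      intro hjk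
      obtain ⟨c, hc⟩ := ih (Nat.le_of_succ_le hjk)
      have hmapf : f.map (algebraMap ℤ ℂ)
          = cyclotomic n ℂ ^ j * c.map (algebraMap ℚ ℂ) := by
        rw [IsScalarTower.algebraMap_eq ℤ ℚ ℂ, ← Polynomial.map_map, hc,
          Polynomial.map_mul, Polynomial.map_pow, map_cyclotomic]
      have hdvd3 : (X - C ζ) ^ j * (X - C ζ) ∣
          (X - C ζ) ^ j * (q ^ j * c.map (algebraMap ℚ ℂ)) := by
        rw [← pow_succ]
        calc (X - C ζ) ^ (j+1) ∣ (X - C ζ) ^ k := pow_dvd_pow _ hjk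
        _ ∣ cyclotomic n ℂ ^ j * c.map (algebraMap ℚ ℂ) := hmapf ▸ hdvd2
        _ = (X - C ζ) ^ j * (q ^ j * c.map (algebraMap ℚ ℂ)) := by rw [hfac, mul_pow]; ring
      have hXC0 : (X - C ζ) ^ j ≠ (0 : ℂ[X]) := pow_ne_zero _ (X_sub_C_ne_zero ζ)
      have hdvd4 : (X - C ζ) ∣ q ^ j * c.map (algebraMap ℚ ℂ) :=
        (mul_dvd_mul_iff_left hXC0).mp hdvd3
      have hprime : Prime (X - C ζ) := prime_X_sub_C ζ
      have hdvdc : (X - C ζ) ∣ c.map (algebraMap ℚ ℂ) := by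
        rcases hprime.dvd_mul.mp hdvd4 with h | h
        · exact absurd (hprime.dvd_of_dvd_pow h) hqnd
        · exact h
      have hcrt : Polynomial.aeval ζ c = 0 := by
        rw [aeval_def, eval₂_eq_eval_map]
        exact (dvd_iff_isRoot.mp hdvdc)
      have hdc : cyclotomic n ℚ ∣ c := by
        rw [cyclotomic_eq_minpoly_rat hprim hn]
        exact minpoly.dvd ℚ ζ hcrt
      obtain ⟨d, hd⟩ := hdc
      exact ⟨d, by rw [hc, hd]; ring⟩
  have hQk := hQ k le_rfl
  refine (map_dvd_map (Int.castRingHom ℚ) Int.cast_injective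
    ((cyclotomic.monic n ℤ).pow k)).mp ?_
  rwa [Polynomial.map_pow, map_cyclotomic_int, ← algebraMap_int_eq]

/-- The `ℤ`-algebra map `ℤ[q] → ℤ[ζ_n][x]/(x^k)`, `q ↦ ζ_n + x`, descends to a
well-defined ring homomorphism `ℤ[q]/(Φ_n(q)^k) → ℤ[ζ_n][x]/(x^k)`, which is injective. -/
theorem stmt4 (n k : ℕ) (hn : 0 < n) (hk : 0 < k) (ζ : ℂ)
    (hζ : ζ = Complex.exp (2 * Real.pi * Complex.I / n))
    (z : Algebra.adjoin ℤ {ζ}) (hz : (z : ℂ) = ζ) :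
    ∃ h : (ℤ[X] ⧸ Ideal.span {cyclotomic n ℤ ^ k}) →+*
        (Polynomial (Algebra.adjoin ℤ {ζ}) ⧸
          Ideal.span {(X : Polynomial (Algebra.adjoin ℤ {ζ})) ^ k}),
      (∀ f : ℤ[X],
          h (Ideal.Quotient.mk (Ideal.span {cyclotomic n ℤ ^ k}) f) =
            Polynomial.aeval
              (Ideal.Quotient.mk
                (Ideal.span {(X : Polynomial (Algebra.adjoin ℤ {ζ})) ^ k})
                (C z + X)) f) ∧
      Function.Injective h := by
  have hprim : IsPrimitiveRoot ζ n := hζ ▸ Complex.isPrimitiveRoot_exp n hn.ne'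
  set I : Ideal (Polynomial (Algebra.adjoin ℤ {ζ})) :=
    Ideal.span {(X : Polynomial (Algebra.adjoin ℤ {ζ})) ^ k} with hI
  set g : ℤ[X] →ₐ[ℤ] (Polynomial (Algebra.adjoin ℤ {ζ}) ⧸ I) :=
    Polynomial.aeval (Ideal.Quotient.mk I (C z + X)) with hg
  have key : ∀ f : ℤ[X], g f = Ideal.Quotient.mk I (Polynomial.aeval (C z + X) f) := by
    intro f
    have h0 := (Polynomial.aeval_algHom_apply (Ideal.Quotient.mkₐ ℤ I) (C z + X) f).symm
    exact h0.symm
  have gzero : ∀ f : ℤ[X],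
      g f = 0 ↔ (X : Polynomial (Algebra.adjoin ℤ {ζ})) ^ k ∣ Polynomial.aeval (C z + X) f := by
    intro f
    rw [key, Ideal.Quotient.eq_zero_iff_mem, hI, Ideal.mem_span_singleton]
  have hzroot : Polynomial.aeval z (cyclotomic n ℤ) = 0 := by
    have h1 := Polynomial.aeval_algHom_apply (Subalgebra.val (Algebra.adjoin ℤ {ζ}))
      z (cyclotomic n ℤ)
    have h2 : Polynomial.aeval ((Subalgebra.val (Algebra.adjoin ℤ {ζ})) z)
        (cyclotomic n ℤ) = 0 := by
      rw [show (Subalgebra.val (Algebra.adjoin ℤ {ζ})) z = ζ from hz, aeval_def,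
        eval₂_eq_eval_map, map_cyclotomic]
      exact hprim.isRoot_cyclotomic hn
    rw [h1] at h2
    exact Subtype.coe_injective (by simpa using h2)
  have hXd : (X : Polynomial (Algebra.adjoin ℤ {ζ})) ∣
      Polynomial.aeval (C z + X) (cyclotomic n ℤ) := by
    rw [X_dvd_iff, coeff_zero_eq_eval_zero]
    have h2 := Polynomial.aeval_algHom_apply
      ((Polynomial.aeval (0 : Algebra.adjoin ℤ {ζ})).restrictScalars ℤ) (C z + X)
      (cyclotomic n ℤ)
    have h3 : ((Polynomial.aeval (0 : Algebra.adjoin ℤ {ζ})).restrictScalars ℤ)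
        (C z + X) = z := by simp
    rw [h3, hzroot] at h2
    simpa using h2.symm
  have hwd : ∀ a : ℤ[X], a ∈ Ideal.span {cyclotomic n ℤ ^ k} → g.toRingHom a = 0 := by
    intro a ha
    rw [Ideal.mem_span_singleton] at ha
    obtain ⟨c, rfl⟩ := ha
    show g (cyclotomic n ℤ ^ k * c) = 0
    rw [gzero, map_mul, map_pow]
    exact dvd_mul_of_dvd_left (pow_dvd_pow_of_dvd hXd k) _
  refine ⟨Ideal.Quotient.lift _ g.toRingHom hwd, fun f => Ideal.Quotient.lift_mk _ _ _, ?_⟩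
  apply RingHom.lift_injective_of_ker_le_ideal
  intro f hf
  rw [RingHom.mem_ker] at hf
  have hf' : (X : Polynomial (Algebra.adjoin ℤ {ζ})) ^ k ∣ Polynomial.aeval (C z + X) f :=
    (gzero f).mp hf
  rw [Ideal.mem_span_singleton]
  set M : Polynomial (Algebra.adjoin ℤ {ζ}) →ₐ[ℤ] ℂ[X] :=
    Polynomial.mapAlgHom (Subalgebra.val (Algebra.adjoin ℤ {ζ})) with hM
  have hdvd1 : (X : ℂ[X]) ^ k ∣ Polynomial.aeval (C ζ + X) f := by
    have hmap := map_dvd M hf'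
    rw [map_pow] at hmap
    have hX : M X = X := by simp [hM, Polynomial.mapAlgHom]
    have hMX : M (C z + X) = C ζ + X := by
      simp [hM, Polynomial.mapAlgHom, hz]
    rw [hX, ← Polynomial.aeval_algHom_apply M (C z + X) f, hMX] at hmap
    exact hmap
  have hdvd2 : (X - C ζ) ^ k ∣ f.map (algebraMap ℤ ℂ) := by
    set N : ℂ[X] →ₐ[ℤ] ℂ[X] :=
      (Polynomial.aeval (X - C ζ) : ℂ[X] →ₐ[ℂ] ℂ[X]).restrictScalars ℤ with hN
    have hmap := map_dvd N hdvd1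
    rw [map_pow] at hmap
    have hNX : N (X : ℂ[X]) = X - C ζ := by simp [hN]
    have hNC : N (C ζ + X) = X := by simp [hN]
    rw [hNX, ← Polynomial.aeval_algHom_apply N (C ζ + X) f, hNC] at hmap
    have haevalX : Polynomial.aeval (X : ℂ[X]) f = f.map (algebraMap ℤ ℂ) := by
      rw [show f.map (algebraMap ℤ ℂ) = Polynomial.aeval (X : ℂ[X]) (f.map (algebraMap ℤ ℂ))
        from (Polynomial.aeval_X_left_apply _).symm, Polynomial.aeval_map_algebraMap]
    rwa [haevalX] at hmap
  exact stmt4_aux n k hn hprim f hdvd2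
end

section
/- Let n, k, b be positive integers with gcd(b, n) = 1. Then the Frobenius homomorphism F_b: ℤ[1/b][q]/(Φ_n(q)^k) → ℤ[1/b][q]/(Φ_n(q)^k), induced by q ↦ q^b, is a ring isomorphism (i.e., it is bijective). -/
open Polynomial

/-- Binomial expansion auxiliary: `(1+a)^b = 1 + b•a + a²·c`. -/
private theorem binom_aux {A : Type*} [CommRing A] (b : ℕ) (a : A) :
    ∃ c : A, (1 + a) ^ b = 1 + (b : A) * a + a ^ 2 * c := by
  induction b with
  | zero => exact ⟨0, by simp⟩
  | succ b ih =>
    obtain ⟨c, hc⟩ := ih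
    refine ⟨c + (b : A) + a * c, ?_⟩
    rw [pow_succ, hc]
    push_cast
    ring

/-- Unipotent `b`-th roots are unique when `b` is invertible. -/
private theorem unip_root_unique {A : Type*} [CommRing A] {b : ℕ} (hb : IsUnit (b : A))
    {a₁ a₂ : A} (h₁ : IsNilpotent (a₁ - 1)) (h₂ : IsNilpotent (a₂ - 1))
    (h : a₁ ^ b = a₂ ^ b) : a₁ = a₂ := by
  have hu₂ : IsUnit a₂ := by
    have h' : a₂ = (a₂ - 1) + 1 := by ring
    rw [h']
    exact h₂.isUnit_add_one
  set v := hu₂.unit with hv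
  have hvs : (v : A) = a₂ := hu₂.unit_spec
  have key : a₂ * (↑v⁻¹ : A) = 1 := by rw [← hvs]; exact v.mul_inv
  set ν := a₁ * (↑v⁻¹ : A) - 1 with hν
  have hνnil : IsNilpotent ν := by
    have hcalc : ν = ((a₁ - 1) - (a₂ - 1)) * (↑v⁻¹ : A) := by
      have h2 : ((a₁ - 1) - (a₂ - 1)) * (↑v⁻¹ : A)
          = a₁ * (↑v⁻¹ : A) - a₂ * (↑v⁻¹ : A) := by ring
      rw [hν, h2, key]
    rw [hcalc]
    exact (Commute.all _ _).isNilpotent_mul_right ((Commute.all _ _).isNilpotent_sub h₁ h₂)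
  have h1ν : (1 : A) + ν = a₁ * (↑v⁻¹ : A) := by rw [hν]; ring
  have hb1 : (1 + ν) ^ b = 1 := by
    rw [h1ν, mul_pow, h, ← hvs, ← mul_pow, v.mul_inv, one_pow]
  obtain ⟨c, hc⟩ := binom_aux b ν
  rw [hc] at hb1
  have h0 : ν * ((b : A) + ν * c) = 0 := by linear_combination hb1
  have hunit : IsUnit ((b : A) + ν * c) :=
    IsNilpotent.isUnit_add_left_of_commute
      ((Commute.all _ _).isNilpotent_mul_right hνnil) hb (Commute.all _ _)
  rw [mul_comm] at h0
  have hν0 : ν = 0 := (hunit.mul_right_eq_zero).mp h0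
  have ha₁ : a₁ * (↑v⁻¹ : A) = 1 := by rw [← h1ν, hν0, add_zero]
  calc a₁ = a₁ * ((↑v⁻¹ : A) * (v : A)) := by rw [v.inv_mul, mul_one]
    _ = (a₁ * (↑v⁻¹ : A)) * (v : A) := by ring
    _ = (v : A) := by rw [ha₁, one_mul]
    _ = a₂ := hvs

/-- Existence of unipotent `b`-th roots of unipotent elements when `b` is invertible. -/
private theorem exists_unip_root {A : Type*} [CommRing A] {b : ℕ} (hb : IsUnit (b : A)) :
    ∀ t : ℕ, ∀ e : A, e ^ t = 0 → ∃ y : A, y ^ b = 1 + e ∧ IsNilpotent (y - 1) := by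
  intro t
  induction t using Nat.strong_induction_on with
  | _ t ih =>
  intro e he
  rcases t with _ | t
  · -- t = 0 : the ring is trivial
    have h10 : (1 : A) = 0 := by simpa using he
    have hall : ∀ x : A, x = 0 := fun x => by rw [← one_mul x, h10, zero_mul]
    exact ⟨1, by rw [hall (1 ^ b), hall (1 + e)], ⟨1, by rw [pow_one, hall (1 - 1)]⟩⟩
  rcases t with _ | t
  · -- t = 1 : e = 0
    rw [pow_one] at he
    exact ⟨1, by rw [he, add_zero, one_pow], by simp⟩
  -- t + 2 case
  have henil : IsNilpotent e := ⟨t + 1 + 1, he⟩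
  set β : A := (↑hb.unit⁻¹ : A) with hβ
  have hbβ : (b : A) * β = 1 := by
    have h' := hb.unit.mul_inv
    rw [hb.unit_spec] at h'
    exact h'
  set a := β * e with ha
  have hanil : IsNilpotent a := (Commute.all _ _).isNilpotent_mul_left henil
  obtain ⟨c, hc⟩ := binom_aux b a
  have hy1 : (1 + a) ^ b = 1 + e + e ^ 2 * (β ^ 2 * c) := by
    rw [hc, ha]
    have hbe : (b : A) * (β * e) = e := by rw [← mul_assoc, hbβ, one_mul]
    rw [hbe]; ring
  have hu : IsUnit (1 + a) := hanil.isUnit_one_add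
  set v := hu.unit with hv
  have hvs : (v : A) = 1 + a := hu.unit_spec
  have hkey : ((1 + a) * (↑v⁻¹ : A) : A) = 1 := by rw [← hvs]; exact v.mul_inv
  set s : A := -(β ^ 2 * c * (↑v⁻¹ : A) ^ b) with hs
  set d : A := e ^ 2 * s with hd
  have h1d : (1 : A) + d = (1 + e) * (↑v⁻¹ : A) ^ b := by
    have h2 : ((1 : A) + e) = (1 + a) ^ b - e ^ 2 * (β ^ 2 * c) := by rw [hy1]; ring
    rw [h2, sub_mul, ← mul_pow, hkey, one_pow, hd, hs]
    ring
  have hdpow : d ^ (t + 1) = 0 := by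
    have h1 : d ^ (t + 1) = e ^ (2 * (t + 1)) * s ^ (t + 1) := by
      rw [hd, mul_pow, ← pow_mul]
    rw [h1, pow_eq_zero_of_le (by omega : t + 1 + 1 ≤ 2 * (t + 1)) he, zero_mul]
  obtain ⟨w, hw, hwnil⟩ := ih (t + 1) (by omega) d hdpow
  refine ⟨(1 + a) * w, ?_, ?_⟩
  · rw [mul_pow, hw, h1d]
    calc (1 + a) ^ b * ((1 + e) * (↑v⁻¹ : A) ^ b)
        = (1 + e) * ((1 + a) ^ b * (↑v⁻¹ : A) ^ b) := by ring
      _ = (1 + e) * ((1 + a) * (↑v⁻¹ : A)) ^ b := by rw [← mul_pow]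
      _ = 1 + e := by rw [hkey, one_pow, mul_one]
  · have hr : (1 + a) * w - 1 = a + (w - 1) + a * (w - 1) := by ring
    rw [hr]
    exact (Commute.all _ _).isNilpotent_add
      ((Commute.all _ _).isNilpotent_add hanil hwnil)
      ((Commute.all _ _).isNilpotent_mul_right hanil)

/-- `Φ_n(X) ∣ Φ_n(X^b)` whenever `gcd(b,n) = 1`, `b > 0`. -/
private theorem cyc_dvd_expand (R : Type*) [CommRing R] (n : ℕ) :
    ∀ b : ℕ, 0 < b → Nat.Coprime b n → cyclotomic n R ∣ expand R b (cyclotomic n R) := by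
  intro b
  induction b using Nat.strong_induction_on with
  | _ b ih =>
  intro hb hbn
  rcases eq_or_ne b 1 with rfl | hb1
  · rw [expand_one]
  · have hp : Nat.Prime b.minFac := Nat.minFac_prime hb1
    obtain ⟨m, hm⟩ := b.minFac_dvd
    have hpn : ¬ b.minFac ∣ n := by
      intro h
      have hd1 : b.minFac ∣ 1 := hbn ▸ Nat.dvd_gcd b.minFac_dvd h
      exact hp.one_lt.ne' (Nat.dvd_one.mp hd1)
    have hm0 : 0 < m := by
      rcases Nat.eq_zero_or_pos m with rfl | h
      · omega
      · exact h
    have hmb : m < b := by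
      have h2 := hp.two_le
      calc m = 1 * m := (one_mul m).symm
        _ < b.minFac * m := by
            exact mul_lt_mul_of_pos_right (by omega : 1 < b.minFac) hm0
        _ = b := hm.symm
    have hmn : Nat.Coprime m n :=
      Nat.Coprime.coprime_dvd_left ⟨b.minFac, hm.trans (mul_comm _ _)⟩ hbn
    have h1 : cyclotomic n R ∣ expand R m (cyclotomic n R) := ih m hmb hm0 hmn
    have h2 : cyclotomic n R ∣ expand R b.minFac (cyclotomic n R) :=
      ⟨cyclotomic (n * b.minFac) R, by
        rw [cyclotomic_expand_eq_cyclotomic_mul hp hpn, mul_comm]⟩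
    calc cyclotomic n R ∣ expand R b.minFac (cyclotomic n R) := h2
      _ ∣ expand R b.minFac (expand R m (cyclotomic n R)) := _root_.map_dvd (expand R b.minFac) h1
      _ = expand R (b.minFac * m) (cyclotomic n R) := by rw [expand_expand]
      _ = expand R b (cyclotomic n R) := by rw [← hm]

/-- Main auxiliary statement, phrased in terms of `AdjoinRoot`. -/
private theorem main_aux {R : Type*} [CommRing R] (n k b : ℕ) (hn : 0 < n) (hk : 0 < k)
    (hb : 0 < b) (hbn : Nat.Coprime b n) (hbR : IsUnit (b : R)) :
    ∃ F : AdjoinRoot (cyclotomic n R ^ k) →ₐ[R] AdjoinRoot (cyclotomic n R ^ k),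
      F (AdjoinRoot.root (cyclotomic n R ^ k)) = (AdjoinRoot.root (cyclotomic n R ^ k)) ^ b ∧
      Function.Bijective F := by
  have hmonic : (cyclotomic n R ^ k).Monic := (cyclotomic.monic n R).pow k
  set A := AdjoinRoot (cyclotomic n R ^ k) with hA
  set x : A := AdjoinRoot.root (cyclotomic n R ^ k) with hxdef
  have hxp : (aeval x) (cyclotomic n R ^ k) = 0 := by
    rw [hxdef, AdjoinRoot.aeval_eq, AdjoinRoot.mk_self]
  have hxΦ : (aeval x) (cyclotomic n R) ^ k = 0 := by
    rw [← map_pow]; exact hxp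
  obtain ⟨g, hg⟩ : cyclotomic n R ∣ expand R b (cyclotomic n R) := cyc_dvd_expand R n b hb hbn
  have hFwd : (aeval (x ^ b)) (cyclotomic n R ^ k) = 0 := by
    rw [map_pow, ← expand_aeval, hg, map_mul, mul_pow, hxΦ, zero_mul]
  set F : A →ₐ[R] A := AdjoinRoot.liftAlgHom (cyclotomic n R ^ k) (Algebra.ofId R A) (x ^ b) hFwd with hF
  have hFx : F x = x ^ b := AdjoinRoot.liftAlgHom_root _ _ _ hFwd
  -- `b` is a unit in `A`
  have hbA : IsUnit (b : A) := by
    have h' := hbR.map (algebraMap R A)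
    rwa [map_natCast] at h'
  -- choose `c, m` with `b*c = 1 + n*m`
  obtain ⟨c, m, hcm⟩ : ∃ c m : ℕ, b * c = 1 + n * m := by
    have ht : 0 < n.totient := Nat.totient_pos.mpr hn
    have hmod := Nat.ModEq.pow_totient hbn
    have h3 : 1 ≤ b ^ n.totient := Nat.one_le_pow _ _ hb
    obtain ⟨m, hm2⟩ := (Nat.modEq_iff_dvd' h3).mp hmod.symm
    refine ⟨b ^ (n.totient - 1), m, ?_⟩
    have h1 : b * b ^ (n.totient - 1) = b ^ n.totient := by
      rw [← pow_succ']
      congr 1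
      omega
    rw [h1]
    omega
  -- nilpotency facts
  have hXn : IsNilpotent (x ^ n - 1) := by
    refine ⟨k, ?_⟩
    obtain ⟨g₂, hg₂⟩ := cyclotomic.dvd_X_pow_sub_one n R
    have hxeval : x ^ n - 1 = (aeval x) ((X : R[X]) ^ n - 1) := by
      rw [map_sub, map_pow, aeval_X, map_one]
    rw [hxeval, ← map_pow, hg₂, mul_pow, map_mul, hxp, zero_mul]
  have hpow_nil : ∀ j : ℕ, IsNilpotent (x ^ (n * j) - 1) := by
    intro j
    have hdvd2 : x ^ n - 1 ∣ x ^ (n * j) - 1 := by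
      have h' := sub_dvd_pow_sub_pow (x ^ n) 1 j
      rwa [one_pow, ← pow_mul] at h'
    obtain ⟨s, hs⟩ := hdvd2
    rw [hs]
    exact (Commute.all _ _).isNilpotent_mul_right hXn
  -- the subalgebra generated by x^b
  set S := Algebra.adjoin R ({x ^ b} : Set A) with hS
  have hxbS : x ^ b ∈ S := Algebra.subset_adjoin (Set.mem_singleton _)
  have hbS : IsUnit (b : S) := by
    have h' := hbR.map (algebraMap R S)
    rwa [map_natCast] at h'
  have coe_nil : ∀ s : S, IsNilpotent ((s : A)) → IsNilpotent s := by
    rintro s ⟨T, hT⟩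
    refine ⟨T, ?_⟩
    apply Subtype.ext
    push_cast
    exact hT
  set wS : S := ⟨(x ^ b) ^ (n * m), pow_mem hxbS _⟩ with hwS
  have hwnil : IsNilpotent (wS - 1) := by
    apply coe_nil
    have h1 : ((wS - 1 : S) : A) = (x ^ b) ^ (n * m) - 1 := by
      push_cast [hwS]
      ring
    rw [h1, ← pow_mul, show b * (n * m) = n * (m * b) by ring]
    exact hpow_nil (m * b)
  obtain ⟨T, hT⟩ := hwnil
  obtain ⟨yS, hyb, hynil⟩ := exists_unip_root hbS T (wS - 1) hT
  have hybw : yS ^ b = wS := by rw [hyb]; ring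
  -- identify the coercion of yS with x^(n*m)
  have h₁ : IsNilpotent ((yS : A) - 1) := by
    have h' := hynil.map (Subalgebra.val S)
    simpa using h'
  have hyA : ((yS : A)) ^ b = (x ^ (n * m)) ^ b := by
    have h1 : ((yS : A)) ^ b = ((wS : A)) := by
      rw [← hybw]
      push_cast
      ring
    have h2 : ((wS : A)) = (x ^ (n * m)) ^ b := by
      show (x ^ b) ^ (n * m) = (x ^ (n * m)) ^ b
      rw [← pow_mul, ← pow_mul, mul_comm]
    rw [h1, h2]
  have hyeq : ((yS : A)) = x ^ (n * m) :=
    unip_root_unique hbA h₁ (hpow_nil m) hyA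
  -- x is in S
  have hyunit : IsUnit yS := by
    have h' : yS = (yS - 1) + 1 := by ring
    rw [h']
    exact hynil.isUnit_add_one
  have hxS : x ∈ S := by
    set iS : S := ((hyunit.unit⁻¹ : Sˣ) : S) with hiS
    have hmul : yS * iS = 1 := by
      have h' := hyunit.unit.mul_inv
      rw [hyunit.unit_spec] at h'
      exact h'
    have hmulA : ((yS : A)) * ((iS : A)) = 1 := by
      have h' := congrArg (Subalgebra.val S) hmul
      simpa using h'
    have hxx : ((x ^ b) ^ c) * (iS : A) = x := by
      rw [← pow_mul, hcm, pow_add, pow_one, ← hyeq, mul_assoc, hmulA, mul_one]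
    rw [← hxx]
    exact mul_mem (pow_mem hxbS c) iS.2
  -- surjectivity
  have hsurj : Function.Surjective F := by
    rw [← AlgHom.range_eq_top]
    rw [eq_top_iff, ← AdjoinRoot.adjoinRoot_eq_top (f := cyclotomic n R ^ k),
      Algebra.adjoin_le_iff, Set.singleton_subset_iff]
    have hle : S ≤ F.range := by
      rw [hS, Algebra.adjoin_le_iff, Set.singleton_subset_iff]
      exact ⟨x, hFx⟩
    exact hle hxS
  -- injectivity
  haveI : Module.Finite R A := Module.Finite.of_basis (AdjoinRoot.powerBasis' hmonic).basis
  have hinj : Function.Injective F :=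
    OrzechProperty.injective_of_surjective_endomorphism F.toLinearMap hsurj
  exact ⟨F, hFx, hinj, hsurj⟩

/-- The Frobenius homomorphism `F_b : ℤ[1/b][q]/(Φ_n(q)^k) → ℤ[1/b][q]/(Φ_n(q)^k)`
induced by `q ↦ q^b` (for `b` coprime to `n`) is a ring isomorphism.  Here `R` is
the localization `ℤ[1/b]` of `ℤ` away from `b`. -/
theorem stmt6 (n k b : ℕ) (hn : 0 < n) (hk : 0 < k) (hb : 0 < b) (hbn : Nat.Coprime b n)
    (R : Type*) [CommRing R] [IsLocalization.Away ((b : ℤ)) R] :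
    ∃ F : (Polynomial R ⧸ Ideal.span {cyclotomic n R ^ k}) →+*
          (Polynomial R ⧸ Ideal.span {cyclotomic n R ^ k}),
      F (Ideal.Quotient.mk (Ideal.span {cyclotomic n R ^ k}) X) =
          (Ideal.Quotient.mk (Ideal.span {cyclotomic n R ^ k}) X) ^ b ∧
      Function.Bijective F := by
  have hbR : IsUnit (b : R) := by
    have h1 := IsLocalization.map_units (M := Submonoid.powers ((b : ℤ))) R
      ⟨(b : ℤ), Submonoid.mem_powers _⟩
    simpa using h1
  obtain ⟨F, hF1, hF2⟩ := main_aux n k b hn hk hb hbn hbR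
  exact ⟨F.toRingHom, hF1, hF2⟩
end

section
/- Let b be a positive integer, let n_1, …, n_s be pairwise distinct positive integers each coprime to b, let k_1, …, k_s be positive integers, and set f(q) := ∏_{i=1}^s Φ_{n_i}(q)^{k_i}. Then the substitution q ↦ q^b induces a well-defined ring endomorphism of ℤ[1/b][q]/(f(q)) (since f(q) divides f(q^b) in ℤ[1/b][q]), and this endomorphism is a ring isomorphism. -/
open Polynomial
set_option maxHeartbeats 1000000

section NilpotentRoots

variable {A : Type*} [CommRing A]

/-- Binomial: `(1+x)^m = 1 + m*x + x^2*s`. -/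
lemma aux_one_add_pow (x : A) (m : ℕ) : ∃ s, (1 + x) ^ m = 1 + m * x + x ^ 2 * s := by
  induction m with
  | zero => exact ⟨0, by push_cast; ring⟩
  | succ m ih =>
    obtain ⟨s, hs⟩ := ih
    exact ⟨m + s + s * x, by rw [pow_succ, hs]; push_cast; ring⟩

/-- If `b` is invertible and `d` nilpotent with `(1+d)^b = 1`, then `d = 0`. -/
lemma aux_unipotent_pow_eq_one (b : ℕ) (hb : IsUnit (b : A)) {d : A}
    (hd : IsNilpotent d) (h : (1 + d) ^ b = 1) : d = 0 := by
  obtain ⟨s, hs⟩ := aux_one_add_pow d b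
  have hbd : (b : A) * d = -(d ^ 2 * s) := by
    have := hs.symm.trans h
    linear_combination this
  have hdr : ∃ r, d = d ^ 2 * r := by
    refine ⟨-(↑hb.unit⁻¹ * s), ?_⟩
    have h1 : (↑hb.unit⁻¹ : A) * ((b : A) * d) = d := by
      rw [← mul_assoc, IsUnit.val_inv_mul, one_mul]
    rw [hbd] at h1
    linear_combination -h1
  obtain ⟨r, hr⟩ := hdr
  obtain ⟨N, hN⟩ := hd
  have key : ∀ j : ℕ, d = d ^ (j + 1) * r ^ j := by
    intro j
    induction j with
    | zero => simp
    | succ j ihj =>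
      calc d = d ^ (j + 1) * r ^ j := ihj
        _ = d ^ j * d * r ^ j := by ring
        _ = d ^ j * (d ^ 2 * r) * r ^ j := by rw [← hr]
        _ = d ^ (j + 1 + 1) * r ^ (j + 1) := by ring
  have := key N
  rw [pow_succ'] at this
  rw [this, hN]
  ring

/-- Uniqueness of unipotent `b`-th roots. -/
lemma aux_unipotent_pow_inj (b : ℕ) (hb : IsUnit (b : A)) {w w' : A}
    (hw : IsNilpotent w) (hw' : IsNilpotent w') (h : (1 + w) ^ b = (1 + w') ^ b) :
    w = w' := by
  have hu' : IsUnit (1 + w') := hw'.isUnit_one_add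
  set e : A := ↑hu'.unit⁻¹ with he
  have hee : (1 + w') * e = 1 := hu'.mul_val_inv
  have hd : (1 + w) * e - 1 = (w - w') * e := by
    calc (1 + w) * e - 1 = (1 + w) * e - (1 + w') * e := by rw [hee]
      _ = (w - w') * e := by ring
  have hdnil : IsNilpotent ((1 + w) * e - 1) := by
    rw [hd]
    exact (Commute.all _ _).isNilpotent_mul_right ((Commute.all _ _).isNilpotent_sub hw hw')
  have hdpow : (1 + ((1 + w) * e - 1)) ^ b = 1 := by
    have h1 : 1 + ((1 + w) * e - 1) = (1 + w) * e := by ring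
    rw [h1, mul_pow, h, ← mul_pow, hee, one_pow]
  have h0 := aux_unipotent_pow_eq_one b hb hdnil hdpow
  have h1 : (1 + w) * e = 1 := by linear_combination h0
  have h2 : (1 + w) * e = (1 + w') * e := h1.trans hee.symm
  have h3 : ((1 + w) * e) * (1 + w') = ((1 + w') * e) * (1 + w') := by rw [h2]
  have h4 : (1 + w) * ((1 + w') * e) = (1 + w') * ((1 + w') * e) := by
    linear_combination h3
  rw [hee, mul_one, mul_one] at h4
  linear_combination h4

/-- Existence of unipotent `b`-th roots: if `b` is invertible and `v` nilpotent,
then `1 + v` has a `b`-th root of the form `1 + w` with `w` nilpotent. -/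
lemma aux_exists_unipotent_root (b : ℕ) (hb : IsUnit (b : A)) {v : A}
    (hv : IsNilpotent v) : ∃ w : A, IsNilpotent w ∧ (1 + w) ^ b = 1 + v := by
  obtain ⟨N, hN⟩ := hv
  induction N using Nat.strong_induction_on generalizing v with
  | _ N ih =>
  match N, hN with
  | 0, hN =>
    have h01 : (1 : A) = 0 := by simpa using hN
    exact ⟨0, ⟨1, by simp⟩, by
      have : Subsingleton A := subsingleton_of_zero_eq_one h01.symm
      exact Subsingleton.elim _ _⟩
  | 1, hN =>
    rw [pow_one] at hN
    exact ⟨0, ⟨1, by simp⟩, by simp [hN]⟩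
  | (N + 2), hN =>
    set i : A := ↑hb.unit⁻¹ with hi
    have hbi : (b : A) * i = 1 := hb.mul_val_inv
    set w₀ : A := i * v with hw₀
    have hw₀nil : IsNilpotent w₀ :=
      (Commute.all _ _).isNilpotent_mul_left ⟨N + 2, hN⟩
    obtain ⟨s, hs⟩ := aux_one_add_pow w₀ b
    have hs' : (1 + w₀) ^ b = 1 + v + v ^ 2 * (i ^ 2 * s) := by
      rw [hs, hw₀]
      have : (b : A) * (i * v) = v := by
        rw [← mul_assoc, hbi, one_mul]
      rw [this]; ring
    have hu₀ : IsUnit (1 + w₀) := hw₀nil.isUnit_one_add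
    set e : A := ↑hu₀.unit⁻¹ with he
    have hee : (1 + w₀) * e = 1 := hu₀.mul_val_inv
    set v' : A := -(v ^ 2 * (i ^ 2 * s)) * e ^ b with hv'
    have hv'eq : (1 + v) * e ^ b = 1 + v' := by
      have h1 : (1 + v) = (1 + w₀) ^ b - v ^ 2 * (i ^ 2 * s) := by
        linear_combination -hs'
      have h2 : ((1 + w₀) * e) ^ b = 1 := by rw [hee, one_pow]
      rw [mul_pow] at h2
      calc (1 + v) * e ^ b = ((1 + w₀) ^ b - v ^ 2 * (i ^ 2 * s)) * e ^ b := by rw [← h1]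
        _ = (1 + w₀) ^ b * e ^ b - v ^ 2 * (i ^ 2 * s) * e ^ b := by ring
        _ = 1 + v' := by rw [h2, hv']; ring
    have hv'pow : v' ^ (N + 1) = 0 := by
      have h2 : 2 * (N + 1) = (N + 2) + N := by ring
      have : v' ^ (N + 1) = v ^ (2 * (N + 1)) * (-(i ^ 2 * s) * e ^ b) ^ (N + 1) := by
        rw [hv']; ring
      rw [this, h2, pow_add, hN, zero_mul, zero_mul]
    obtain ⟨w₁, hw₁nil, hw₁⟩ := ih (N + 1) (by omega) hv'pow
    refine ⟨w₀ + w₁ + w₀ * w₁, ?_, ?_⟩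
    · exact (Commute.all _ _).isNilpotent_add
        ((Commute.all _ _).isNilpotent_add hw₀nil hw₁nil)
        ((Commute.all _ _).isNilpotent_mul_right hw₀nil)
    · have hfac : 1 + (w₀ + w₁ + w₀ * w₁) = (1 + w₀) * (1 + w₁) := by ring
      rw [hfac, mul_pow, hw₁]
      have : (1 + w₀) ^ b * ((1 + v) * e ^ b) = (1 + v) * ((1 + w₀) * e) ^ b := by
        rw [mul_pow]; ring
      rw [hv'eq] at this
      rw [this, hee, one_pow, mul_one]

/-- Inverse of `1 + a` for nilpotent `a`, as an explicit geometric sum. -/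
lemma aux_geom_inv (a : A) (N : ℕ) (haN : a ^ N = 0) :
    (1 + a) * (∑ j ∈ Finset.range N, (-a) ^ j) = 1 := by
  have h := geom_sum_mul (-a) N
  have hneg : (-a) ^ N = (-1) ^ N * a ^ N := by rw [neg_pow]
  rw [hneg, haN, mul_zero, zero_sub] at h
  linear_combination -h

end NilpotentRoots

lemma aux_cyclotomic_dvd_expand (m : ℕ) : ∀ b : ℕ, 0 < b → Nat.Coprime m b →
    cyclotomic m ℤ ∣ expand ℤ b (cyclotomic m ℤ) := by
  intro b
  induction b using Nat.strong_induction_on with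
  | _ b ih =>
  intro hb hcop
  rcases eq_or_ne b 1 with rfl | hb1
  · rw [expand_one]
  · have hp : Nat.Prime b.minFac := Nat.minFac_prime hb1
    obtain ⟨t, ht⟩ : b.minFac ∣ b := Nat.minFac_dvd b
    have ht0 : 0 < t := by
      rcases Nat.eq_zero_or_pos t with rfl | h
      · omega
      · exact h
    have htb : t < b := by nlinarith [hp.two_le]
    have hpn : ¬ b.minFac ∣ m := by
      intro hdvd
      have h2 : b.minFac ∣ 1 := hcop ▸ Nat.dvd_gcd hdvd (Nat.minFac_dvd b)
      have := Nat.le_of_dvd one_pos h2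
      have := hp.two_le
      omega
    have h1 : expand ℤ b (cyclotomic m ℤ) =
        expand ℤ t (expand ℤ b.minFac (cyclotomic m ℤ)) := by
      rw [expand_expand, mul_comm t b.minFac, ← ht]
    rw [h1, cyclotomic_expand_eq_cyclotomic_mul hp hpn, map_mul]
    have hcop' : Nat.Coprime m t := hcop.coprime_dvd_right ⟨b.minFac, by rw [mul_comm]; exact ht⟩
    exact Dvd.dvd.mul_left (ih t htb ht0 hcop') _

/-- Let `b` be positive, `n 0, …, n (s-1)` pairwise distinct positive integers coprime to `b`,
`k i` positive integers, and `f = ∏ Φ_{n i}^{k i}`.  Then the substitution `q ↦ q^b` induces a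
well-defined ring endomorphism of `ℤ[1/b][q]/(f)`, and it is a ring isomorphism.
Here `R` is the localization `ℤ[1/b]` of `ℤ` away from `b`. -/
theorem stmt7 (b s : ℕ) (hb : 0 < b) (n : Fin s → ℕ) (k : Fin s → ℕ)
    (hn : ∀ i, 0 < n i) (hk : ∀ i, 0 < k i)
    (hinj : Function.Injective n) (hcop : ∀ i, Nat.Coprime (n i) b)
    (R : Type*) [CommRing R] [IsLocalization.Away ((b : ℤ)) R] :
    ∃ F : (Polynomial R ⧸ Ideal.span {∏ i : Fin s, cyclotomic (n i) R ^ k i}) →+*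
          (Polynomial R ⧸ Ideal.span {∏ i : Fin s, cyclotomic (n i) R ^ k i}),
      F (Ideal.Quotient.mk (Ideal.span {∏ i : Fin s, cyclotomic (n i) R ^ k i}) X) =
          (Ideal.Quotient.mk (Ideal.span {∏ i : Fin s, cyclotomic (n i) R ^ k i}) X) ^ b ∧
      Function.Bijective F := by
  classical
  set f : R[X] := ∏ i : Fin s, cyclotomic (n i) R ^ k i with hf
  set I : Ideal R[X] := Ideal.span {f} with hI
  let π : R[X] →ₐ[R] (R[X] ⧸ I) := Ideal.Quotient.mkₐ R I
  set x : R[X] ⧸ I := π X with hx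
  -- b is a unit in R
  have hbR : IsUnit ((b : ℕ) : R) := by
    have h1 : IsUnit (algebraMap ℤ R (b : ℤ)) := IsLocalization.Away.algebraMap_isUnit (b : ℤ)
    have h2 : algebraMap ℤ R (b : ℤ) = ((b : ℕ) : R) := by push_cast; simp
    rwa [h2] at h1
  have hbA : IsUnit ((b : ℕ) : R[X] ⧸ I) := by
    have := hbR.map (algebraMap R (R[X] ⧸ I))
    rwa [map_natCast] at this
  -- f divides expand b f
  have hdvd : f ∣ expand R b f := by
    have hZ : (∏ i : Fin s, cyclotomic (n i) ℤ ^ k i) ∣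
        expand ℤ b (∏ i : Fin s, cyclotomic (n i) ℤ ^ k i) := by
      rw [map_prod]
      refine Finset.prod_dvd_prod_of_dvd _ _ fun i _ => ?_
      rw [map_pow]
      exact pow_dvd_pow_of_dvd (aux_cyclotomic_dvd_expand (n i) b hb (hcop i)) _
    have hmap := Polynomial.map_dvd (Int.castRingHom R) hZ
    rw [Polynomial.map_prod] at hmap
    simp only [Polynomial.map_pow, map_cyclotomic_int] at hmap
    rw [map_expand, Polynomial.map_prod] at hmap
    simp only [Polynomial.map_pow, map_cyclotomic_int] at hmap
    exact hmap
  have hfI : f ∈ I := Ideal.subset_span rfl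
  -- the endomorphism
  have hker : ∀ a ∈ I, (aeval (x ^ b) : R[X] →ₐ[R] R[X] ⧸ I) a = 0 := by
    intro a ha
    rw [hI, Ideal.mem_span_singleton] at ha
    obtain ⟨g, rfl⟩ := ha
    rw [map_mul]
    suffices h : (aeval (x ^ b)) f = 0 by rw [h, zero_mul]
    have hxb : x ^ b = π (X ^ b) := by rw [hx, map_pow]
    rw [hxb, aeval_algHom_apply]
    have haev : aeval ((X : R[X]) ^ b) f = expand R b f := by
      rw [expand_eq_comp_X_pow, aeval_def, Polynomial.comp, Polynomial.algebraMap_eq]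
    rw [haev]
    obtain ⟨g', hg'⟩ := hdvd
    rw [hg', map_mul]
    have : π f = 0 := by
      rw [show π f = Ideal.Quotient.mk I f from rfl, Ideal.Quotient.eq_zero_iff_mem]
      exact hfI
    rw [this, zero_mul]
  set Falg : (R[X] ⧸ I) →ₐ[R] (R[X] ⧸ I) := Ideal.Quotient.liftₐ I (aeval (x ^ b)) hker
    with hFalg
  have hFmk : ∀ p : R[X], Falg (π p) = aeval (x ^ b) p := by
    intro p
    rw [hFalg, Ideal.Quotient.liftₐ_apply]
    exact Ideal.Quotient.lift_mk I _ _
  have hFX : Falg x = x ^ b := by rw [hx, hFmk X, aeval_X]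
  -- M and the arithmetic
  set M : ℕ := ∏ i : Fin s, n i with hM
  have hM1 : 1 ≤ M := Finset.prod_pos (fun i _ => hn i)
  have hcopM : Nat.Coprime b M :=
    Nat.Coprime.prod_right fun i _ => (hcop i).symm
  obtain ⟨b', c, hbc⟩ : ∃ b' c, b * b' = 1 + c * M := by
    rcases eq_or_lt_of_le hM1 with h1 | h1
    · exact ⟨1, b - 1, by rw [← h1]; omega⟩
    · obtain ⟨b', -, hb'⟩ := Nat.exists_mul_mod_eq_one_of_coprime hcopM h1
      refine ⟨b', b * b' / M, ?_⟩
      have hdm := Nat.div_add_mod (b * b') M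
      rw [hb'] at hdm
      calc b * b' = M * (b * b' / M) + 1 := hdm.symm
        _ = 1 + (b * b' / M) * M := by ring
  -- u := x^M - 1 is nilpotent
  have hfd : f ∣ (X ^ M - 1 : R[X]) ^ (∑ i : Fin s, k i) := by
    rw [← Finset.prod_pow_eq_pow_sum]
    refine Finset.prod_dvd_prod_of_dvd _ _ fun i _ => ?_
    refine pow_dvd_pow_of_dvd ?_ _
    refine (cyclotomic.dvd_X_pow_sub_one (n i) R).trans ?_
    obtain ⟨t, htt⟩ : n i ∣ M := Finset.dvd_prod_of_mem n (Finset.mem_univ i)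
    have := sub_dvd_pow_sub_pow ((X : R[X]) ^ (n i)) 1 t
    rwa [one_pow, ← pow_mul, ← htt] at this
  set u : R[X] ⧸ I := x ^ M - 1 with hu
  have hunil : IsNilpotent u := by
    refine ⟨∑ i : Fin s, k i, ?_⟩
    have h1 : u ^ (∑ i : Fin s, k i) = π ((X ^ M - 1) ^ (∑ i : Fin s, k i)) := by
      rw [hu, hx, map_pow, map_sub, map_pow, map_one]
    rw [h1, show π ((X ^ M - 1) ^ (∑ i : Fin s, k i)) =
      Ideal.Quotient.mk I ((X ^ M - 1) ^ (∑ i : Fin s, k i)) from rfl,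
      Ideal.Quotient.eq_zero_iff_mem, hI, Ideal.mem_span_singleton]
    exact hfd
  have h1u : (1 : R[X] ⧸ I) + u = x ^ M := by rw [hu]; ring
  -- the range of Falg
  set S : Subalgebra R (R[X] ⧸ I) := Falg.range with hS
  have hmemS : ∀ j : ℕ, x ^ (b * j) ∈ S := by
    intro j
    refine ⟨π (X ^ j), ?_⟩
    show Falg (π (X ^ j)) = x ^ (b * j)
    rw [hFmk, map_pow, aeval_X, ← pow_mul]
  set v : R[X] ⧸ I := x ^ (M * b) - 1 with hv
  have hvS : v ∈ S := by
    rw [hv]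
    refine sub_mem ?_ (one_mem S)
    rw [mul_comm M b]
    exact hmemS M
  have hvnil : IsNilpotent v := by
    have : u ∣ v := by
      have := sub_dvd_pow_sub_pow (x ^ M) 1 b
      rwa [one_pow, ← pow_mul, ← hu, ← hv] at this
    obtain ⟨t, htt⟩ := this
    rw [htt]
    exact (Commute.all _ _).isNilpotent_mul_right hunil
  have h1v : (1 : R[X] ⧸ I) + v = x ^ (M * b) := by rw [hv]; ring
  -- a := (1+v)^c - 1
  set a : R[X] ⧸ I := (1 + v) ^ c - 1 with ha
  have haS : a ∈ S := sub_mem (pow_mem (add_mem (one_mem S) hvS) c) (one_mem S)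
  have hanil : IsNilpotent a := by
    have : v ∣ a := by
      have := sub_dvd_pow_sub_pow (1 + v) 1 c
      rwa [one_pow, add_sub_cancel_left, ← ha] at this
    obtain ⟨t, htt⟩ := this
    rw [htt]
    exact (Commute.all _ _).isNilpotent_mul_right hvnil
  obtain ⟨Na, hNa⟩ := hanil
  -- z := inverse of (1+v)^c
  set z : R[X] ⧸ I := ∑ j ∈ Finset.range Na, (-a) ^ j with hz
  have hzS : z ∈ S := Subalgebra.sum_mem S fun j _ => pow_mem (neg_mem haS) j
  have hzinv : (1 + v) ^ c * z = 1 := by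
    have := aux_geom_inv a Na hNa
    rwa [show (1 : R[X] ⧸ I) + a = (1 + v) ^ c by rw [ha]; ring] at this
  have hz1nil : IsNilpotent (z - 1) := by
    have h1 : z - 1 = -z * a := by
      have h2 : z * ((1 + v) ^ c * z) = z * 1 := by rw [hzinv]
      calc z - 1 = z - (1 + v) ^ c * z := by rw [hzinv]
        _ = -z * ((1 + v) ^ c - 1) := by ring
        _ = -z * a := by rw [ha]
    rw [h1]
    exact (Commute.all _ _).isNilpotent_mul_left ⟨Na, hNa⟩
  have hz1S : z - 1 ∈ S := sub_mem hzS (one_mem S)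
  -- b-th root of z in S
  have hbS : IsUnit ((b : ℕ) : ↥S) := by
    have := hbR.map (algebraMap R ↥S)
    rwa [map_natCast] at this
  have hz1nilS : IsNilpotent (⟨z - 1, hz1S⟩ : ↥S) := by
    obtain ⟨N, hN⟩ := hz1nil
    refine ⟨N, Subtype.ext ?_⟩
    simp only [SubmonoidClass.coe_pow, ZeroMemClass.coe_zero]
    exact hN
  obtain ⟨ω, hωnil, hωpow⟩ := aux_exists_unipotent_root b hbS hz1nilS
  set w : R[X] ⧸ I := (ω : R[X] ⧸ I) with hw
  have hwS : w ∈ S := ω.2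
  have hwnil : IsNilpotent w := hωnil.map (Subalgebra.val S)
  have hwpow : (1 + w) ^ b = z := by
    have := congrArg (Subalgebra.val S) hωpow
    simpa using this
  -- key identity
  have hkey : (1 + w) * (1 + u) ^ c = 1 := by
    have hdnil : IsNilpotent ((1 + w) * (1 + u) ^ c - 1) := by
      have heq : (1 + w) * (1 + u) ^ c - 1 = w * (1 + u) ^ c + ((1 + u) ^ c - 1) := by ring
      rw [heq]
      refine (Commute.all _ _).isNilpotent_add
        ((Commute.all _ _).isNilpotent_mul_right hwnil) ?_
      have : u ∣ (1 + u) ^ c - 1 := by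
        have := sub_dvd_pow_sub_pow (1 + u) 1 c
        rwa [one_pow, add_sub_cancel_left] at this
      obtain ⟨t, htt⟩ := this
      rw [htt]
      exact (Commute.all _ _).isNilpotent_mul_right hunil
    have hdpow : (1 + ((1 + w) * (1 + u) ^ c - 1)) ^ b = 1 := by
      rw [show (1 : R[X] ⧸ I) + ((1 + w) * (1 + u) ^ c - 1) = (1 + w) * (1 + u) ^ c by ring]
      rw [mul_pow, hwpow]
      have hub : ((1 + u) ^ c) ^ b = (1 + v) ^ c := by
        rw [h1u, h1v, ← pow_mul, ← pow_mul, ← pow_mul]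
        ring_nf
      rw [hub, mul_comm, hzinv]
    have h0 := aux_unipotent_pow_eq_one b hbA hdnil hdpow
    linear_combination h0
  -- x ∈ S
  have hxS : x ∈ S := by
    have hxeq : x = x ^ (b * b') * (1 + w) := by
      have h1 : x ^ (b * b') = x * (1 + u) ^ c := by
        rw [hbc, h1u, ← pow_mul, pow_add, pow_one, mul_comm c M]
      rw [h1]
      calc x = x * 1 := by ring
        _ = x * ((1 + w) * (1 + u) ^ c) := by rw [hkey]
        _ = x * (1 + u) ^ c * (1 + w) := by ring
    rw [hxeq]
    exact mul_mem (hmemS b') (add_mem (one_mem S) hwS)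
  -- surjectivity
  have hsurj : Function.Surjective Falg := by
    intro zz
    obtain ⟨p, rfl⟩ := Ideal.Quotient.mk_surjective zz
    have hmk : (Ideal.Quotient.mk I) p = aeval x p := by
      rw [hx, aeval_algHom_apply, aeval_X_left_apply]
      rfl
    rw [hmk]
    have hle : Algebra.adjoin R {x} ≤ S := Algebra.adjoin_le (by simpa using hxS)
    have : aeval x p ∈ S := by
      refine hle ?_
      rw [Algebra.adjoin_singleton_eq_range_aeval]
      exact ⟨p, rfl⟩
    obtain ⟨y, hy⟩ := this
    exact ⟨y, hy⟩
  -- injectivity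
  have hmonic : f.Monic := monic_prod_of_monic _ _ fun i _ => (cyclotomic.monic _ _).pow _
  have hfin : Module.Finite R (R[X] ⧸ I) :=
    Module.Finite.of_basis (AdjoinRoot.powerBasis' hmonic).basis
  have hinjF : Function.Injective Falg :=
    OrzechProperty.injective_of_surjective_endomorphism Falg.toLinearMap hsurj
  refine ⟨Falg.toRingHom, ?_, hinjF, hsurj⟩
  show Falg (π X) = (π X) ^ b
  rw [← hx, hFX]
end

section
/- Let b be a positive integer and define the cyclotomic completion ℤ[1/b][q]^{ℕ_b} as the inverse limit of the rings ℤ[1/b][q]/(f(q)), where f ranges over the multiplicative set of finite products ∏_i Φ_{n_i}(q)^{k_i} with all n_i coprime to b, directed by divisibility (realized concretely as the subring of the product ∏_f ℤ[1/b][q]/(f(q)) consisting of families compatible under the natural projection maps). Then the Frobenius endomorphism F_b of ℤ[1/b][q]^{ℕ_b} induced componentwise by q ↦ q^b (well-defined since f(q) divides f(q^b) in ℤ[1/b][q] for every such f) is a ring isomorphism. -/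
open Polynomial

set_option synthInstance.maxHeartbeats 1000000
set_option maxHeartbeats 1000000

/-- The multiplicative set of finite products `∏_i Φ_{n_i}(q)^{k_i}` with all `n_i`
positive and coprime to `b`. -/
noncomputable def cycSet (b : ℕ) (R : Type) [CommRing R] : Submonoid (Polynomial R) :=
  Submonoid.closure {f | ∃ n : ℕ, 0 < n ∧ Nat.Coprime n b ∧ f = cyclotomic n R}

/-- The cyclotomic completion `ℤ[1/b][q]^{ℕ_b}`, realized concretely as the subring of
`∏_f R[q]/(f(q))` (where `f` ranges over `cycSet b R`) consisting of the families
compatible under the natural projection maps. -/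
noncomputable def cycCompletion (b : ℕ) (R : Type) [CommRing R] :
    Subring (∀ f : cycSet b R, Polynomial R ⧸ Ideal.span {(f : Polynomial R)}) where
  carrier := {x | ∀ (f g : cycSet b R) (h : (f : Polynomial R) ∣ (g : Polynomial R)),
    Ideal.Quotient.factor (S := Ideal.span {(g : Polynomial R)}) (T := Ideal.span {(f : Polynomial R)})
      (Ideal.span_singleton_le_span_singleton.mpr h) (x g) = x f}
  mul_mem' := by
    intro a c ha hc f g h
    simp only [Pi.mul_apply, map_mul]
    rw [ha f g h, hc f g h]
  one_mem' := by
    intro f g h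
    simp
  add_mem' := by
    intro a c ha hc f g h
    simp only [Pi.add_apply, map_add]
    rw [ha f g h, hc f g h]
  zero_mem' := by
    intro f g h
    simp
  neg_mem' := by
    intro a ha f g h
    simp only [Pi.neg_apply, map_neg]
    rw [ha f g h]

namespace CycAux

open Ideal

variable {b : ℕ} {R : Type} [CommRing R]

theorem cyclo_dvd_expand (n : ℕ) (b : ℕ) (h : Nat.Coprime n b) :
    cyclotomic n R ∣ expand R b (cyclotomic n R) := by
  induction b using induction_on_primes with
  | zero =>
    have hn : n = 1 := by simpa [Nat.coprime_zero_right] using h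
    subst hn
    simp only [cyclotomic_one, map_sub, expand_X, pow_zero, map_one, sub_self]
    exact dvd_zero _
  | one => rw [expand_one]
  | prime_mul p a hp ih =>
    have hna : n.Coprime a := h.coprime_dvd_right (Dvd.intro_left p rfl)
    have hnp : n.Coprime p := h.coprime_dvd_right (Dvd.intro a rfl)
    have hpn : ¬ p ∣ n := (Nat.Prime.coprime_iff_not_dvd hp).mp hnp.symm
    have h1 : cyclotomic n R ∣ expand R p (cyclotomic n R) := by
      rw [cyclotomic_expand_eq_cyclotomic_mul hp hpn]
      exact Dvd.intro_left _ rfl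
    have h2 : expand R a (cyclotomic n R) ∣ expand R a (expand R p (cyclotomic n R)) :=
      _root_.map_dvd _ h1
    have h3 := (ih hna).trans h2
    rwa [expand_expand, mul_comm a p] at h3


theorem monic_of_mem {f : Polynomial R} (hf : f ∈ cycSet b R) : f.Monic := by
  induction hf using Submonoid.closure_induction with
  | mem x hx => obtain ⟨n, hn, hcop, rfl⟩ := hx; exact cyclotomic.monic n R
  | one => exact monic_one
  | mul x y hx hy ihx ihy => exact ihx.mul ihy

theorem dvd_expand_of_mem {f : Polynomial R} (hf : f ∈ cycSet b R) : f ∣ expand R b f := by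
  induction hf using Submonoid.closure_induction with
  | mem x hx => obtain ⟨n, hn, hcop, rfl⟩ := hx; exact cyclo_dvd_expand n b hcop
  | one => exact one_dvd _
  | mul x y hx hy ihx ihy => rw [_root_.map_mul]; exact mul_dvd_mul ihx ihy

theorem dvd_pow_of_mem {f : Polynomial R} (hf : f ∈ cycSet b R) :
    ∃ N K : ℕ, 0 < N ∧ Nat.Coprime N b ∧ 0 < K ∧ f ∣ ((X : Polynomial R) ^ N - 1) ^ K := by
  induction hf using Submonoid.closure_induction with
  | mem x hx =>
    obtain ⟨n, hn, hcop, rfl⟩ := hx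
    exact ⟨n, 1, hn, hcop, one_pos, by simpa using cyclotomic.dvd_X_pow_sub_one n R⟩
  | one => exact ⟨1, 1, one_pos, Nat.coprime_one_left b, one_pos, one_dvd _⟩
  | mul x y hx hy ihx ihy =>
    obtain ⟨N₁, K₁, hN₁, hc₁, hK₁, hd₁⟩ := ihx
    obtain ⟨N₂, K₂, hN₂, hc₂, hK₂, hd₂⟩ := ihy
    refine ⟨N₁ * N₂, K₁ + K₂, Nat.mul_pos hN₁ hN₂, Nat.Coprime.mul hc₁ hc₂,
      by omega, ?_⟩
    have e1 : (X : Polynomial R) ^ N₁ - 1 ∣ X ^ (N₁ * N₂) - 1 := by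
      have := sub_dvd_pow_sub_pow ((X : Polynomial R) ^ N₁) 1 N₂
      rwa [one_pow, ← pow_mul] at this
    have e2 : (X : Polynomial R) ^ N₂ - 1 ∣ X ^ (N₁ * N₂) - 1 := by
      have := sub_dvd_pow_sub_pow ((X : Polynomial R) ^ N₂) 1 N₁
      rwa [one_pow, ← pow_mul, mul_comm] at this
    rw [pow_add]
    exact mul_dvd_mul (hd₁.trans (pow_dvd_pow_of_dvd e1 K₁))
      (hd₂.trans (pow_dvd_pow_of_dvd e2 K₂))

/-- The Frobenius map on a quotient component. -/
noncomputable def psi (b : ℕ) (f : Polynomial R) (hf : f ∣ expand R b f) :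
    Polynomial R ⧸ Ideal.span {f} →+* Polynomial R ⧸ Ideal.span {f} :=
  Ideal.Quotient.lift _
    ((Ideal.Quotient.mk (Ideal.span {f})).comp (expand R b).toRingHom)
    (fun a ha => by
      rw [RingHom.comp_apply, Ideal.Quotient.eq_zero_iff_mem, Ideal.mem_span_singleton]
      exact hf.trans (_root_.map_dvd (expand R b) (Ideal.mem_span_singleton.mp ha)))

theorem psi_mk (b : ℕ) (f : Polynomial R) (hf : f ∣ expand R b f) (p : Polynomial R) :
    psi b f hf (Ideal.Quotient.mk _ p) = Ideal.Quotient.mk _ (expand R b p) := rfl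

theorem psi_factor {f g : Polynomial R} (hf : f ∣ expand R b f) (hg : g ∣ expand R b g)
    (hfg : f ∣ g) (x : Polynomial R ⧸ Ideal.span {g}) :
    Ideal.Quotient.factor (Ideal.span_singleton_le_span_singleton.mpr hfg)
      (psi b g hg x) =
    psi b f hf (Ideal.Quotient.factor
      (Ideal.span_singleton_le_span_singleton.mpr hfg) x) := by
  obtain ⟨p, rfl⟩ := Ideal.Quotient.mk_surjective x
  rw [psi_mk, Ideal.Quotient.factor_mk, Ideal.Quotient.factor_mk, psi_mk]


theorem binom {A : Type*} [CommRing A] (x y : A) (n : ℕ) :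
    ∃ c : A, (x + y) ^ n = x ^ n + n * x ^ (n - 1) * y + y ^ 2 * c := by
  induction n with
  | zero => exact ⟨0, by simp⟩
  | succ n ih =>
    obtain ⟨c, hc⟩ := ih
    cases n with
    | zero => exact ⟨0, by push_cast; ring⟩
    | succ m =>
      refine ⟨(m + 1 : ℕ) * x ^ m + c * (x + y), ?_⟩
      rw [pow_succ, hc]
      simp only [Nat.succ_sub_one]
      push_cast
      ring

theorem geo {A : Type*} [CommRing A] (K : ℕ) (x : A) (hx : x ^ K = 0) :
    (1 + x) * (∑ i ∈ Finset.range K, (-x) ^ i) = 1 := by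
  have h := geom_sum_mul (-x) K
  have hnx : (-x) ^ K = 0 := by rw [neg_pow, hx, mul_zero]
  rw [hnx] at h
  linear_combination -h


theorem psi_bijective (hb : 0 < b) (hbu : IsUnit ((b : ℕ) : R)) {f : Polynomial R}
    (hf : f ∈ cycSet b R) (hdvd : f ∣ expand R b f) :
    Function.Bijective (psi b f hdvd) := by
  obtain ⟨N, K, hN, hNb, hK, hfd⟩ := dvd_pow_of_mem hf
  set A := Polynomial R ⧸ Ideal.span {f} with hA
  set ψ := psi b f hdvd with hψ
  set q : A := Ideal.Quotient.mk (Ideal.span {f}) X with hqdef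
  set t : A := q ^ N - 1 with ht
  have htK : t ^ K = 0 := by
    have hthis : t ^ K = Ideal.Quotient.mk (Ideal.span {f}) (((X : Polynomial R) ^ N - 1) ^ K) := by
      rw [ht, hqdef]; simp only [map_pow, map_sub, map_one]
    rw [hthis, Ideal.Quotient.eq_zero_iff_mem]
    exact Ideal.mem_span_singleton.mpr hfd
  have hconst : ∀ r : R, Ideal.Quotient.mk (Ideal.span {f}) (C r) ∈ ψ.range :=
    fun r => ⟨Ideal.Quotient.mk (Ideal.span {f}) (C r), by rw [hψ, psi_mk, expand_C]⟩
  have hqb : q ^ b ∈ ψ.range :=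
    ⟨Ideal.Quotient.mk (Ideal.span {f}) X, by rw [hψ, psi_mk, expand_X, map_pow, ← hqdef]⟩
  obtain ⟨v, hv⟩ := hbu
  set binv : A := Ideal.Quotient.mk (Ideal.span {f}) (C ((v⁻¹ : Rˣ) : R)) with hbinv
  have hβ : ((b : ℕ) : A) * binv = 1 := by
    have h1 : ((b : ℕ) : A) = Ideal.Quotient.mk (Ideal.span {f}) (C ((b : ℕ) : R)) := by
      rw [C_eq_natCast, map_natCast]
    rw [h1, hbinv, ← _root_.map_mul, ← C_mul, ← hv, Units.mul_inv, map_one, map_one]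
  have hbinvB : binv ∈ ψ.range := hconst _
  set s : A := (q ^ N) ^ b - 1 with hs
  have hsB : s ∈ ψ.range := by
    refine ⟨Ideal.Quotient.mk (Ideal.span {f}) (X ^ N - 1), ?_⟩
    rw [hψ, psi_mk]
    simp only [map_sub, map_pow, map_one, expand_X]
    rw [hs, ← hqdef, pow_right_comm]
  have main : ∀ i : ℕ, ∃ r a : A, r ∈ ψ.range ∧ t = r + t ^ (i + 1) * a := by
    intro i
    induction i with
    | zero => exact ⟨0, t ^ 0, zero_mem _, by ring⟩
    | succ i ih =>
      obtain ⟨r, a, hrB, hra⟩ := ih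
      have hrK : r ^ K = 0 := by
        have hfac : r = t * (1 - t ^ i * a) := by linear_combination (-1 : A) * hra
        rw [hfac, mul_pow, htK, zero_mul]
      set u : A := 1 + r with hu
      set w : A := ∑ k ∈ Finset.range K, (-r) ^ k with hw
      have huw : u * w = 1 := geo K r hrK
      have hwB : w ∈ ψ.range := sum_mem (fun k _ => pow_mem (neg_mem hrB) k)
      have huB : u ∈ ψ.range := add_mem (one_mem _) hrB
      obtain ⟨c, hc⟩ := binom u (t ^ (i + 1) * a) b
      have hsc : s + 1 = u ^ b + ((b : ℕ) : A) * u ^ (b - 1) * (t ^ (i + 1) * a)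
          + (t ^ (i + 1) * a) ^ 2 * c := by
        have h1 : u + t ^ (i + 1) * a = q ^ N := by
          rw [hu]; linear_combination -hra + ht
        calc s + 1 = (q ^ N) ^ b := by rw [hs]; ring
          _ = (u + t ^ (i + 1) * a) ^ b := by rw [h1]
          _ = _ := hc
      refine ⟨r + (s + 1 - u ^ b) * binv * w ^ (b - 1),
        -(t ^ i * a ^ 2 * c * binv * w ^ (b - 1)), ?_, ?_⟩
      · exact add_mem hrB (mul_mem (mul_mem (sub_mem (add_mem hsB (one_mem _))
          (pow_mem huB b)) hbinvB) (pow_mem hwB _))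
      · have hpow : t ^ (i + 1 + 1) * -(t ^ i * a ^ 2 * c * binv * w ^ (b - 1))
            = -((t ^ (i + 1) * a) ^ 2 * c * binv * w ^ (b - 1)) := by
          have h2 : t ^ (i + 1 + 1) * t ^ i = t ^ (i + 1) * t ^ (i + 1) := by
            rw [← pow_add, ← pow_add]; congr 1; omega
          linear_combination (-(a ^ 2 * c * binv * w ^ (b - 1))) * h2
        have h3 : u ^ (b - 1) * w ^ (b - 1) = 1 := by rw [← mul_pow, huw, one_pow]
        rw [hpow]
        linear_combination hra + (-(binv * w ^ (b - 1))) * hsc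
          + (-(t ^ (i + 1) * a)) * h3
          + (-(t ^ (i + 1) * a * u ^ (b - 1) * w ^ (b - 1))) * hβ
  have htB : t ∈ ψ.range := by
    obtain ⟨r, a, hrB, hra⟩ := main (K - 1)
    have heq : t = r := by
      rw [show K - 1 + 1 = K from by omega, htK, zero_mul, add_zero] at hra
      exact hra
    exact heq ▸ hrB
  set z : A := ∑ k ∈ Finset.range K, (-t) ^ k with hz
  have hzB : z ∈ ψ.range := sum_mem fun k _ => pow_mem (neg_mem htB) k
  have h1t : (1 + t) * z = 1 := geo K t htK
  have htot : 0 < Nat.totient N := Nat.totient_pos.mpr hN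
  set cc := b ^ (Nat.totient N - 1) with hcc
  have hbc : b * cc = b ^ Nat.totient N := by
    rw [hcc, ← pow_succ']
    congr 1
    omega
  have hmod : b ^ Nat.totient N ≡ 1 [MOD N] := Nat.ModEq.pow_totient hNb.symm
  have hple : 1 ≤ b ^ Nat.totient N := Nat.one_le_pow _ _ hb
  obtain ⟨m, hm⟩ := (Nat.modEq_iff_dvd' hple).mp hmod.symm
  have hbc2 : b * cc = 1 + N * m := by omega
  have hqeq : q = (q ^ b) ^ cc * z ^ m := by
    have e2 : (q ^ N) ^ m * z ^ m = 1 := by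
      rw [← mul_pow, show q ^ N = 1 + t from by rw [ht]; ring, h1t, one_pow]
    rw [← pow_mul, hbc2, pow_add, pow_one, pow_mul]
    linear_combination (-q) * e2
  have hqB : q ∈ ψ.range := by
    rw [hqeq]; exact mul_mem (pow_mem hqb cc) (pow_mem hzB m)
  have hsurj : Function.Surjective ψ := by
    intro x
    obtain ⟨p, rfl⟩ := Ideal.Quotient.mk_surjective x
    suffices h : Ideal.Quotient.mk (Ideal.span {f}) p ∈ ψ.range from RingHom.mem_range.mp h
    induction p using Polynomial.induction_on' with
    | add p1 p2 hp1 hp2 => rw [map_add]; exact add_mem hp1 hp2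
    | monomial n r =>
      rw [← C_mul_X_pow_eq_monomial, _root_.map_mul, map_pow, ← hqdef]
      exact mul_mem (hconst r) (pow_mem hqB n)
  haveI : Module.Finite R A :=
    Module.Finite.of_basis (AdjoinRoot.powerBasis' (monic_of_mem hf)).basis
  let ψL : A →ₗ[R] A :=
    { toFun := ψ
      map_add' := fun x y => map_add ψ x y
      map_smul' := fun r x => by
        obtain ⟨p, rfl⟩ := Ideal.Quotient.mk_surjective x
        simp only [RingHom.id_apply]
        have hsm : ∀ pp : Polynomial R, r • (Ideal.Quotient.mk (Ideal.span {f}) pp)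
            = Ideal.Quotient.mk (Ideal.span {f}) (C r * pp) := fun pp => by
          rw [← Ideal.Quotient.mkₐ_eq_mk (R₁ := R), ← map_smul, smul_eq_C_mul]
        rw [hψ, hsm, psi_mk, psi_mk, hsm, _root_.map_mul, expand_C] }
  have hinj : Function.Injective ψ :=
    OrzechProperty.injective_of_surjective_endomorphism ψL hsurj
  exact ⟨hinj, hsurj⟩

end CycAux

/-- The Frobenius endomorphism of the cyclotomic completion `ℤ[1/b][q]^{ℕ_b}`, induced
componentwise by `q ↦ q^b`, is a ring isomorphism.  Here `R` is the localization `ℤ[1/b]`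
of `ℤ` away from `b`. -/
theorem stmt8 (b : ℕ) (hb : 0 < b) (R : Type) [CommRing R] [IsLocalization.Away ((b : ℤ)) R] :
    ∃ F : cycCompletion b R →+* cycCompletion b R,
      (∀ (x : cycCompletion b R) (f : cycSet b R) (p : Polynomial R),
          (x : ∀ f : cycSet b R, Polynomial R ⧸ Ideal.span {(f : Polynomial R)}) f =
            Ideal.Quotient.mk (Ideal.span {(f : Polynomial R)}) p →
          (F x : ∀ f : cycSet b R, Polynomial R ⧸ Ideal.span {(f : Polynomial R)}) f =
            Ideal.Quotient.mk (Ideal.span {(f : Polynomial R)})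
              (Polynomial.eval₂ Polynomial.C (Polynomial.X ^ b) p)) ∧
      Function.Bijective F := by
  classical
  have hbu : IsUnit ((b : ℕ) : R) := by
    have h := IsLocalization.Away.algebraMap_isUnit (S := R) ((b : ℤ))
    rw [algebraMap_int_eq] at h
    simpa using h
  have hdvd : ∀ f : cycSet b R, (f : Polynomial R) ∣ expand R b (f : Polynomial R) :=
    fun f => CycAux.dvd_expand_of_mem f.2
  have hbij : ∀ f : cycSet b R, Function.Bijective (CycAux.psi b f.1 (hdvd f)) :=
    fun f => CycAux.psi_bijective hb hbu f.2 (hdvd f)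
  let Ψ : (∀ f : cycSet b R, Polynomial R ⧸ Ideal.span {(f : Polynomial R)}) →+*
      (∀ f : cycSet b R, Polynomial R ⧸ Ideal.span {(f : Polynomial R)}) :=
    Pi.ringHom fun f => (CycAux.psi b f.1 (hdvd f)).comp (Pi.evalRingHom _ f)
  have hmem : ∀ x : cycCompletion b R, Ψ x.1 ∈ cycCompletion b R := by
    intro x f g h
    show Ideal.Quotient.factor _ (CycAux.psi b g.1 (hdvd g) (x.1 g))
      = CycAux.psi b f.1 (hdvd f) (x.1 f)
    rw [CycAux.psi_factor (hdvd f) (hdvd g) h, x.2 f g h]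
  let F : cycCompletion b R →+* cycCompletion b R :=
    RingHom.codRestrict (Ψ.comp (Subring.subtype _)) _ (fun x => hmem x)
  refine ⟨F, ?_, ?_, ?_⟩
  · intro x f p hp
    show CycAux.psi b f.1 (hdvd f) (x.1 f) = _
    rw [hp, CycAux.psi_mk]
    exact congrArg _ (congrFun (Polynomial.coe_expand R b) p)
  · intro x y hxy
    apply Subtype.ext; funext f
    exact (hbij f).1 (congrFun (congrArg Subtype.val hxy) f)
  · intro y
    let e : ∀ f : cycSet b R, (Polynomial R ⧸ Ideal.span {(f : Polynomial R)}) ≃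
        (Polynomial R ⧸ Ideal.span {(f : Polynomial R)}) :=
      fun f => Equiv.ofBijective _ (hbij f)
    have happ : ∀ (f : cycSet b R) (u), CycAux.psi b f.1 (hdvd f) ((e f).symm u) = u :=
      fun f u => (e f).apply_symm_apply u
    refine ⟨⟨fun f => (e f).symm (y.1 f), ?_⟩, ?_⟩
    · intro f g h
      apply (hbij f).1
      show CycAux.psi b f.1 (hdvd f) (Ideal.Quotient.factor _ ((e g).symm (y.1 g)))
        = CycAux.psi b f.1 (hdvd f) ((e f).symm (y.1 f))
      rw [← CycAux.psi_factor (hdvd f) (hdvd g) h, happ g, happ f, y.2 f g h]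
    · apply Subtype.ext; funext f
      exact happ f (y.1 f)
end

section
/- Let n and b be coprime positive integers, let k be a positive integer, and let y be an element of the ring ℚ[q]/(Φ_n(q)^k) with y^b = 1. Then y is the image of 1 or of −1 under the quotient map. Moreover, if b is odd then y is the image of 1. -/
open Polynomial

lemma one_add_pow_helper {R : Type*} [CommRing R] (δ : R) (b : ℕ) :
    ∃ u : R, (1 + δ) ^ b = 1 + b * δ + δ ^ 2 * u := by
  induction b with
  | zero => exact ⟨0, by ring⟩
  | succ b ih =>
    obtain ⟨u, hu⟩ := ih
    refine ⟨(b : R) + u + δ * u, ?_⟩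
    rw [pow_succ, hu]
    push_cast
    ring

lemma nilp_unit_root {R : Type*} [CommRing R] [Algebra ℚ R] {δ : R}
    (hδ : IsNilpotent δ) {b : ℕ} (hb : 0 < b) (h : (1 + δ) ^ b = 1) : δ = 0 := by
  obtain ⟨u, hu⟩ := one_add_pow_helper δ b
  rw [h] at hu
  have h2 : δ * (((b : ℕ) : R) + δ * u) = 0 := by linear_combination -hu
  have hbu : IsUnit (((b : ℕ) : R) + δ * u) := by
    have hbQ : IsUnit ((b : ℕ) : R) := by
      have h3 : (algebraMap ℚ R) ((b : ℕ) : ℚ) = ((b : ℕ) : R) := by push_cast; ring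
      rw [← h3]
      exact (isUnit_iff_ne_zero.mpr (by exact_mod_cast hb.ne')).map _
    exact ((Commute.all δ u).isNilpotent_mul_right hδ).isUnit_add_left_of_commute hbQ
      (Commute.all _ _)
  obtain ⟨v, hv⟩ := hbu
  have h4 := congrArg (· * (↑v⁻¹ : R)) h2
  simp only [zero_mul, mul_assoc, ← hv] at h4
  simpa [Units.mul_inv] using h4

/-- If `n` and `b` are coprime positive integers, `k` is a positive integer and
`y ∈ ℚ[q]/(Φ_n(q)^k)` satisfies `y^b = 1`, then `y` is the image of `1` or of `-1`;
moreover if `b` is odd then `y` is the image of `1`. -/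
theorem stmt10 (n b k : ℕ) (hn : 0 < n) (hb : 0 < b) (hk : 0 < k) (hnb : Nat.Coprime n b)
    (y : ℚ[X] ⧸ Ideal.span {cyclotomic n ℚ ^ k}) (hy : y ^ b = 1) :
    (y = Ideal.Quotient.mk (Ideal.span {cyclotomic n ℚ ^ k}) 1 ∨
      y = Ideal.Quotient.mk (Ideal.span {cyclotomic n ℚ ^ k}) (-1)) ∧
    (Odd b → y = Ideal.Quotient.mk (Ideal.span {cyclotomic n ℚ ^ k}) 1) := by
  have hΦirr : Irreducible (cyclotomic n ℚ) := cyclotomic.irreducible_rat hn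
  haveI : Fact (Irreducible (cyclotomic n ℚ)) := ⟨hΦirr⟩
  have hIJ : Ideal.span {cyclotomic n ℚ ^ k} ≤ Ideal.span {cyclotomic n ℚ} :=
    Ideal.span_singleton_le_span_singleton.mpr (dvd_pow_self _ hk.ne')
  let π : (ℚ[X] ⧸ Ideal.span {cyclotomic n ℚ ^ k}) →+* AdjoinRoot (cyclotomic n ℚ) :=
    Ideal.Quotient.factor hIJ
  haveI : CharZero (AdjoinRoot (cyclotomic n ℚ)) :=
    charZero_of_injective_algebraMap (algebraMap ℚ _).injective
  haveI : NeZero ((n : AdjoinRoot (cyclotomic n ℚ))) := ⟨Nat.cast_ne_zero.mpr hn.ne'⟩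
  have hζ : IsPrimitiveRoot (AdjoinRoot.root (cyclotomic n ℚ)) n := by
    rw [← isRoot_cyclotomic_iff (R := AdjoinRoot (cyclotomic n ℚ))]
    have := AdjoinRoot.isRoot_root (cyclotomic n ℚ)
    rwa [map_cyclotomic] at this
  have hxb : (π y) ^ b = 1 := by rw [← map_pow, hy, map_one]
  have hfin : IsOfFinOrder (π y) := isOfFinOrder_iff_pow_eq_one.mpr ⟨b, hb, hxb⟩
  have hdb : orderOf (π y) ∣ b := orderOf_dvd_of_pow_eq_one hxb
  have hd0 : 0 < orderOf (π y) := hfin.orderOf_pos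
  have hnd : n.Coprime (orderOf (π y)) := Nat.Coprime.coprime_dvd_right hdb hnb
  have hmul : orderOf (AdjoinRoot.root (cyclotomic n ℚ) * π y) = n * orderOf (π y) := by
    rw [(Commute.all _ _).orderOf_mul_eq_mul_orderOf_of_coprime
      (by rw [← hζ.eq_orderOf]; exact hnd), ← hζ.eq_orderOf]
  have hprim : IsPrimitiveRoot (AdjoinRoot.root (cyclotomic n ℚ) * π y)
      (n * orderOf (π y)) := hmul ▸ IsPrimitiveRoot.orderOf _
  have hΦne : cyclotomic n ℚ ≠ 0 := cyclotomic_ne_zero n ℚ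
  haveI : FiniteDimensional ℚ (AdjoinRoot (cyclotomic n ℚ)) :=
    (AdjoinRoot.powerBasis hΦne).finite
  have hfr : Module.finrank ℚ (AdjoinRoot (cyclotomic n ℚ)) = n.totient := by
    rw [(AdjoinRoot.powerBasis hΦne).finrank, AdjoinRoot.powerBasis_dim,
      natDegree_cyclotomic]
  have hmin : cyclotomic (n * orderOf (π y)) ℚ =
      minpoly ℚ (AdjoinRoot.root (cyclotomic n ℚ) * π y) :=
    cyclotomic_eq_minpoly_rat hprim (by positivity)
  have hle : (n * orderOf (π y)).totient ≤ n.totient := by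
    rw [← natDegree_cyclotomic (n * orderOf (π y)) ℚ, hmin, ← hfr]
    exact minpoly.natDegree_le _
  have htd : (orderOf (π y)).totient = 1 := by
    rw [Nat.totient_mul hnd] at hle
    have h1 : 0 < n.totient := Nat.totient_pos.mpr hn
    have h2 : 0 < (orderOf (π y)).totient := Nat.totient_pos.mpr hd0
    nlinarith
  have hd2 : orderOf (π y) ∣ 2 := by
    rcases Nat.totient_eq_one_iff.mp htd with h | h <;> rw [h]
    · exact one_dvd _
  have hx2 : (π y) ^ 2 = 1 := orderOf_dvd_iff_pow_eq_one.mp hd2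
  have hx1 : π y = 1 ∨ π y = -1 := by
    have h0 : (π y - 1) * (π y + 1) = 0 := by linear_combination hx2
    rcases mul_eq_zero.mp h0 with h | h
    · exact Or.inl (sub_eq_zero.mp h)
    · exact Or.inr (by linear_combination h)
  -- nontriviality and CharZero of the quotient ring
  have hItop : Ideal.span {cyclotomic n ℚ ^ k} ≠ ⊤ := by
    intro htop
    rw [Ideal.span_singleton_eq_top] at htop
    have := natDegree_eq_zero_of_isUnit htop
    rw [natDegree_pow, natDegree_cyclotomic] at this
    have h1 : 0 < n.totient := Nat.totient_pos.mpr hn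
    exact (Nat.mul_pos hk h1).ne' this
  haveI : Nontrivial (ℚ[X] ⧸ Ideal.span {cyclotomic n ℚ ^ k}) :=
    Ideal.Quotient.nontrivial_iff.mpr hItop
  haveI : CharZero (ℚ[X] ⧸ Ideal.span {cyclotomic n ℚ ^ k}) :=
    charZero_of_injective_algebraMap (algebraMap ℚ _).injective
  -- key lifting step
  have key : ∀ c : ℚ[X] ⧸ Ideal.span {cyclotomic n ℚ ^ k}, π c = 1 → c ^ (2*b) = 1 → c = 1 := by
    intro c hc hcb
    obtain ⟨p, hp⟩ := Ideal.Quotient.mk_surjective (c - 1)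
    have hp0 : Ideal.Quotient.mk (Ideal.span {cyclotomic n ℚ}) p = 0 := by
      have : π (Ideal.Quotient.mk (Ideal.span {cyclotomic n ℚ ^ k}) p) =
          Ideal.Quotient.mk (Ideal.span {cyclotomic n ℚ}) p :=
        Ideal.Quotient.factor_mk hIJ p
      rw [hp] at this
      rw [← this, map_sub, hc, map_one, sub_self]
      rfl
    obtain ⟨g, hg⟩ := Ideal.mem_span_singleton.mp (Ideal.Quotient.eq_zero_iff_mem.mp hp0)
    have hnil : IsNilpotent (c - 1) := by
      refine ⟨k, ?_⟩
      rw [← hp, ← map_pow, Ideal.Quotient.eq_zero_iff_mem, hg, mul_pow]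
      exact Ideal.mem_span_singleton.mpr ⟨g ^ k, rfl⟩
    have hδ : c - 1 = 0 := by
      apply nilp_unit_root hnil (b := 2*b) (by omega)
      rwa [add_sub_cancel]
    linear_combination hδ
  rcases hx1 with h1 | hm1
  · have hy1 : y = 1 := by
      apply key y h1
      rw [mul_comm 2 b, pow_mul, hy, one_pow]
    rw [hy1]
    exact ⟨Or.inl (by rw [map_one]), fun _ => by rw [map_one]⟩
  · have hym : y = -1 := by
      have h2 : π (-y) = 1 := by rw [map_neg, hm1, neg_neg]
      have h3 : (-y) ^ (2*b) = 1 := by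
        rw [pow_mul]
        have hsq : (-y) ^ 2 = y ^ 2 := by ring
        rw [hsq, ← pow_mul, mul_comm 2 b, pow_mul, hy, one_pow]
      have h4 := key (-y) h2 h3
      linear_combination -h4
    constructor
    · exact Or.inr (by rw [hym, map_neg, map_one])
    · intro hodd
      exfalso
      rw [hym] at hy
      obtain ⟨m, hm⟩ := hodd
      rw [hm, pow_add, pow_mul, pow_one] at hy
      have hsq : ((-1 : ℚ[X] ⧸ Ideal.span {cyclotomic n ℚ ^ k})) ^ 2 = 1 := by ring
      rw [hsq, one_pow] at hy
      have h5 : (2 : ℚ[X] ⧸ Ideal.span {cyclotomic n ℚ ^ k}) = 0 := by linear_combination -hy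
      norm_num at h5
end

section
/- Let r be an odd positive integer, let ξ ∈ ℂ be a primitive r-th root of unity, let b be a nonzero integer, and let a be any integer. Set c := gcd(b, r) (taken positive), b' := b/c, r' := r/c, and let b'_* be an integer with b'·b'_* ≡ 1 (mod r'). Then the sum Σ over odd integers n with 0 < n < 2r of ξ^{b(n²−1)/4 + n·a} equals 0 if c does not divide a, and equals (ξ^c)^{−a₁²·b'_*}·γ_b(ξ) if a = c·a₁ for an integer a₁, where γ_b(ξ) := Σ over odd integers n with 0 < n < 2r of ξ^{b(n²−1)/4}. (Note that 4 divides n²−1 for odd n, so all exponents of ξ are integers.) -/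
open Finset

private lemma zpow_congr_aux (r : ℕ) (ξ : ℂ) (h1 : ξ ^ (r:ℤ) = 1) (h0 : ξ ≠ 0) {m n : ℤ}
    (h : (r:ℤ) ∣ m - n) : ξ ^ m = ξ ^ n := by
  obtain ⟨q, hq⟩ := h
  have hm : m = n + (r:ℤ) * q := by linarith
  rw [hm, zpow_add₀ h0, zpow_mul, h1, one_zpow, mul_one]

private lemma reindex_aux (r : ℕ) (f : ℕ → ℂ) :
    ∑ n ∈ (Finset.Ico 1 (2*r)).filter (fun n => Odd n), f n
      = ∑ k ∈ Finset.range r, f (2*k+1) := by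
  have h : (Finset.Ico 1 (2*r)).filter (fun n => Odd n)
      = (Finset.range r).image (fun k => 2*k+1) := by
    ext n
    simp only [Finset.mem_filter, Finset.mem_Ico, Finset.mem_image, Finset.mem_range,
      Nat.odd_iff]
    constructor
    · rintro ⟨⟨h1, h2⟩, h3⟩
      exact ⟨n / 2, by omega, by omega⟩
    · rintro ⟨k, hk, rfl⟩
      omega
  rw [h, Finset.sum_image]
  intro x _ y _ h
  simp only at h
  omega

private lemma sum_shift_aux (r : ℕ) (hr : 0 < r) (F : ℤ → ℂ)
    (H : ∀ m n : ℤ, (r:ℤ) ∣ m - n → F m = F n) (t : ℤ) :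
    ∑ k ∈ Finset.range r, F ((k:ℤ) + t) = ∑ k ∈ Finset.range r, F (k:ℤ) := by
  have one : ∀ (G : ℤ → ℂ), (∀ m n : ℤ, (r:ℤ) ∣ m - n → G m = G n) →
      ∑ k ∈ Finset.range r, G ((k:ℤ) + 1) = ∑ k ∈ Finset.range r, G (k:ℤ) := by
    intro G HG
    have e1 := Finset.sum_range_succ' (fun k : ℕ => G (k:ℤ)) r
    have e2 := Finset.sum_range_succ (fun k : ℕ => G (k:ℤ)) r
    have e3 : G (r:ℤ) = G 0 := HG _ _ ⟨1, by push_cast; ring⟩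
    rw [e2, e3] at e1
    have e4 : ∑ k ∈ Finset.range r, G ((k:ℤ) + 1)
        = ∑ k ∈ Finset.range r, G (((k+1 : ℕ) : ℤ)) := by
      apply Finset.sum_congr rfl; intro k _
      exact congrArg G (by push_cast; ring)
    rw [e4]
    simp only [Nat.cast_zero] at e1
    linear_combination -e1
  have keys : ∀ s : ℕ, ∑ k ∈ Finset.range r, F ((k:ℤ) + s) = ∑ k ∈ Finset.range r, F (k:ℤ) := by
    intro s
    induction s with
    | zero => simp
    | succ s ih =>
        have step : ∑ k ∈ Finset.range r, F ((k:ℤ) + (s+1 : ℕ))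
            = ∑ k ∈ Finset.range r, (fun x : ℤ => F (x + s)) ((k:ℤ) + 1) := by
          apply Finset.sum_congr rfl; intro k _; simp only []; congr 1; push_cast; ring
        rw [step, one (fun x : ℤ => F (x + s)) (by
          intro m n hd
          exact H _ _ (by simpa using hd))]
        exact ih
  have hr0 : (r:ℤ) ≠ 0 := by exact_mod_cast hr.ne'
  set s : ℕ := (t % (r:ℤ)).toNat with hs
  have hnn : (0:ℤ) ≤ t % (r:ℤ) := Int.emod_nonneg t hr0
  have hsc : (s:ℤ) = t % (r:ℤ) := Int.toNat_of_nonneg hnn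
  have hdvd : (r:ℤ) ∣ t - s := by
    rw [hsc, Int.emod_def]
    exact ⟨t / (r:ℤ), by ring⟩
  have : ∑ k ∈ Finset.range r, F ((k:ℤ) + t) = ∑ k ∈ Finset.range r, F ((k:ℤ) + s) := by
    apply Finset.sum_congr rfl; intro k _
    exact H _ _ (by simpa using hdvd)
  rw [this, keys s]

/-- Evaluation of the twisted Gauss sum: for a primitive `r`-th root of unity `ξ` (`r` odd),
`b ≠ 0`, `c = gcd(b,r)`, `b = c·b'`, `r = c·r'` and `b'·b'_* ≡ 1 (mod r')`, the sum
`∑_{n odd, 0<n<2r} ξ^{b(n²-1)/4 + n·a}` vanishes unless `c ∣ a`, and equals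
`(ξ^c)^{-a₁²·b'_*}·γ_b(ξ)` when `a = c·a₁`, where `γ_b(ξ) = ∑_{n odd, 0<n<2r} ξ^{b(n²-1)/4}`. -/
theorem stmt12 (r : ℕ) (hrpos : 0 < r) (hrodd : Odd r)
    (ξ : ℂ) (hξ : IsPrimitiveRoot ξ r)
    (b : ℤ) (hb : b ≠ 0) (a : ℤ)
    (c : ℕ) (hc : (c : ℤ) = Int.gcd b (r : ℤ))
    (b' : ℤ) (hb' : b = (c : ℤ) * b')
    (r' : ℕ) (hr' : r = c * r')
    (bs : ℤ) (hbs : b' * bs ≡ 1 [ZMOD (r' : ℤ)]) :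
    (¬ (c : ℤ) ∣ a →
      ∑ n ∈ (Finset.Ico 1 (2 * r)).filter (fun n => Odd n),
          ξ ^ ((b * ((n : ℤ) ^ 2 - 1)) / 4 + (n : ℤ) * a) = 0) ∧
    (∀ a₁ : ℤ, a = (c : ℤ) * a₁ →
      ∑ n ∈ (Finset.Ico 1 (2 * r)).filter (fun n => Odd n),
          ξ ^ ((b * ((n : ℤ) ^ 2 - 1)) / 4 + (n : ℤ) * a) =
        (ξ ^ (c : ℕ)) ^ (-(a₁ ^ 2) * bs) *
          ∑ n ∈ (Finset.Ico 1 (2 * r)).filter (fun n => Odd n),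
            ξ ^ ((b * ((n : ℤ) ^ 2 - 1)) / 4)) := by
  have hξ0 : ξ ≠ 0 := hξ.ne_zero hrpos.ne'
  have hξ1 : ξ ^ ((r:ℕ):ℤ) = 1 := by
    rw [zpow_natCast]; exact hξ.pow_eq_one
  have zcongr : ∀ m n : ℤ, (r:ℤ) ∣ m - n → ξ ^ m = ξ ^ n :=
    fun m n h => zpow_congr_aux r ξ hξ1 hξ0 h
  have hr'pos : 0 < r' := by
    rcases Nat.eq_zero_or_pos r' with h | h
    · rw [h, Nat.mul_zero] at hr'; omega
    · exact h
  have hr'0 : ((r':ℕ):ℤ) ≠ 0 := by exact_mod_cast hr'pos.ne'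
  have hrc : (r:ℤ) = (c:ℤ) * (r':ℤ) := by exact_mod_cast congrArg (Nat.cast : ℕ → ℤ) hr'
  -- exponent simplification under the reindexing n = 2k+1
  have hexp : ∀ k : ℕ, (b * (((2*k+1 : ℕ) : ℤ) ^ 2 - 1)) / 4 = b * ((k:ℤ) * ((k:ℤ)+1)) := by
    intro k
    have h4 : b * (((2*k+1 : ℕ) : ℤ) ^ 2 - 1) = 4 * (b * ((k:ℤ) * ((k:ℤ)+1))) := by
      push_cast; ring
    rw [h4, Int.mul_ediv_cancel_left _ (by norm_num)]
  have hre : ∀ t : ℤ, ∑ n ∈ (Finset.Ico 1 (2 * r)).filter (fun n => Odd n),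
      ξ ^ ((b * ((n : ℤ) ^ 2 - 1)) / 4 + (n : ℤ) * t)
      = ∑ k ∈ Finset.range r, ξ ^ (b * ((k:ℤ) * ((k:ℤ)+1)) + (2*(k:ℤ)+1) * t) := by
    intro t
    rw [reindex_aux r]
    apply Finset.sum_congr rfl; intro k _
    congr 1
    rw [hexp k]
    push_cast; ring
  have hre0 : ∑ n ∈ (Finset.Ico 1 (2 * r)).filter (fun n => Odd n),
      ξ ^ ((b * ((n : ℤ) ^ 2 - 1)) / 4)
      = ∑ k ∈ Finset.range r, ξ ^ (b * ((k:ℤ) * ((k:ℤ)+1))) := by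
    rw [reindex_aux r]
    apply Finset.sum_congr rfl; intro k _
    congr 1
    rw [hexp k]
  constructor
  · -- vanishing part
    intro hnd
    rw [hre a]
    set F : ℤ → ℂ := fun k => ξ ^ (b * (k * (k+1)) + (2*k+1) * a) with hF
    have HF : ∀ m n : ℤ, (r:ℤ) ∣ m - n → F m = F n := by
      intro m n ⟨q, hq⟩
      apply zcongr
      exact ⟨q * (b * (m + n + 1) + 2 * a), by linear_combination (b * (m+n+1) + 2*a) * hq⟩
    have hshift := sum_shift_aux r hrpos F HF (r':ℤ)
    have hstep : ∀ k : ℤ, F (k + (r':ℤ)) = ξ ^ (2 * (r':ℤ) * a) * F k := by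
      intro k
      have h1 : F (k + (r':ℤ)) = ξ ^ (2 * (r':ℤ) * a + (b * (k * (k+1)) + (2*k+1) * a)) := by
        apply zcongr
        refine ⟨b' * (2*k + (r':ℤ) + 1), ?_⟩
        rw [hrc]
        linear_combination ((2:ℤ)*k + r' + 1) * (r':ℤ) * hb'
      rw [h1, zpow_add₀ hξ0]
    have hsum : ∑ k ∈ Finset.range r, F (k:ℤ)
        = ξ ^ (2 * (r':ℤ) * a) * ∑ k ∈ Finset.range r, F (k:ℤ) := by
      nth_rewrite 1 [← hshift]
      rw [Finset.mul_sum]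
      exact Finset.sum_congr rfl fun k _ => hstep (k:ℤ)
    have hne : ξ ^ (2 * (r':ℤ) * a) ≠ 1 := by
      intro h
      rw [hξ.zpow_eq_one_iff_dvd] at h
      -- r odd, r ∣ 2 r' a  ⟹  r ∣ r' a
      obtain ⟨m, hm⟩ := hrodd
      have hm' : (r:ℤ) = 2 * (m:ℤ) + 1 := by exact_mod_cast hm
      have h2 : (r:ℤ) ∣ ((m:ℤ)+1) * (2 * (r':ℤ) * a) := Dvd.dvd.mul_left h _
      have h3 : (r:ℤ) ∣ (r':ℤ) * a := by
        obtain ⟨u, hu⟩ := h2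
        exact ⟨u - (r':ℤ) * a, by linear_combination hu + (r':ℤ) * a * hm'⟩
      obtain ⟨q, hq⟩ := h3
      apply hnd
      refine ⟨q, ?_⟩
      have : (r':ℤ) * a = (r':ℤ) * ((c:ℤ) * q) := by rw [hq, hrc]; ring
      exact mul_left_cancel₀ hr'0 this
    have hzero : (ξ ^ (2 * (r':ℤ) * a) - 1) * ∑ k ∈ Finset.range r, F (k:ℤ) = 0 := by
      linear_combination -hsum
    rcases mul_eq_zero.mp hzero with h | h
    · exact absurd (sub_eq_zero.mp h) hne
    · exact h
  · -- evaluation part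
    intro a₁ ha
    rw [hre a, hre0]
    have hw : (ξ ^ (c : ℕ)) ^ (-(a₁ ^ 2) * bs) = ξ ^ ((c:ℤ) * (-(a₁ ^ 2) * bs)) := by
      rw [← zpow_natCast ξ c, ← zpow_mul]
    rw [hw]
    set w : ℤ := (c:ℤ) * (-(a₁ ^ 2) * bs) with hwd
    set s : ℤ := bs * a₁ with hsd
    set F0 : ℤ → ℂ := fun k => ξ ^ (b * (k * (k+1))) with hF0
    have HF0 : ∀ m n : ℤ, (r:ℤ) ∣ m - n → F0 m = F0 n := by
      intro m n ⟨q, hq⟩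
      apply zcongr
      exact ⟨q * (b * (m + n + 1)), by linear_combination (b * (m+n+1)) * hq⟩
    have hdvd1 : (r':ℤ) ∣ 1 - b' * bs := hbs.dvd
    obtain ⟨q, hq⟩ := hdvd1
    have hpoint : ∀ k : ℤ, ξ ^ (b * (k * (k+1)) + (2*k+1) * a) = ξ ^ w * F0 (k + s) := by
      intro k
      have h1 : ξ ^ (b * (k * (k+1)) + (2*k+1) * a)
          = ξ ^ (w + b * ((k+s) * ((k+s)+1))) := by
        apply zcongr
        refine ⟨q * (2*k*a₁ + a₁ + bs * a₁^2), ?_⟩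
        rw [hrc, ha, hsd, hwd, hb']
        linear_combination (c:ℤ) * (2*k*a₁ + a₁ + bs*a₁^2) * hq
      rw [h1, zpow_add₀ hξ0]
    calc ∑ k ∈ Finset.range r, ξ ^ (b * ((k:ℤ) * ((k:ℤ)+1)) + (2*(k:ℤ)+1) * a)
        = ∑ k ∈ Finset.range r, ξ ^ w * F0 ((k:ℤ) + s) := by
          exact Finset.sum_congr rfl fun k _ => hpoint (k:ℤ)
      _ = ξ ^ w * ∑ k ∈ Finset.range r, F0 ((k:ℤ) + s) := by rw [Finset.mul_sum]
      _ = ξ ^ w * ∑ k ∈ Finset.range r, F0 (k:ℤ) := by rw [sum_shift_aux r hrpos F0 HF0 s]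
      _ = ξ ^ w * ∑ k ∈ Finset.range r, ξ ^ (b * ((k:ℤ) * ((k:ℤ)+1))) := rfl
end

section
/- Let r be an odd positive integer, let ξ ∈ ℂ be a primitive r-th root of unity, and let b be a nonzero integer. Then the Gauss sum γ_b(ξ) := Σ over odd integers n with 0 < n < 2r of ξ^{b(n²−1)/4} is nonzero. -/
open Finset

/-- For `ξ` a primitive `r`-th root of unity with `r` odd and `b ≠ 0`, the Gauss sum
`γ_b(ξ) = ∑_{n odd, 0<n<2r} ξ^{b(n²-1)/4}` is nonzero. -/
theorem stmt13 (r : ℕ) (hrpos : 0 < r) (hrodd : Odd r)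
    (ξ : ℂ) (hξ : IsPrimitiveRoot ξ r) (b : ℤ) (hb : b ≠ 0) :
    ∑ n ∈ (Finset.Ico 1 (2 * r)).filter (fun n => Odd n),
        ξ ^ ((b * ((n : ℤ) ^ 2 - 1)) / 4) ≠ 0 := by
  haveI : NeZero r := ⟨hrpos.ne'⟩
  have hξr : ξ ^ r = 1 := hξ.pow_eq_one
  have hξ0 : ξ ≠ 0 := by
    intro h
    rw [h, zero_pow hrpos.ne'] at hξr
    exact zero_ne_one hξr
  -- zpow vanishing / periodicity lemmas
  have zone : ∀ a : ℤ, (r : ℤ) ∣ a → ξ ^ a = 1 := by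
    rintro a ⟨c, rfl⟩
    rw [zpow_mul, zpow_natCast, hξr, one_zpow]
  have zeq : ∀ a c : ℤ, (r : ℤ) ∣ (a - c) → ξ ^ a = ξ ^ c := by
    intro a c h
    have h1 : ξ ^ a = ξ ^ (a - c) * ξ ^ c := by
      rw [← zpow_add₀ hξ0]; ring_nf
    rw [h1, zone _ h, one_mul]
  set e : ℤ → ℤ := fun m => b * m * (m + 1) with he
  -- bridge between sums over `ZMod r` and `range r`
  have bridge : ∀ f : ℕ → ℂ, ∑ x : ZMod r, f x.val = ∑ k ∈ range r, f k := by
    intro f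
    refine Finset.sum_nbij' (fun x : ZMod r => x.val) (fun k => (k : ZMod r))
      ?_ ?_ ?_ ?_ ?_
    · intro x _; exact mem_range.mpr (ZMod.val_lt x)
    · intro k _; exact mem_univ _
    · intro x _; exact ZMod.natCast_rightInverse x
    · intro k hk; exact ZMod.val_cast_of_lt (mem_range.mp hk)
    · intro x _; rfl
  -- Step 1: reindex the sum over odd n by n = 2k+1
  have step1 : ∑ n ∈ (Finset.Ico 1 (2 * r)).filter (fun n => Odd n),
      ξ ^ ((b * ((n : ℤ) ^ 2 - 1)) / 4) = ∑ x : ZMod r, ξ ^ e ((x.val : ℤ)) := by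
    rw [bridge (fun k => ξ ^ e ((k : ℤ)))]
    symm
    refine Finset.sum_nbij' (fun k => 2 * k + 1) (fun n => n / 2) ?_ ?_ ?_ ?_ ?_
    · intro k hk
      simp only [mem_filter, mem_Ico]
      refine ⟨⟨by omega, by have := mem_range.mp hk; omega⟩, ⟨k, by omega⟩⟩
    · intro n hn
      simp only [mem_filter, mem_Ico] at hn
      obtain ⟨⟨h1, h2⟩, k, hk⟩ := hn
      simp only [mem_range]
      omega
    · intro k _
      show (2 * k + 1) / 2 = k
      omega
    · intro n hn
      simp only [mem_filter, mem_Ico] at hn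
      obtain ⟨⟨h1, h2⟩, k, hk⟩ := hn
      show 2 * (n / 2) + 1 = n
      omega
    · intro k _
      show ξ ^ e ((k : ℤ)) = ξ ^ ((b * (((2 * k + 1 : ℕ) : ℤ) ^ 2 - 1)) / 4)
      have h4 : b * (((2 * k + 1 : ℕ) : ℤ) ^ 2 - 1) = e (k : ℤ) * 4 := by
        simp only [he]; push_cast; ring
      rw [h4, Int.mul_ediv_cancel _ (by norm_num)]
  rw [step1]
  intro hzero
  -- Step 2: multiply with the "conjugate" sum
  set p : ZMod r → Prop := fun t => ξ ^ (2 * b * (t.val : ℤ)) = 1 with hp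
  have key : (∑ x : ZMod r, ξ ^ e ((x.val : ℤ))) * (∑ y : ZMod r, ξ ^ (-(e (y.val : ℤ)))) =
      ((univ.filter p).card : ℂ) * r := by
    rw [Finset.sum_mul_sum]
    calc (∑ x : ZMod r, ∑ y : ZMod r, ξ ^ e ((x.val : ℤ)) * ξ ^ (-(e (y.val : ℤ))))
        = ∑ y : ZMod r, ∑ x : ZMod r, ξ ^ (e ((x.val : ℤ)) - e ((y.val : ℤ))) := by
          rw [Finset.sum_comm]
          refine Finset.sum_congr rfl fun y _ => Finset.sum_congr rfl fun x _ => ?_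
          rw [← zpow_add₀ hξ0]; ring_nf
      _ = ∑ y : ZMod r, ∑ t : ZMod r, ξ ^ (e (((y + t).val : ℤ)) - e ((y.val : ℤ))) := by
          refine Finset.sum_congr rfl fun y _ => ?_
          exact (Equiv.sum_comp (Equiv.addLeft y)
            (fun x : ZMod r => ξ ^ (e ((x.val : ℤ)) - e ((y.val : ℤ))))).symm
      _ = ∑ t : ZMod r, (ξ ^ e ((t.val : ℤ))) *
            ∑ y : ZMod r, (ξ ^ (2 * b * (t.val : ℤ))) ^ (y.val : ℕ) := by
          rw [Finset.sum_comm]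
          refine Finset.sum_congr rfl fun t _ => ?_
          rw [Finset.mul_sum]
          refine Finset.sum_congr rfl fun y _ => ?_
          have hmod : ((y + t).val : ℕ) ≡ (y.val + t.val) [MOD r] := by
            rw [← ZMod.natCast_eq_natCast_iff]
            push_cast
            rw [ZMod.natCast_rightInverse (y + t), ZMod.natCast_rightInverse y,
              ZMod.natCast_rightInverse t]
          have hdvd0 : (r : ℤ) ∣ (((y + t).val : ℤ) - ((y.val : ℤ) + (t.val : ℤ))) := by
            have := hmod.symm.dvd
            push_cast at this
            exact this
          obtain ⟨c, hc⟩ := hdvd0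
          have hd2 : ((y + t).val : ℤ) = (y.val : ℤ) + (t.val : ℤ) + r * c := by linarith
          have hterm : ξ ^ (e (((y + t).val : ℤ)) - e ((y.val : ℤ))) =
              ξ ^ (e ((t.val : ℤ)) + (2 * b * (t.val : ℤ)) * (y.val : ℤ)) := by
            apply zeq
            refine ⟨b * c * (((y + t).val : ℤ) + (y.val : ℤ) + (t.val : ℤ) + 1), ?_⟩
            simp only [he]
            rw [hd2]
            ring
          rw [hterm, zpow_add₀ hξ0]
          congr 1
          rw [zpow_mul, zpow_natCast]
      _ = ∑ t : ZMod r, (if p t then (r : ℂ) else 0) := by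
          refine Finset.sum_congr rfl fun t _ => ?_
          rw [bridge (fun k => (ξ ^ (2 * b * (t.val : ℤ))) ^ k)]
          by_cases hc : p t
          · rw [if_pos hc]
            simp only [hp] at hc
            rw [hc]
            simp only [one_pow, Finset.sum_const, card_range, nsmul_eq_mul, mul_one]
            have hdvd : (r : ℤ) ∣ 2 * (b * (t.val : ℤ)) :=
              (hξ.zpow_eq_one_iff_dvd _).mp
                (by rw [show (2:ℤ) * (b * (t.val:ℤ)) = 2 * b * (t.val:ℤ) by ring]; exact hc)
            have hcop : IsCoprime ((r : ℕ) : ℤ) ((2 : ℕ) : ℤ) := by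
              rw [Nat.isCoprime_iff_coprime]
              have h2 : ¬ (2 ∣ r) := by
                have := Nat.odd_iff.mp hrodd; omega
              exact ((Nat.prime_two.coprime_iff_not_dvd).mpr h2).symm
            have hcop' : IsCoprime (r : ℤ) (2 : ℤ) := by exact_mod_cast hcop
            have hdvd2 : (r : ℤ) ∣ b * (t.val : ℤ) := hcop'.dvd_of_dvd_mul_left hdvd
            have hdvd3 : (r : ℤ) ∣ e ((t.val : ℤ)) := by
              simp only [he]
              exact Dvd.dvd.mul_right hdvd2 _
            rw [zone _ hdvd3, one_mul]
          · rw [if_neg hc]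
            simp only [hp] at hc
            rw [_root_.geom_sum_eq hc r]
            have hone : (ξ ^ (2 * b * (t.val : ℤ))) ^ r = 1 := by
              rw [← zpow_natCast, ← zpow_mul]
              exact zone _ ⟨2 * b * (t.val : ℤ), by ring⟩
            rw [hone]
            simp
      _ = ((univ.filter p).card : ℂ) * r := by
          rw [← Finset.sum_filter, Finset.sum_const, nsmul_eq_mul]
  rw [hzero, zero_mul] at key
  have hmem : (0 : ZMod r) ∈ univ.filter p := by
    simp only [mem_filter, mem_univ, true_and, hp, ZMod.val_zero]
    simp
  have hcard : (univ.filter p).card ≠ 0 := Finset.card_ne_zero_of_mem hmem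
  exact (mul_ne_zero (Nat.cast_ne_zero.mpr hcard) (Nat.cast_ne_zero.mpr hrpos.ne')) key.symm
end

section
/- Let r be an odd positive integer, let ξ ∈ ℂ be a primitive r-th root of unity, and let b be a nonzero integer. Set γ_b(ξ) := Σ over odd integers n with 0 < n < 2r of ξ^{b(n²−1)/4}. Then Σ over odd integers n with 0 < n < 2r of ξ^{b(n²−1)/4}·(ξ^n + ξ^{−n} − 2) equals 2·(ξ^{−b_*} − 1)·γ_b(ξ) if gcd(b, r) = 1, where b_* is an integer with b·b_* ≡ 1 (mod r), and equals −2·γ_b(ξ) if gcd(b, r) > 1. -/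
open Finset

/-- For `ξ` a primitive `r`-th root of unity with `r` odd and `b ≠ 0`, with
`γ_b(ξ) = ∑_{n odd, 0<n<2r} ξ^{b(n²-1)/4}`, the sum
`∑_{n odd, 0<n<2r} ξ^{b(n²-1)/4}(ξ^n + ξ^{-n} - 2)` equals `2(ξ^{-b_*}-1)γ_b(ξ)` when
`gcd(b,r) = 1` (where `b·b_* ≡ 1 (mod r)`), and equals `-2·γ_b(ξ)` when `gcd(b,r) > 1`. -/
theorem stmt14 (r : ℕ) (hrpos : 0 < r) (hrodd : Odd r)
    (ξ : ℂ) (hξ : IsPrimitiveRoot ξ r) (b : ℤ) (hb : b ≠ 0) :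
    (∀ bs : ℤ, Int.gcd b (r : ℤ) = 1 → b * bs ≡ 1 [ZMOD (r : ℤ)] →
      ∑ n ∈ (Finset.Ico 1 (2 * r)).filter (fun n => Odd n),
          ξ ^ ((b * ((n : ℤ) ^ 2 - 1)) / 4) * (ξ ^ (n : ℤ) + ξ ^ (-(n : ℤ)) - 2) =
        2 * (ξ ^ (-bs) - 1) *
          ∑ n ∈ (Finset.Ico 1 (2 * r)).filter (fun n => Odd n),
            ξ ^ ((b * ((n : ℤ) ^ 2 - 1)) / 4)) ∧
    (1 < Int.gcd b (r : ℤ) →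
      ∑ n ∈ (Finset.Ico 1 (2 * r)).filter (fun n => Odd n),
          ξ ^ ((b * ((n : ℤ) ^ 2 - 1)) / 4) * (ξ ^ (n : ℤ) + ξ ^ (-(n : ℤ)) - 2) =
        -2 *
          ∑ n ∈ (Finset.Ico 1 (2 * r)).filter (fun n => Odd n),
            ξ ^ ((b * ((n : ℤ) ^ 2 - 1)) / 4)) := by
  haveI : NeZero r := ⟨hrpos.ne'⟩
  have hξ0 : ξ ≠ 0 := by
    intro h
    have := hξ.pow_eq_one
    rw [h, zero_pow hrpos.ne'] at this
    exact zero_ne_one this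
  -- congruent exponents give equal powers
  have hcong : ∀ a a' : ℤ, (r : ℤ) ∣ (a - a') → ξ ^ a = ξ ^ a' := by
    intro a a' h
    have h1 : ξ ^ (a - a') = 1 := (hξ.zpow_eq_one_iff_dvd _).mpr h
    have : ξ ^ a = ξ ^ (a' + (a - a')) := by ring_nf
    rw [this, zpow_add₀ hξ0, h1, mul_one]
  set e : ZMod r → ℂ := fun x => ξ ^ (x.val : ℤ) with he
  have hze : ∀ a : ℤ, ξ ^ a = e ((a : ZMod r)) := by
    intro a
    apply hcong
    rw [← ZMod.intCast_zmod_eq_zero_iff_dvd]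
    push_cast
    rw [ZMod.natCast_val, ZMod.cast_id, sub_self]
  have hmul : ∀ u v : ZMod r, e (u + v) = e u * e v := by
    intro u v
    have h1 : ((((u.val : ℤ) + (v.val : ℤ)) : ℤ) : ZMod r) = u + v := by
      push_cast
      rw [ZMod.natCast_val, ZMod.natCast_val, ZMod.cast_id, ZMod.cast_id]
    calc e (u + v) = e (((((u.val : ℤ) + (v.val : ℤ)) : ℤ) : ZMod r)) := by rw [h1]
      _ = ξ ^ ((u.val : ℤ) + (v.val : ℤ)) := (hze _).symm
      _ = ξ ^ (u.val : ℤ) * ξ ^ (v.val : ℤ) := zpow_add₀ hξ0 _ _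
      _ = e u * e v := rfl
  have he0 : e 0 = 1 := by simp [he]
  -- reindex the odd sum by k ↦ 2k+1
  have hsum : ∀ g : ℕ → ℂ,
      ∑ n ∈ (Finset.Ico 1 (2 * r)).filter (fun n => Odd n), g n
        = ∑ k ∈ range r, g (2 * k + 1) := by
    intro g
    refine (Finset.sum_nbij' (fun k => 2 * k + 1) (fun n => (n - 1) / 2) ?_ ?_ ?_ ?_ ?_).symm
    · intro k hk
      simp only [Finset.mem_range] at hk
      simp only [Finset.mem_filter, Finset.mem_Ico]
      exact ⟨⟨by omega, by omega⟩, k, by ring⟩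
    · intro n hn
      simp only [Finset.mem_filter, Finset.mem_Ico] at hn
      obtain ⟨⟨h1, h2⟩, t, ht⟩ := hn
      simp only [Finset.mem_range]; omega
    · intro k hk; omega
    · intro n hn
      simp only [Finset.mem_filter, Finset.mem_Ico] at hn
      obtain ⟨⟨h1, h2⟩, t, ht⟩ := hn
      omega
    · intro k hk; rfl
  -- reindex a range r sum to a ZMod r sum
  have hzsum : ∀ F : ZMod r → ℂ, ∑ k ∈ range r, F (k : ZMod r) = ∑ x : ZMod r, F x := by
    intro F
    refine Finset.sum_nbij' (fun k => ((k : ZMod r))) (fun x => x.val) ?_ ?_ ?_ ?_ ?_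
    · intro k _; exact mem_univ _
    · intro x _; simp [Finset.mem_range, ZMod.val_lt]
    · intro k hk; simp only [Finset.mem_range] at hk; exact ZMod.val_cast_of_lt hk
    · intro x _; exact ZMod.natCast_rightInverse x
    · intro k _; rfl
  -- exponent simplification
  have hdiv : ∀ k : ℕ, (b * (((2 * k + 1 : ℕ) : ℤ) ^ 2 - 1)) / 4 = b * k * (k + 1) := by
    intro k
    have h4 : b * (((2 * k + 1 : ℕ) : ℤ) ^ 2 - 1) = 4 * (b * k * (k + 1)) := by
      push_cast; ring
    rw [h4, Int.mul_ediv_cancel_left _ (by norm_num)]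
  set β : ZMod r := (b : ZMod r) with hβ
  set A : ℂ := ∑ x : ZMod r, e (β * x * (x + 1) + (2 * x + 1)) with hA
  set B : ℂ := ∑ x : ZMod r, e (β * x * (x + 1) - (2 * x + 1)) with hB
  set G : ℂ := ∑ x : ZMod r, e (β * x * (x + 1)) with hG
  -- the gamma sum equals G
  have hγ : ∑ n ∈ (Finset.Ico 1 (2 * r)).filter (fun n => Odd n),
      ξ ^ ((b * ((n : ℤ) ^ 2 - 1)) / 4) = G := by
    rw [hsum]
    have hk : ∀ k : ℕ, ξ ^ ((b * (((2 * k + 1 : ℕ) : ℤ) ^ 2 - 1)) / 4)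
        = (fun x : ZMod r => e (β * x * (x + 1))) ((k : ZMod r)) := by
      intro k
      simp only
      rw [hdiv k, hze]
      congr 1
      push_cast [hβ]; ring
    rw [Finset.sum_congr rfl (fun k _ => hk k),
      hzsum (fun x : ZMod r => e (β * x * (x + 1))), hG]
  -- the main sum equals A + B - 2G
  have hT : ∑ n ∈ (Finset.Ico 1 (2 * r)).filter (fun n => Odd n),
      ξ ^ ((b * ((n : ℤ) ^ 2 - 1)) / 4) * (ξ ^ (n : ℤ) + ξ ^ (-(n : ℤ)) - 2)
      = A + B - 2 * G := by
    rw [hsum]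
    have hterm : ∀ k : ℕ,
        ξ ^ ((b * (((2 * k + 1 : ℕ) : ℤ) ^ 2 - 1)) / 4) *
          (ξ ^ (((2 * k + 1 : ℕ) : ℤ)) + ξ ^ (-((2 * k + 1 : ℕ) : ℤ)) - 2)
        = (fun x : ZMod r => e (β * x * (x + 1) + (2 * x + 1))
            + e (β * x * (x + 1) - (2 * x + 1)) - 2 * e (β * x * (x + 1))) ((k : ZMod r)) := by
      intro k
      simp only
      have e1 : ξ ^ ((b * (((2 * k + 1 : ℕ) : ℤ) ^ 2 - 1)) / 4)
          = e (β * (k : ZMod r) * ((k : ZMod r) + 1)) := by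
        rw [hdiv k, hze]; congr 1; push_cast [hβ]; ring
      have e2 : ξ ^ (((2 * k + 1 : ℕ) : ℤ)) = e (2 * (k : ZMod r) + 1) := by
        rw [hze]; congr 1; push_cast; ring
      have e3 : ξ ^ (-((2 * k + 1 : ℕ) : ℤ)) = e (-(2 * (k : ZMod r) + 1)) := by
        rw [hze]; congr 1; push_cast; ring
      rw [e1, e2, e3]
      have m1 : e (β * (k : ZMod r) * ((k : ZMod r) + 1) + (2 * (k : ZMod r) + 1))
          = e (β * (k : ZMod r) * ((k : ZMod r) + 1)) * e (2 * (k : ZMod r) + 1) := hmul _ _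
      have m2 : e (β * (k : ZMod r) * ((k : ZMod r) + 1) - (2 * (k : ZMod r) + 1))
          = e (β * (k : ZMod r) * ((k : ZMod r) + 1)) * e (-(2 * (k : ZMod r) + 1)) := by
        rw [sub_eq_add_neg]; exact hmul _ _
      rw [m1, m2]; ring
    rw [Finset.sum_congr rfl (fun k _ => hterm k),
      hzsum (fun x : ZMod r => e (β * x * (x + 1) + (2 * x + 1))
            + e (β * x * (x + 1) - (2 * x + 1)) - 2 * e (β * x * (x + 1)))]
    rw [hA, hB, hG, Finset.sum_sub_distrib, Finset.sum_add_distrib, ← Finset.mul_sum]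
  -- B = A
  have hBA : B = A := by
    rw [hB, hA]
    rw [← Equiv.sum_comp (Equiv.subLeft (-1 : ZMod r))
      (fun x => e (β * x * (x + 1) - (2 * x + 1)))]
    apply Finset.sum_congr rfl
    intro x _
    simp only [Equiv.subLeft_apply]
    congr 1
    ring
  constructor
  · -- gcd = 1 case
    intro bs _ hbs
    set c : ZMod r := (bs : ZMod r) with hc
    have hbc : β * c = 1 := by
      have := (ZMod.intCast_eq_intCast_iff _ _ _).mpr hbs
      push_cast at this
      rw [hβ, hc]; exact this
    have hshift : G = A * e c := by
      rw [hG, ← Equiv.sum_comp (Equiv.addRight c) (fun x => e (β * x * (x + 1)))]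
      rw [hA, Finset.sum_mul]
      apply Finset.sum_congr rfl
      intro x _
      simp only [Equiv.coe_addRight]
      rw [← hmul]
      congr 1
      linear_combination (2 * x + 1 + c) * hbc
    have hcc : e (-c) * e c = 1 := by rw [← hmul, neg_add_cancel, he0]
    have hAval : A = e (-c) * G := by
      rw [hshift, mul_comm A (e c), ← mul_assoc, hcc, one_mul]
    have hxc : ξ ^ (-bs) = e (-c) := by
      rw [hze]; congr 1; push_cast [hc]; ring
    rw [hT, hγ, hBA, hAval, hxc]
    ring
  · -- gcd > 1 case
    intro hgcd
    set d : ℕ := Int.gcd b (r : ℤ) with hd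
    have hdr : d ∣ r := Int.natCast_dvd_natCast.mp (Int.gcd_dvd_right _ _)
    have hdb : (d : ℤ) ∣ b := Int.gcd_dvd_left _ _
    set m : ℕ := r / d with hm
    have hrm : r = d * m := (Nat.mul_div_cancel' hdr).symm
    have hm0 : 0 < m := by
      rcases Nat.eq_zero_or_pos m with h | h
      · rw [h, Nat.mul_zero] at hrm; omega
      · exact h
    have hmr : m < r := by
      have : 1 * m < d * m := (Nat.mul_lt_mul_right hm0).mpr hgcd
      omega
    have hrbm : (r : ℤ) ∣ b * m := by
      obtain ⟨b', hb'⟩ := hdb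
      refine ⟨b', ?_⟩
      rw [hb', hrm]; push_cast; ring
    set μ : ZMod r := (m : ZMod r) with hμ
    have hβμ : β * μ = 0 := by
      rw [hβ, hμ]
      have : (((b * m : ℤ)) : ZMod r) = 0 := (ZMod.intCast_zmod_eq_zero_iff_dvd _ _).mpr hrbm
      push_cast at this
      exact this
    have hshift : A = A * e (2 * μ) := by
      conv_lhs => rw [hA, ← Equiv.sum_comp (Equiv.addRight μ)
        (fun x => e (β * x * (x + 1) + (2 * x + 1)))]
      rw [hA, Finset.sum_mul]
      apply Finset.sum_congr rfl
      intro x _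
      simp only [Equiv.coe_addRight]
      rw [← hmul]
      congr 1
      linear_combination (2 * x + 1 + μ) * hβμ
    have h2μ : e (2 * μ) = ξ ^ ((2 * m : ℤ)) := by
      rw [hze]; congr 1; push_cast [hμ]; ring
    have hne1 : e (2 * μ) ≠ 1 := by
      rw [h2μ]
      intro hone
      have hdvd : (r : ℤ) ∣ (2 * m : ℤ) := (hξ.zpow_eq_one_iff_dvd _).mp hone
      have hdvd' : r ∣ 2 * m := by exact_mod_cast hdvd
      have hcop : Nat.Coprime r 2 := Nat.coprime_two_right.mpr hrodd
      have : r ∣ m := (Nat.Coprime.dvd_of_dvd_mul_left hcop) hdvd'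
      have := Nat.le_of_dvd hm0 this
      omega
    have hA0 : A = 0 := by
      have hz : A * (1 - e (2 * μ)) = 0 := by rw [mul_sub, mul_one, ← hshift, sub_self]
      rcases mul_eq_zero.mp hz with h | h
      · exact h
      · exact absurd (sub_eq_zero.mp h).symm hne1
    rw [hT, hγ, hBA, hA0]
    ring
end

section
/- Let p be a prime, l a positive integer, b := p^l, and let a be an integer coprime to b. Then 3·(s(1,b) − s(a,b)) ∈ (1/b)·ℤ and 3·(s(1,b) + s(a,b)) ∈ (1/b)·ℤ; that is, both 3b·(s(1,b) − s(a,b)) and 3b·(s(1,b) + s(a,b)) are integers. -/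
/-- The sawtooth function `((x))`: zero on integers, `x - ⌊x⌋ - 1/2` otherwise. -/
noncomputable def sawtooth (x : ℝ) : ℝ :=
  if (⌊x⌋ : ℝ) = x then 0 else x - ⌊x⌋ - 1 / 2

/-- The Dedekind sum `s(a,b) = ∑_{k=1}^{b-1} ((k/b))·((ka/b))`. -/
noncomputable def dedekindSum (a : ℤ) (b : ℕ) : ℝ :=
  ∑ k ∈ Finset.Icc 1 (b - 1), sawtooth ((k : ℝ) / b) * sawtooth ((k : ℝ) * a / b)

lemma floor_cast_div' (x : ℤ) (b : ℕ) : ⌊(x:ℝ)/(b:ℝ)⌋ = x / (b:ℤ) := by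
  have h : (((x:ℚ)/(b:ℚ) : ℚ) : ℝ) = (x:ℝ)/(b:ℝ) := by push_cast; ring
  rw [← h, Rat.floor_cast, Rat.floor_intCast_div_natCast]

lemma sawtooth_eq' (x : ℤ) (b : ℕ) (hb : 0 < b) (hnd : ¬ ((b:ℤ) ∣ x)) :
    sawtooth ((x:ℝ)/(b:ℝ)) = ((x % (b:ℤ) : ℤ) : ℝ)/(b:ℝ) - 1/2 := by
  have hb0 : (b:ℝ) ≠ 0 := Nat.cast_ne_zero.mpr hb.ne'
  have hfl := floor_cast_div' x b
  have hne : ((⌊(x:ℝ)/(b:ℝ)⌋ : ℤ) : ℝ) ≠ (x:ℝ)/(b:ℝ) := by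
    rw [hfl]
    intro h
    apply hnd
    have h2 : (x:ℝ) = (b:ℝ) * ((x / (b:ℤ) : ℤ) : ℝ) := by
      field_simp at h; linarith [h]
    have hx : x = (b:ℤ) * (x / (b:ℤ)) := by exact_mod_cast h2
    exact ⟨_, hx⟩
  unfold sawtooth
  rw [if_neg hne, hfl]
  have hmod : x % (b:ℤ) = x - (b:ℤ) * (x / (b:ℤ)) := Int.emod_def x b
  rw [hmod]
  push_cast
  field_simp

lemma sumId' (n : ℕ) : 2 * ∑ k ∈ Finset.Icc 1 n, (k:ℤ) = n*(n+1) := by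
  induction n with
  | zero => simp
  | succ n ih =>
    rw [Finset.sum_Icc_succ_top (by omega)]
    push_cast
    linear_combination ih

lemma sumSq' (n : ℕ) : 6 * ∑ k ∈ Finset.Icc 1 n, (k:ℤ)*k = n*(n+1)*(2*n+1) := by
  induction n with
  | zero => simp
  | succ n ih =>
    rw [Finset.sum_Icc_succ_top (by omega)]
    push_cast
    linear_combination ih

lemma dedekind_bridge (b : ℕ) (hb : 2 ≤ b) (a : ℤ) (ha : Int.gcd a (b:ℤ) = 1) :
    4*(b:ℝ)^2 * dedekindSum a b
      = ((∑ k ∈ Finset.Icc 1 (b-1), (2*(k:ℤ) - (b:ℤ))*(2*(((k:ℤ)*a) % (b:ℤ)) - (b:ℤ)) : ℤ) : ℝ) := by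
  have hb0 : (b:ℝ) ≠ 0 := by positivity
  unfold dedekindSum
  rw [Finset.mul_sum]
  push_cast
  apply Finset.sum_congr rfl
  intro k hk
  rw [Finset.mem_Icc] at hk
  have hco : IsCoprime ((b:ℤ)) a := by
    rw [Int.isCoprime_iff_gcd_eq_one, Int.gcd_comm]; exact ha
  have hnd : ¬ ((b:ℤ) ∣ (k:ℤ)*a) := by
    intro hdvd
    have hdk : (b:ℤ) ∣ (k:ℤ) := hco.dvd_of_dvd_mul_right hdvd
    have hle := Int.le_of_dvd (by exact_mod_cast Nat.pos_of_ne_zero (by omega)) hdk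
    have : (k:ℤ) ≤ (b:ℤ) - 1 := by
      have : k ≤ b - 1 := hk.2
      omega
    omega
  have hnd1 : ¬ ((b:ℤ) ∣ (k:ℤ)) := fun h => hnd (h.mul_right a)
  have e1 : ((k:ℝ))/(b:ℝ) = (((k:ℤ)):ℝ)/(b:ℝ) := by push_cast; ring
  have e2 : (k:ℝ)*(a:ℝ)/(b:ℝ) = ((((k:ℤ)*a : ℤ)):ℝ)/(b:ℝ) := by push_cast; ring
  rw [e1, sawtooth_eq' _ _ (by omega) hnd1, e2, sawtooth_eq' _ _ (by omega) hnd]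
  have hk_mod : (k:ℤ) % (b:ℤ) = (k:ℤ) := Int.emod_eq_of_lt (by positivity) (by
    have : k ≤ b - 1 := hk.2
    omega)
  rw [hk_mod]
  push_cast
  field_simp
  ring

/-- For `b = p^l` a prime power and `a` coprime to `b`, both `3b(s(1,b) - s(a,b))` and
`3b(s(1,b) + s(a,b))` are integers. -/
theorem stmt15 (p : ℕ) (hp : p.Prime) (l : ℕ) (hl : 0 < l) (b : ℕ) (hb : b = p ^ l)
    (a : ℤ) (ha : Int.gcd a (b : ℤ) = 1) :
    (∃ m : ℤ, 3 * (b : ℝ) * (dedekindSum 1 b - dedekindSum a b) = m) ∧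
    (∃ m : ℤ, 3 * (b : ℝ) * (dedekindSum 1 b + dedekindSum a b) = m) := by
  have hb2 : 2 ≤ b := by
    rw [hb]
    exact Nat.one_lt_pow (by omega) hp.one_lt
  -- parity
  have hpar : Odd ((b:ℤ)) ∨ Odd a := by
    rcases hp.eq_two_or_odd' with h2 | hodd
    · right
      by_contra hev
      rw [Int.not_odd_iff_even] at hev
      have h2a : (2:ℤ) ∣ a := hev.two_dvd
      have h2b : (2:ℤ) ∣ (b:ℤ) := by
        have : 2 ∣ b := by rw [hb, h2]; exact dvd_pow_self 2 hl.ne'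
        exact_mod_cast Int.natCast_dvd_natCast.mpr this
      have := Int.dvd_gcd h2a h2b
      rw [ha] at this
      norm_num at this
    · left
      rw [Int.odd_coe_nat, hb]
      exact hodd.pow
  set s := Finset.Icc 1 (b-1) with hsdef
  set B : ℤ := (b:ℤ) with hBdef
  have hB2 : 2 ≤ B := by rw [hBdef]; exact_mod_cast hb2
  have hB0 : B ≠ 0 := by omega
  set q : ℕ → ℤ := fun k => ((k:ℤ)*a) / B with hqdef
  set K1 := ∑ k ∈ s, (k:ℤ) with hK1d
  set K2 := ∑ k ∈ s, (k:ℤ)*(k:ℤ) with hK2d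
  set T := ∑ k ∈ s, (k:ℤ)*(q k) with hTd
  set Q := ∑ k ∈ s, q k with hQd
  set Sa := ∑ k ∈ s, (2*(k:ℤ) - B)*(2*(((k:ℤ)*a) % B) - B) with hSad
  set S1 := ∑ k ∈ s, (2*(k:ℤ) - B)*(2*(((k:ℤ)*1) % B) - B) with hS1d
  have hK1 : 2*K1 = (B-1)*B := by
    have h := sumId' (b-1)
    have hc : ((b-1:ℕ):ℤ) = B - 1 := by omega
    rw [hc] at h
    rw [hK1d]
    linear_combination h
  have hK2 : 6*K2 = (B-1)*B*(2*B-1) := by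
    have h := sumSq' (b-1)
    have hc : ((b-1:ℕ):ℤ) = B - 1 := by omega
    rw [hc] at h
    rw [hK2d]
    linear_combination h
  have hcard : ((s.card : ℕ) : ℤ) = B - 1 := by
    rw [hsdef, Nat.card_Icc]
    omega
  have hco : IsCoprime B a := by
    rw [hBdef, Int.isCoprime_iff_gcd_eq_one, Int.gcd_comm]; exact ha
  have hr_pos : ∀ k ∈ s, 0 < ((k:ℤ)*a) % B := by
    intro k hk
    obtain ⟨h1, h2⟩ := Finset.mem_Icc.mp hk
    have h0 : 0 ≤ ((k:ℤ)*a) % B := Int.emod_nonneg _ hB0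
    rcases h0.lt_or_eq with h | h
    · exact h
    exfalso
    have hdvd : B ∣ (k:ℤ)*a := Int.dvd_of_emod_eq_zero h.symm
    have hdk : B ∣ (k:ℤ) := hco.dvd_of_dvd_mul_right hdvd
    have := Int.le_of_dvd (by omega) hdk
    omega
  have hr_lt : ∀ k ∈ s, ((k:ℤ)*a) % B < B := by
    intro k _
    exact Int.emod_lt_of_pos _ (by omega)
  -- expansion of Sa
  have hSa_exp : Sa = 4*a*K2 - (2*a*B + 2*B)*K1 - 4*B*T + 2*B^2*Q + B^2*(B-1) := by
    have step : ∀ k ∈ s, (2*(k:ℤ) - B)*(2*(((k:ℤ)*a) % B) - B)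
        = 4*a*((k:ℤ)*(k:ℤ)) - (2*a*B + 2*B)*(k:ℤ) - 4*B*((k:ℤ)*(q k)) + 2*B^2*(q k) + B^2 := by
      intro k _
      have hmod : ((k:ℤ)*a) % B = (k:ℤ)*a - B * q k := Int.emod_def _ _
      rw [hmod, hqdef]
      ring
    rw [hSad, Finset.sum_congr rfl step]
    rw [hK1d, hK2d, hTd, hQd]
    simp only [Finset.sum_add_distrib, Finset.sum_sub_distrib, ← Finset.mul_sum,
      Finset.sum_const, nsmul_eq_mul, hcard]
    ring
  have hS1_exp : S1 = 4*K2 - 4*B*K1 + B^2*(B-1) := by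
    have step : ∀ k ∈ s, (2*(k:ℤ) - B)*(2*(((k:ℤ)*1) % B) - B)
        = 4*((k:ℤ)*(k:ℤ)) - 4*B*(k:ℤ) + B^2 := by
      intro k hk
      obtain ⟨h1, h2⟩ := Finset.mem_Icc.mp hk
      have hmod : ((k:ℤ)*1) % B = (k:ℤ) := by
        rw [mul_one]
        exact Int.emod_eq_of_lt (by positivity) (by omega)
      rw [hmod]
      ring
    rw [hS1d, Finset.sum_congr rfl step]
    rw [hK1d, hK2d]
    simp only [Finset.sum_add_distrib, Finset.sum_sub_distrib, ← Finset.mul_sum,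
      Finset.sum_const, nsmul_eq_mul, hcard]
    ring
  -- the reflection identity: 2*Q = (a-1)*(B-1)
  have hrefl_pt : ∀ k ∈ s, (((b - k : ℕ):ℤ)*a) % B = B - ((k:ℤ)*a) % B := by
    intro k hk
    obtain ⟨h1, h2⟩ := Finset.mem_Icc.mp hk
    have hcast : ((b - k : ℕ):ℤ) = B - (k:ℤ) := by omega
    rw [hcast]
    have hpos := hr_pos k hk
    have hlt := hr_lt k hk
    have key : (B - (k:ℤ))*a = (B - ((k:ℤ)*a) % B) + B*(a - q k - 1) := by
      have hmod : ((k:ℤ)*a) % B = (k:ℤ)*a - B * q k := Int.emod_def _ _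
      rw [hmod, hqdef]
      ring
    rw [key, Int.add_mul_emod_self_left]
    exact Int.emod_eq_of_lt (by omega) (by omega)
  have hsum_r : ∑ k ∈ s, ((k:ℤ)*a) % B = a*K1 - B*Q := by
    have step : ∀ k ∈ s, ((k:ℤ)*a) % B = a*(k:ℤ) - B*(q k) := by
      intro k _
      have hmod : ((k:ℤ)*a) % B = (k:ℤ)*a - B * q k := Int.emod_def _ _
      rw [hmod, hqdef]; ring
    rw [Finset.sum_congr rfl step, hK1d, hQd]
    simp only [Finset.sum_sub_distrib, ← Finset.mul_sum]
  have hrefl : ∑ k ∈ s, ((k:ℤ)*a) % B = ∑ k ∈ s, (B - ((k:ℤ)*a) % B) := by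
    calc ∑ k ∈ s, ((k:ℤ)*a) % B
        = ∑ k ∈ s, (((b - k : ℕ):ℤ)*a) % B := by
          refine Finset.sum_nbij' (fun k => b - k) (fun k => b - k) ?_ ?_ ?_ ?_ ?_
          · intro k hk; simp only [hsdef, Finset.mem_Icc] at hk ⊢; omega
          · intro k hk; simp only [hsdef, Finset.mem_Icc] at hk ⊢; omega
          · intro k hk; simp only [hsdef, Finset.mem_Icc] at hk ⊢; omega
          · intro k hk; simp only [hsdef, Finset.mem_Icc] at hk ⊢; omega
          · intro k hk
            rw [hsdef, Finset.mem_Icc] at hk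
            have hbk : b - (b - k) = k := by omega
            rw [hbk]
      _ = ∑ k ∈ s, (B - ((k:ℤ)*a) % B) := Finset.sum_congr rfl hrefl_pt
  have hQeq : 2*Q = (a-1)*(B-1) := by
    have h1 : ∑ k ∈ s, (B - ((k:ℤ)*a) % B) = (B-1)*B - (a*K1 - B*Q) := by
      rw [Finset.sum_sub_distrib, Finset.sum_const, nsmul_eq_mul, hcard, hsum_r]
    have h2 := hrefl
    rw [hsum_r, h1] at h2
    have h3 : B*(2*Q) = B*((a-1)*(B-1)) := by linear_combination -h2 + a*hK1
    exact mul_left_cancel₀ hB0 h3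
  -- key identities
  have e1 : 3*(S1 - Sa) = (1-a)*B*(B-1)*(B-2) + 6*B*(2*T - B*Q) := by
    rw [hS1_exp, hSa_exp]
    linear_combination 2*(1-a)*hK2 + 3*B*(a-1)*hK1
  have e2 : 3*(S1 + Sa) = (1+a)*B*(B-1)*(B-2) - 6*B*(2*T - B*Q) := by
    rw [hS1_exp, hSa_exp]
    linear_combination 2*(1+a)*hK2 - (3*a*B + 9*B)*hK1
  -- integer witnesses
  have hdiff : ∃ m : ℤ, 3*(S1 - Sa) = 4*B*m := by
    rcases hpar with hOdd | haOdd
    · obtain ⟨c, hc⟩ := hOdd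
      have hQc : Q = a*c - c := by
        have h2 : (2:ℤ)*Q = 2*(a*c - c) := by linear_combination hQeq + (a-1)*hc
        exact mul_left_cancel₀ two_ne_zero h2
      refine ⟨(a-1)*c*(-4*c-1) + 3*T, ?_⟩
      rw [e1, hc, hQc]
      ring
    · rcases Int.even_or_odd B with hBe | hBo
      · obtain ⟨e, he⟩ := hBe
        obtain ⟨d, hd⟩ := haOdd
        refine ⟨-d*(2*e-1)*(e-1) + 3*T - 3*e*Q, ?_⟩
        rw [e1, he, hd]
        ring
      · obtain ⟨c, hc⟩ := hBo
        have hQc : Q = a*c - c := by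
          have h2 : (2:ℤ)*Q = 2*(a*c - c) := by linear_combination hQeq + (a-1)*hc
          exact mul_left_cancel₀ two_ne_zero h2
        refine ⟨(a-1)*c*(-4*c-1) + 3*T, ?_⟩
        rw [e1, hc, hQc]
        ring
  have hsum : ∃ m : ℤ, 3*(S1 + Sa) = 4*B*m := by
    rcases hpar with hOdd | haOdd
    · obtain ⟨c, hc⟩ := hOdd
      have hQc : Q = a*c - c := by
        have h2 : (2:ℤ)*Q = 2*(a*c - c) := by linear_combination hQeq + (a-1)*hc
        exact mul_left_cancel₀ two_ne_zero h2
      refine ⟨c*(a*(4*c+1) - 2*c - 2) - 3*T, ?_⟩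
      rw [e2, hc, hQc]
      ring
    · rcases Int.even_or_odd B with hBe | hBo
      · obtain ⟨e, he⟩ := hBe
        obtain ⟨d, hd⟩ := haOdd
        refine ⟨(d+1)*(2*e-1)*(e-1) - 3*T + 3*e*Q, ?_⟩
        rw [e2, he, hd]
        ring
      · obtain ⟨c, hc⟩ := hBo
        have hQc : Q = a*c - c := by
          have h2 : (2:ℤ)*Q = 2*(a*c - c) := by linear_combination hQeq + (a-1)*hc
          exact mul_left_cancel₀ two_ne_zero h2
        refine ⟨c*(a*(4*c+1) - 2*c - 2) - 3*T, ?_⟩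
        rw [e2, hc, hQc]
        ring
  -- real glue
  have hb0 : (b:ℝ) ≠ 0 := by positivity
  have hbrA := dedekind_bridge b hb2 a ha
  have hbr1 := dedekind_bridge b hb2 1 (by simp)
  rw [← hSad] at hbrA
  rw [← hS1d] at hbr1
  constructor
  · obtain ⟨m, hm⟩ := hdiff
    refine ⟨m, ?_⟩
    have hmr : 3*((S1:ℝ) - (Sa:ℝ)) = 4*(b:ℝ)*(m:ℝ) := by exact_mod_cast hm
    have hmain : (4*(b:ℝ)) * (3 * (b:ℝ) * (dedekindSum 1 b - dedekindSum a b))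
        = (4*(b:ℝ)) * (m:ℝ) := by
      linear_combination 3*hbr1 - 3*hbrA + hmr
    exact mul_left_cancel₀ (by positivity) hmain
  · obtain ⟨m, hm⟩ := hsum
    refine ⟨m, ?_⟩
    have hmr : 3*((S1:ℝ) + (Sa:ℝ)) = 4*(b:ℝ)*(m:ℝ) := by exact_mod_cast hm
    have hmain : (4*(b:ℝ)) * (3 * (b:ℝ) * (dedekindSum 1 b + dedekindSum a b))
        = (4*(b:ℝ)) * (m:ℝ) := by
      linear_combination 3*hbr1 + 3*hbrA + hmr
    exact mul_left_cancel₀ (by positivity) hmain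
end

section
/- Let b and r be positive integers and let R := ℤ[1/b][ζ_r] be the subring of ℂ generated by 1/b and ζ_r. If a ∈ R is such that a ∈ p·R for infinitely many rational primes p, then a = 0. -/
-- auxiliary lemma A
lemma aux_zero (N : Submodule ℤ ℂ) (hfg : N.FG) (z : ℂ) (hz : z ∈ N)
    (S : Set ℕ) (hS : S.Infinite)
    (hdiv : ∀ p ∈ S, ∃ w ∈ N, z = (p : ℂ) * w) : z = 0 := by
  haveI : Module.Finite ℤ N := Module.Finite.iff_fg.mpr hfg
  haveI : Module.Free ℤ N := Module.free_of_finite_type_torsion_free'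
  set B := Module.Free.chooseBasis ℤ N with hB
  set zz : N := ⟨z, hz⟩ with hzz
  have key : ∀ p ∈ S, ∃ ww : N, zz = (p:ℤ) • ww := by
    intro p hp
    obtain ⟨w, hw, hwz⟩ := hdiv p hp
    refine ⟨⟨w, hw⟩, ?_⟩
    apply Subtype.ext
    simp only [Submodule.coe_smul_of_tower, hzz]
    push_cast [zsmul_eq_mul]
    exact hwz
  have hcoord : ∀ i, B.repr zz i = 0 := by
    intro i
    obtain ⟨p, hp, hpgt⟩ := hS.exists_gt (B.repr zz i).natAbs
    obtain ⟨ww, hww⟩ := key p hp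
    have : (p:ℤ) ∣ B.repr zz i := by
      rw [hww]
      simp
    have h2 : p ∣ (B.repr zz i).natAbs := by
      have := Int.natAbs_dvd_natAbs.mpr this
      simpa using this
    have h3 : (B.repr zz i).natAbs = 0 := Nat.eq_zero_of_dvd_of_lt h2 hpgt
    exact Int.natAbs_eq_zero.mp h3
  have : B.repr zz = 0 := by ext i; exact hcoord i
  have : zz = 0 := by
    apply B.repr.injective
    simpa using this
  simpa [hzz, Subtype.ext_iff] using this

/-- Let `R = ℤ[1/b][ζ_r]` be the subring of `ℂ` generated by `1/b` and `ζ_r`.  If `a ∈ R`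
is divisible in `R` by infinitely many rational primes, then `a = 0`. -/
theorem stmt16 (b r : ℕ) (hb : 0 < b) (hr : 0 < r)
    (ζ : ℂ) (hζ : ζ = Complex.exp (2 * Real.pi * Complex.I / r))
    (R : Subring ℂ) (hR : R = Subring.closure {((b : ℂ))⁻¹, ζ})
    (a : ℂ) (ha : a ∈ R)
    (h : {p : ℕ | p.Prime ∧ ∃ x ∈ R, a = (p : ℂ) * x}.Infinite) :
    a = 0 := by
  have hbC : (b : ℂ) ≠ 0 := by exact_mod_cast hb.ne'
  have hrC : (r:ℂ) ≠ 0 := by exact_mod_cast hr.ne'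
  have hζr : ζ ^ r = 1 := by
    rw [hζ, ← Complex.exp_nat_mul,
      show (r:ℂ) * (2*Real.pi*Complex.I / r) = 2*Real.pi*Complex.I from by field_simp]
    exact Complex.exp_two_pi_mul_I
  -- M = ℤ[ζ]
  set M := Algebra.adjoin ℤ ({ζ} : Set ℂ) with hM
  have hζint : IsIntegral ℤ ζ := by
    refine ⟨Polynomial.X ^ r - Polynomial.C 1, Polynomial.monic_X_pow_sub_C 1 hr.ne', ?_⟩
    simp [hζr]
  have hfg : (Subalgebra.toSubmodule M).FG := hζint.fg_adjoin_singleton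
  have hζM : ζ ∈ M := Algebra.subset_adjoin rfl
  have hbM : (b : ℂ) ∈ M := by
    simpa using Subalgebra.algebraMap_mem M (b : ℤ)
  -- subring T
  let T : Subring ℂ :=
    { carrier := {x | ∃ n : ℕ, (b:ℂ)^n * x ∈ M}
      one_mem' := ⟨0, by simpa using one_mem M⟩
      zero_mem' := ⟨0, by simpa using zero_mem M⟩
      mul_mem' := by
        rintro x y ⟨n, hn⟩ ⟨m, hm⟩
        refine ⟨n + m, ?_⟩
        have : (b:ℂ)^(n+m) * (x*y) = ((b:ℂ)^n*x)*((b:ℂ)^m*y) := by ring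
        rw [this]; exact mul_mem hn hm
      add_mem' := by
        rintro x y ⟨n, hn⟩ ⟨m, hm⟩
        refine ⟨n + m, ?_⟩
        have : (b:ℂ)^(n+m) * (x+y) = (b:ℂ)^m * ((b:ℂ)^n*x) + (b:ℂ)^n * ((b:ℂ)^m*y) := by ring
        rw [this]
        exact add_mem (mul_mem (pow_mem hbM m) hn) (mul_mem (pow_mem hbM n) hm)
      neg_mem' := by
        rintro x ⟨n, hn⟩
        exact ⟨n, by rw [mul_neg]; exact neg_mem hn⟩ }
  have hRT : (R : Set ℂ) ⊆ T := by
    rw [hR]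
    apply Subring.closure_le.mpr
    rintro x hx
    rcases hx with h1 | h2
    · subst h1
      exact ⟨1, by rw [pow_one, mul_inv_cancel₀ hbC]; exact one_mem M⟩
    · rcases h2 with rfl
      exact ⟨0, by simpa using hζM⟩
  obtain ⟨n, hn⟩ := hRT ha
  set z : ℂ := (b:ℂ)^n * a with hz
  -- the infinite set of primes not dividing b
  set S' : Set ℕ := {p : ℕ | p.Prime ∧ ∃ x ∈ R, a = (p : ℂ) * x} \ {p : ℕ | p ∣ b} with hS'
  have hS'inf : S'.Infinite := by
    apply h.diff
    exact (Set.finite_Iic b).subset (fun p hp => Nat.le_of_dvd hb hp)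
  have hdiv : ∀ p ∈ S', ∃ w ∈ Subalgebra.toSubmodule M, z = (p : ℂ) * w := by
    rintro p ⟨⟨hp, x, hxR, hax⟩, hpb⟩
    obtain ⟨m, hm⟩ := hRT hxR
    have hcop : IsCoprime (p : ℤ) ((b : ℤ)^m) := by
      rw [show ((b:ℤ)^m) = ((b^m : ℕ) : ℤ) by push_cast; ring]
      exact Int.isCoprime_iff_gcd_eq_one.mpr
        (((hp.coprime_iff_not_dvd.mpr hpb).pow_right m))
    obtain ⟨u, v, huv⟩ := hcop
    have huvC : (u:ℂ) * p + v * (b:ℂ)^m = 1 := by exact_mod_cast huv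
    refine ⟨(u:ℂ) * z + (v:ℂ) * ((b:ℂ)^(n+m) * x), ?_, ?_⟩
    · rw [Subalgebra.mem_toSubmodule]
      have hzM : z ∈ M := hn
      have hx2 : (b:ℂ)^(n+m) * x ∈ M := by
        have : (b:ℂ)^(n+m) * x = (b:ℂ)^n * ((b:ℂ)^m * x) := by ring
        rw [this]
        exact mul_mem (pow_mem hbM n) hm
      have hu : (u:ℂ) ∈ M := Subalgebra.algebraMap_mem M u
      have hv : (v:ℂ) ∈ M := Subalgebra.algebraMap_mem M v
      exact add_mem (mul_mem hu hzM) (mul_mem hv hx2)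
    · rw [hz, hax]
      linear_combination (-(b:ℂ)^n * (p:ℂ) * x) * huvC
  have hz0 : z = 0 :=
    aux_zero (Subalgebra.toSubmodule M) hfg z ((Subalgebra.mem_toSubmodule M).mpr hn)
      S' hS'inf hdiv
  rw [hz] at hz0
  exact (mul_eq_zero.mp hz0).resolve_left (pow_ne_zero n hbC)
end

section
/- Let r be an odd positive integer and let p be an odd prime not dividing r. Define f_p(X) := Σ_{i=0}^{p−1} ζ_r^{p−1−i}·X^i ∈ ℤ[ζ_r][X] (so that (X − ζ_r)·f_p(X) = X^p − ζ_r^p). Then the evaluation homomorphism ℤ[ζ_r][X] → ℤ[ζ_{pr}] sending X to ζ_p·ζ_r is surjective with kernel the ideal generated by f_p(X), and hence induces a ring isomorphism ℤ[ζ_r][X]/(f_p(X)) ≅ ℤ[ζ_{pr}]. -/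
open Polynomial

set_option maxHeartbeats 1000000 in
set_option synthInstance.maxHeartbeats 400000 in
/-- Let `r` be odd and `p` an odd prime not dividing `r`, and let
`f_p(X) = ∑_{i=0}^{p-1} ζ_r^{p-1-i} X^i ∈ ℤ[ζ_r][X]`.  The evaluation homomorphism
`ℤ[ζ_r][X] → ℂ`, `X ↦ ζ_p·ζ_r`, has image `ℤ[ζ_{pr}]` and kernel the ideal generated by
`f_p(X)`; hence it induces a ring isomorphism `ℤ[ζ_r][X]/(f_p(X)) ≅ ℤ[ζ_{pr}]`. -/
theorem stmt17 (r p : ℕ) (hrpos : 0 < r) (hrodd : Odd r) (hp : p.Prime) (hpodd : Odd p)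
    (hpr : ¬ p ∣ r) (ζr ζp ζpr : ℂ)
    (h1 : ζr = Complex.exp (2 * Real.pi * Complex.I / r))
    (h2 : ζp = Complex.exp (2 * Real.pi * Complex.I / p))
    (h3 : ζpr = Complex.exp (2 * Real.pi * Complex.I / (p * r)))
    (z : Algebra.adjoin ℤ {ζr}) (hz : (z : ℂ) = ζr) :
    RingHom.range (Polynomial.eval₂RingHom ((Algebra.adjoin ℤ {ζr}).val.toRingHom) (ζp * ζr)) =
        (Algebra.adjoin ℤ {ζpr}).toSubring ∧
    RingHom.ker (Polynomial.eval₂RingHom ((Algebra.adjoin ℤ {ζr}).val.toRingHom) (ζp * ζr)) =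
        Ideal.span {∑ i ∈ Finset.range p, Polynomial.C (z ^ (p - 1 - i)) * Polynomial.X ^ i} ∧
    Nonempty
      ((Polynomial (Algebra.adjoin ℤ {ζr}) ⧸
          Ideal.span {∑ i ∈ Finset.range p, Polynomial.C (z ^ (p - 1 - i)) * Polynomial.X ^ i})
        ≃+* (Algebra.adjoin ℤ {ζpr})) := by
  classical
  have hrne : r ≠ 0 := hrpos.ne'
  have hpne : p ≠ 0 := hp.pos.ne'
  have hprne : p * r ≠ 0 := mul_ne_zero hpne hrne
  haveI : NeZero (p * r) := ⟨hprne⟩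
  have hp' : (p : ℂ) ≠ 0 := Nat.cast_ne_zero.2 hpne
  have hr' : (r : ℂ) ≠ 0 := Nat.cast_ne_zero.2 hrne
  have hζr : IsPrimitiveRoot ζr r := by
    rw [h1]; exact Complex.isPrimitiveRoot_exp r hrne
  have hζp : IsPrimitiveRoot ζp p := by
    rw [h2]; exact Complex.isPrimitiveRoot_exp p hpne
  have hζpr : IsPrimitiveRoot ζpr (p * r) := by
    have := Complex.isPrimitiveRoot_exp (p * r) hprne
    rw [h3]
    convert this using 3
    push_cast
    ring
  have hcop : Nat.Coprime p r := (Nat.Prime.coprime_iff_not_dvd hp).2 hpr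
  have hzrp : ζpr ^ p = ζr := by
    rw [h1, h3, ← Complex.exp_nat_mul]
    congr 1
    field_simp
  have hα : ζp * ζr = ζpr ^ (r + p) := by
    rw [h1, h2, h3, ← Complex.exp_nat_mul, ← Complex.exp_add]
    congr 1
    field_simp
    push_cast
    ring
  have hcop2 : Nat.Coprime (r + p) (p * r) := by
    refine Nat.Coprime.mul_right ?_ ?_
    · rw [Nat.coprime_add_self_left]
      exact hcop.symm
    · rw [add_comm, Nat.coprime_add_self_left]
      exact hcop
  have hαprim : IsPrimitiveRoot (ζp * ζr) (p * r) := by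
    rw [hα]; exact hζpr.pow_of_coprime _ hcop2
  obtain ⟨k, -, hk⟩ := hαprim.eq_pow_of_pow_eq_one hζpr.pow_eq_one
  have hadj : ∀ w x : ℂ, x ∈ Algebra.adjoin ℤ {w} → x ∈ Subring.closure ({w} : Set ℂ) := by
    intro w x hx
    rwa [Algebra.adjoin_int] at hx
  -- membership facts
  have hζr_cl : ζr ∈ Subring.closure ({ζpr} : Set ℂ) := by
    rw [← hzrp]; exact pow_mem (Subring.subset_closure (Set.mem_singleton ζpr)) p
  have hmemS : ∀ x : Algebra.adjoin ℤ {ζr}, (x : ℂ) ∈ Subring.closure ({ζpr} : Set ℂ) := by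
    intro x
    have hx : (x : ℂ) ∈ Subring.closure ({ζr} : Set ℂ) := hadj ζr _ x.2
    exact Subring.closure_le.2 (Set.singleton_subset_iff.2 hζr_cl) hx
  have hα_cl : ζp * ζr ∈ Subring.closure ({ζpr} : Set ℂ) := by
    rw [hα]; exact pow_mem (Subring.subset_closure (Set.mem_singleton ζpr)) _
  -- the range computation
  have hrange : RingHom.range
      (Polynomial.eval₂RingHom ((Algebra.adjoin ℤ {ζr}).val.toRingHom) (ζp * ζr)) =
      (Algebra.adjoin ℤ {ζpr}).toSubring := by
    have hts : ∀ y : ℂ, y ∈ Subring.closure ({ζpr} : Set ℂ) ↔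
        y ∈ (Algebra.adjoin ℤ {ζpr}).toSubring := by
      intro y; rw [Algebra.adjoin_int]; rfl
    apply le_antisymm
    · rintro x ⟨g, rfl⟩
      rw [← hts]
      show Polynomial.eval₂ (Algebra.adjoin ℤ {ζr}).val.toRingHom (ζp * ζr) g ∈ _
      rw [Polynomial.eval₂_eq_sum_range]
      refine sum_mem fun i _ => ?_
      exact mul_mem (hmemS _) (pow_mem hα_cl i)
    · intro x hx
      rw [← hts] at hx
      refine Subring.closure_le.2 ?_ hx
      intro y hy
      rw [Set.mem_singleton_iff] at hy
      refine ⟨Polynomial.X ^ k, ?_⟩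
      show Polynomial.eval₂ (Algebra.adjoin ℤ {ζr}).val.toRingHom (ζp * ζr)
        (Polynomial.X ^ k) = y
      rw [Polynomial.eval₂_X_pow, hk, hy]
  -- basic facts about f
  have hfc : ∀ n, (∑ i ∈ Finset.range p,
      Polynomial.C (z ^ (p - 1 - i)) * Polynomial.X ^ i).coeff n =
      if n < p then z ^ (p - 1 - n) else 0 := by
    intro n
    rw [Polynomial.finset_sum_coeff]
    simp only [Polynomial.coeff_C_mul, Polynomial.coeff_X_pow, mul_ite, mul_one, mul_zero]
    simp only [eq_comm (a := n)]
    rw [Finset.sum_ite_eq' (Finset.range p) n fun i => z ^ (p - 1 - i)]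
    simp [Finset.mem_range]
  have hfdeg_le : (∑ i ∈ Finset.range p,
      Polynomial.C (z ^ (p - 1 - i)) * Polynomial.X ^ i).natDegree ≤ p - 1 := by
    rw [Polynomial.natDegree_le_iff_coeff_eq_zero]
    intro N hN
    rw [hfc]
    have : ¬ N < p := by omega
    simp [this]
  have hfc1 : (∑ i ∈ Finset.range p,
      Polynomial.C (z ^ (p - 1 - i)) * Polynomial.X ^ i).coeff (p - 1) = 1 := by
    rw [hfc]
    have h5 : p - 1 < p := by omega
    have h6 : p - 1 - (p - 1) = 0 := by omega
    simp [h5, h6]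
  have hmonic : (∑ i ∈ Finset.range p,
      Polynomial.C (z ^ (p - 1 - i)) * Polynomial.X ^ i).Monic :=
    Polynomial.monic_of_natDegree_le_of_coeff_eq_one _ hfdeg_le hfc1
  have hfdeg : (∑ i ∈ Finset.range p,
      Polynomial.C (z ^ (p - 1 - i)) * Polynomial.X ^ i).natDegree = p - 1 :=
    le_antisymm hfdeg_le (Polynomial.le_natDegree_of_ne_zero (by rw [hfc1]; exact one_ne_zero))
  have hfdeg' : (∑ i ∈ Finset.range p,
      Polynomial.C (z ^ (p - 1 - i)) * Polynomial.X ^ i).degree = ((p - 1 : ℕ) : WithBot ℕ) := by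
    rw [Polynomial.degree_eq_natDegree hmonic.ne_zero, hfdeg]
  -- f is in the kernel
  have hζrne : ζr ≠ 0 := hζr.ne_zero hrne
  have hαsub : ζp * ζr - ζr ≠ 0 := by
    intro h
    rw [sub_eq_zero] at h
    exact hζp.ne_one hp.one_lt (mul_right_cancel₀ hζrne (by rw [h, one_mul]))
  have hef : Polynomial.eval₂ (Algebra.adjoin ℤ {ζr}).val.toRingHom (ζp * ζr)
      (∑ i ∈ Finset.range p, Polynomial.C (z ^ (p - 1 - i)) * Polynomial.X ^ i) = 0 := by
    have h0 : Polynomial.eval₂ (Algebra.adjoin ℤ {ζr}).val.toRingHom (ζp * ζr)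
        (∑ i ∈ Finset.range p, Polynomial.C (z ^ (p - 1 - i)) * Polynomial.X ^ i) =
        ∑ i ∈ Finset.range p, (ζp * ζr) ^ i * ζr ^ (p - 1 - i) := by
      rw [Polynomial.eval₂_finset_sum]
      refine Finset.sum_congr rfl fun i _ => ?_
      rw [Polynomial.eval₂_mul, Polynomial.eval₂_C, Polynomial.eval₂_X_pow]
      have hz' : (Algebra.adjoin ℤ {ζr}).val.toRingHom z = ζr := hz
      rw [map_pow, hz', mul_comm]
    have h2 := geom_sum₂_mul (ζp * ζr) ζr p
    have h3 : (ζp * ζr) ^ p - ζr ^ p = 0 := by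
      rw [mul_pow, hζp.pow_eq_one, one_mul, sub_self]
    rw [h3] at h2
    rcases mul_eq_zero.1 h2 with h | h
    · rw [h0, h]
    · exact absurd h hαsub
  -- field theory: the minimal polynomial of ζp*ζr over ℚ(ζr) has degree p - 1
  set K : IntermediateField ℚ ℂ := IntermediateField.adjoin ℚ {ζr} with hKdef
  have hintr : IsIntegral ℚ ζr := (hζr.isIntegral hrpos).tower_top
  have hintpr : IsIntegral ℚ ζpr := (hζpr.isIntegral (Nat.pos_of_ne_zero hprne)).tower_top
  have hintα' : IsIntegral ℚ (ζp * ζr) := (hαprim.isIntegral (Nat.pos_of_ne_zero hprne)).tower_top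
  have hintα : IsIntegral K (ζp * ζr) := hintα'.tower_top
  have hfinK : Module.finrank ℚ K = r.totient := by
    rw [hKdef, IntermediateField.adjoin.finrank hintr,
      ← Polynomial.cyclotomic_eq_minpoly_rat hζr hrpos, Polynomial.natDegree_cyclotomic]
  have hfinL : Module.finrank ℚ (IntermediateField.adjoin ℚ ({ζpr} : Set ℂ)) = (p * r).totient := by
    rw [IntermediateField.adjoin.finrank hintpr,
      ← Polynomial.cyclotomic_eq_minpoly_rat hζpr (Nat.pos_of_ne_zero hprne),
      Polynomial.natDegree_cyclotomic]
  have hζpr_mem : ζpr ∈ IntermediateField.adjoin ℚ ({ζpr} : Set ℂ) :=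
    IntermediateField.subset_adjoin ℚ _ rfl
  have hres : IntermediateField.restrictScalars ℚ
      (IntermediateField.adjoin K ({ζp * ζr} : Set ℂ))
      = IntermediateField.adjoin ℚ ({ζpr} : Set ℂ) := by
    erw [IntermediateField.restrictScalars_adjoin (K := K)]
    apply le_antisymm
    · rw [IntermediateField.adjoin_le_iff]
      refine Set.union_subset ?_ ?_
      · intro x hx
        have hKle : K ≤ IntermediateField.adjoin ℚ ({ζpr} : Set ℂ) := by
          rw [hKdef, IntermediateField.adjoin_le_iff]
          intro y hy
          rw [Set.mem_singleton_iff] at hy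
          rw [hy, ← hzrp]
          exact pow_mem hζpr_mem p
        exact hKle hx
      · intro x hx
        rw [Set.mem_singleton_iff] at hx
        rw [hx, hα]
        exact pow_mem hζpr_mem (r + p)
    · rw [IntermediateField.adjoin_le_iff]
      intro x hx
      rw [Set.mem_singleton_iff] at hx
      rw [hx, ← hk]
      exact pow_mem (IntermediateField.subset_adjoin ℚ ((K : Set ℂ) ∪ {ζp * ζr})
        (Set.mem_union_right _ (Set.mem_singleton _))) k
  have htower : Module.finrank ℚ K *
      Module.finrank K (IntermediateField.adjoin K ({ζp * ζr} : Set ℂ)) = (p * r).totient := by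
    rw [Module.finrank_mul_finrank ℚ (↥K) (↥(IntermediateField.adjoin K ({ζp * ζr} : Set ℂ)))]
    rw [show Module.finrank ℚ (↥(IntermediateField.adjoin K ({ζp * ζr} : Set ℂ))) =
        Module.finrank ℚ (↥(IntermediateField.restrictScalars ℚ
          (IntermediateField.adjoin K ({ζp * ζr} : Set ℂ)))) from rfl, hres, hfinL]
  have hφr : r.totient ≠ 0 := (Nat.totient_pos.2 hrpos).ne'
  have hdegmin : (minpoly K (ζp * ζr)).natDegree = p - 1 := by
    have h1 : Module.finrank K (IntermediateField.adjoin K ({ζp * ζr} : Set ℂ)) =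
        (minpoly K (ζp * ζr)).natDegree := IntermediateField.adjoin.finrank hintα
    have h2 : (p * r).totient = r.totient * (p - 1) := by
      rw [Nat.totient_mul hcop, Nat.totient_prime hp, mul_comm]
    rw [hfinK, h1, h2] at htower
    exact Nat.eq_of_mul_eq_mul_left (Nat.pos_of_ne_zero hφr) htower
  -- the embedding of ℤ[ζr] into K
  have hζrK : ζr ∈ K.toSubring := IntermediateField.subset_adjoin ℚ {ζr} rfl
  have hclK : Subring.closure ({ζr} : Set ℂ) ≤ K.toSubring :=
    Subring.closure_le.2 (Set.singleton_subset_iff.2 hζrK)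
  have hKmem : ∀ x : Algebra.adjoin ℤ {ζr}, (x : ℂ) ∈ K := by
    intro x
    exact hclK (hadj ζr _ x.2)
  let φ : (Algebra.adjoin ℤ {ζr}) →+* K :=
    { toFun := fun x => ⟨(x : ℂ), hKmem x⟩
      map_one' := rfl
      map_mul' := fun _ _ => rfl
      map_zero' := rfl
      map_add' := fun _ _ => rfl }
  have hφinj : Function.Injective φ := by
    intro a b hab
    have h : ((φ a : ℂ)) = ((φ b : ℂ)) := congrArg (fun t : K => (t : ℂ)) hab
    exact Subtype.ext h
  have hcomp : (algebraMap K ℂ).comp φ = (Algebra.adjoin ℤ {ζr}).val.toRingHom :=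
    RingHom.ext fun x => rfl
  -- key vanishing lemma
  have hkey : ∀ g : Polynomial (Algebra.adjoin ℤ {ζr}),
      Polynomial.eval₂ (Algebra.adjoin ℤ {ζr}).val.toRingHom (ζp * ζr) g = 0 →
      g.degree < ((p - 1 : ℕ) : WithBot ℕ) → g = 0 := by
    intro g h0 hdeg
    by_contra hne
    have hmap : Polynomial.aeval (ζp * ζr) (g.map φ) = 0 := by
      rw [Polynomial.aeval_def, Polynomial.eval₂_map, hcomp, h0]
    have hne' : g.map φ ≠ 0 := fun h => hne ((Polynomial.map_eq_zero_iff hφinj).1 h)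
    have hdvd : minpoly K (ζp * ζr) ∣ g.map φ := minpoly.dvd K _ hmap
    have hle := Polynomial.natDegree_le_of_dvd hdvd hne'
    rw [hdegmin, Polynomial.natDegree_map_eq_of_injective hφinj] at hle
    have hlt : g.natDegree < p - 1 := by
      have := (Polynomial.degree_eq_natDegree hne) ▸ hdeg
      exact_mod_cast this
    omega
  -- kernel computation
  have hker : RingHom.ker
      (Polynomial.eval₂RingHom ((Algebra.adjoin ℤ {ζr}).val.toRingHom) (ζp * ζr)) =
      Ideal.span {∑ i ∈ Finset.range p, Polynomial.C (z ^ (p - 1 - i)) * Polynomial.X ^ i} := by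
    apply le_antisymm
    · intro g hg
      rw [RingHom.mem_ker] at hg
      have hmod := Polynomial.modByMonic_add_div g (∑ i ∈ Finset.range p, Polynomial.C (z ^ (p - 1 - i)) * Polynomial.X ^ i)
      have hrem0 : Polynomial.eval₂ (Algebra.adjoin ℤ {ζr}).val.toRingHom (ζp * ζr)
          (g %ₘ (∑ i ∈ Finset.range p, Polynomial.C (z ^ (p - 1 - i)) * Polynomial.X ^ i))
          = 0 := by
        have hEg := congrArg
          (Polynomial.eval₂RingHom ((Algebra.adjoin ℤ {ζr}).val.toRingHom) (ζp * ζr)) hmod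
        rw [map_add, map_mul] at hEg
        have hEg' : Polynomial.eval₂ (Algebra.adjoin ℤ {ζr}).val.toRingHom (ζp * ζr)
            (g %ₘ (∑ i ∈ Finset.range p, Polynomial.C (z ^ (p - 1 - i)) * Polynomial.X ^ i))
            + Polynomial.eval₂ (Algebra.adjoin ℤ {ζr}).val.toRingHom (ζp * ζr)
              (∑ i ∈ Finset.range p, Polynomial.C (z ^ (p - 1 - i)) * Polynomial.X ^ i)
            * Polynomial.eval₂ (Algebra.adjoin ℤ {ζr}).val.toRingHom (ζp * ζr)
              (g /ₘ (∑ i ∈ Finset.range p, Polynomial.C (z ^ (p - 1 - i)) * Polynomial.X ^ i))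
            = Polynomial.eval₂ (Algebra.adjoin ℤ {ζr}).val.toRingHom (ζp * ζr) g := hEg
        rw [hef, zero_mul, add_zero] at hEg'
        rw [hEg']
        exact hg
      have hdr : (g %ₘ (∑ i ∈ Finset.range p,
          Polynomial.C (z ^ (p - 1 - i)) * Polynomial.X ^ i)).degree
          < ((p - 1 : ℕ) : WithBot ℕ) := by
        rw [← hfdeg']
        exact Polynomial.degree_modByMonic_lt g hmonic
      have hz0 : g %ₘ (∑ i ∈ Finset.range p,
          Polynomial.C (z ^ (p - 1 - i)) * Polynomial.X ^ i) = 0 := hkey _ hrem0 hdr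
      rw [← hmod, hz0, zero_add]
      exact Ideal.mem_span_singleton.2 (Dvd.intro _ rfl)
    · rw [Ideal.span_le]
      intro x hx
      rw [Set.mem_singleton_iff] at hx
      rw [hx]
      show Polynomial.eval₂ (Algebra.adjoin ℤ {ζr}).val.toRingHom (ζp * ζr)
        (∑ i ∈ Finset.range p, Polynomial.C (z ^ (p - 1 - i)) * Polynomial.X ^ i) = 0
      exact hef
  refine ⟨hrange, hker, ?_⟩
  have e1 : (Polynomial (Algebra.adjoin ℤ {ζr}) ⧸
        Ideal.span {∑ i ∈ Finset.range p, Polynomial.C (z ^ (p - 1 - i)) * Polynomial.X ^ i})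
      ≃+* RingHom.range
        (Polynomial.eval₂RingHom ((Algebra.adjoin ℤ {ζr}).val.toRingHom) (ζp * ζr)) :=
    hker ▸ RingHom.quotientKerEquivRange
      (Polynomial.eval₂RingHom ((Algebra.adjoin ℤ {ζr}).val.toRingHom) (ζp * ζr))
  have e2 : (RingHom.range
        (Polynomial.eval₂RingHom ((Algebra.adjoin ℤ {ζr}).val.toRingHom) (ζp * ζr)))
      ≃+* ((Algebra.adjoin ℤ {ζpr}).toSubring) :=
    RingEquiv.subringCongr hrange
  have e3 : ((Algebra.adjoin ℤ {ζpr}).toSubring) ≃+* (Algebra.adjoin ℤ {ζpr}) :=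
    { toFun := fun x => ⟨x.1, x.2⟩
      invFun := fun x => ⟨x.1, x.2⟩
      left_inv := fun _ => rfl
      right_inv := fun _ => rfl
      map_mul' := fun _ _ => rfl
      map_add' := fun _ _ => rfl }
  exact ⟨e1.trans (e2.trans e3)⟩
end
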